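/- arXiv:2111.03131 — 5 statements merged into one kernel-verified Lean document; each statement's English description precedes it below -/
import Mathlib

section
/- Let B be a ℂ-basis of V with ι ∈ B. Then H_{(ι,a,b)} is free as an associative unital ℂ-algebra on the set of pure tensors { x_1⊗⋯⊗x_k ∈ H_{k+1} : k ≥ 0, x_1,…,x_k ∈ B∖{ι} } (the case k = 0 contributing the generator 1₁ ∈ H_1): the canonical ℂ-algebra homomorphism from the free associative ℂ-algebra on this set to H is bijective. -/
open scoped TensorProduct

noncomputable section

namespace PaperCHA

/-- Type synonym for the tensor algebra of `V`, to be equipped with the (non-unital)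
`ι`-insertion multiplication `u ∘ v = u ⊗ ι ⊗ v`. -/
def IotaCore (V : Type) [AddCommGroup V] [Module ℂ V] (_iv : V) : Type := TensorAlgebra ℂ V

section Core

variable {V : Type} [AddCommGroup V] [Module ℂ V] {iv : V}

instance : AddCommGroup (IotaCore V iv) := inferInstanceAs (AddCommGroup (TensorAlgebra ℂ V))
instance : Module ℂ (IotaCore V iv) := inferInstanceAs (Module ℂ (TensorAlgebra ℂ V))

/-- The identity map, regarding an element of the tensor algebra as an element of
`IotaCore V iv`. -/
def IotaCore.ofT (iv : V) : TensorAlgebra ℂ V → IotaCore V iv := id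

/-- The identity map, regarding an element of `IotaCore V iv` as an element of the
tensor algebra. -/
def IotaCore.toT : IotaCore V iv → TensorAlgebra ℂ V := id

instance : NonUnitalRing (IotaCore V iv) :=
  { (inferInstanceAs (AddCommGroup (IotaCore V iv)) : AddCommGroup (IotaCore V iv)) with
    mul := fun u v => IotaCore.ofT iv (IotaCore.toT u * TensorAlgebra.ι ℂ iv * IotaCore.toT v)
    left_distrib := fun u v w => by
      show IotaCore.toT u * TensorAlgebra.ι ℂ iv * (IotaCore.toT v + IotaCore.toT w)
          = IotaCore.toT u * TensorAlgebra.ι ℂ iv * IotaCore.toT v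
            + IotaCore.toT u * TensorAlgebra.ι ℂ iv * IotaCore.toT w
      rw [mul_add]
    right_distrib := fun u v w => by
      show (IotaCore.toT u + IotaCore.toT v) * TensorAlgebra.ι ℂ iv * IotaCore.toT w
          = IotaCore.toT u * TensorAlgebra.ι ℂ iv * IotaCore.toT w
            + IotaCore.toT v * TensorAlgebra.ι ℂ iv * IotaCore.toT w
      rw [add_mul, add_mul]
    zero_mul := fun u => by
      show (0 : TensorAlgebra ℂ V) * TensorAlgebra.ι ℂ iv * IotaCore.toT u = 0
      rw [zero_mul, zero_mul]
    mul_zero := fun u => by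
      show IotaCore.toT u * TensorAlgebra.ι ℂ iv * (0 : TensorAlgebra ℂ V) = 0
      rw [mul_zero]
    mul_assoc := fun u v w => by
      show IotaCore.toT u * TensorAlgebra.ι ℂ iv * IotaCore.toT v * TensorAlgebra.ι ℂ iv
            * IotaCore.toT w
          = IotaCore.toT u * TensorAlgebra.ι ℂ iv
            * (IotaCore.toT v * TensorAlgebra.ι ℂ iv * IotaCore.toT w)
      simp only [mul_assoc] }

instance : SMulCommClass ℂ (IotaCore V iv) (IotaCore V iv) :=
  ⟨fun c u v => by
    show c • (IotaCore.toT u * TensorAlgebra.ι ℂ iv * IotaCore.toT v)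
        = IotaCore.toT u * TensorAlgebra.ι ℂ iv * (c • IotaCore.toT v)
    rw [mul_smul_comm]⟩

instance : IsScalarTower ℂ (IotaCore V iv) (IotaCore V iv) :=
  ⟨fun c u v => by
    show (c • IotaCore.toT u) * TensorAlgebra.ι ℂ iv * IotaCore.toT v
        = c • (IotaCore.toT u * TensorAlgebra.ι ℂ iv * IotaCore.toT v)
    rw [smul_mul_assoc, smul_mul_assoc]⟩

end Core

/-- The Hopf algebra `H_{(ι,a,b)}` of the paper, as a graded algebra: the unitalization
of the tensor algebra of `V` equipped with the `ι`-insertion product.  Its `n`-th graded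
component (`n ≥ 1`) is `V^{⊗(n-1)}`, and the `0`-th is `ℂ·1`. -/
abbrev HAlg (V : Type) [AddCommGroup V] [Module ℂ V] (iv : V) : Type :=
  Unitization ℂ (IotaCore V iv)

section HAlg

variable {V : Type} [AddCommGroup V] [Module ℂ V]

/-- The pure tensor `x₁ ⊗ ⋯ ⊗ x_{n-1} ∈ H_n` associated to a list `[x₁, …, x_{n-1}]`
(the empty list gives `1₁ ∈ H_1`). -/
def pt (iv : V) (l : List V) : HAlg V iv :=
  Unitization.inr (IotaCore.ofT iv ((l.map (TensorAlgebra.ι ℂ)).prod))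

/-- The grading of `H`: `grade iv 0 = ℂ·1` and `grade iv (n+1)` is the span of the
pure tensors of `n` vectors, i.e. `V^{⊗ n}`. -/
def grade (iv : V) : ℕ → Submodule ℂ (HAlg V iv)
  | 0 => Submodule.span ℂ {1}
  | (n + 1) => Submodule.span ℂ {x | ∃ l : List V, l.length = n ∧ x = pt iv l}

/-- The linear projection `ε : H → ℂ` onto the degree-zero component `H_0 = ℂ·1`. -/
def eps (iv : V) : HAlg V iv →ₗ[ℂ] ℂ :=
  (Unitization.fstHom ℂ (IotaCore V iv)).toLinearMap

/-- Auxiliary function computing `T_φ(S; ψ)` on the sorted list `s₁ < ⋯ < s_k` of a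
nonempty subset `S ⊆ {1, …, n}`: returns the scalar `c` (together with all scalar factors
`φ(ψ_{s_i})` coming from non-consecutive entries) and the list `[v₁, …, v_{k-1}]`. -/
def Tlist (iv : V) (φ : V →ₗ[ℂ] ℂ) (ψ : ℕ → V) (n : ℕ) : List ℕ → ℂ × List V
  | [] => (1, [])
  | [s] => (if s = n then 1 else φ (ψ s), [])
  | s :: t :: rest =>
    let p := Tlist iv φ ψ n (t :: rest)
    if t = s + 1 then (p.1, ψ s :: p.2) else (φ (ψ s) * p.1, iv :: p.2)

/-- The element `T_φ(S; ψ) ∈ H` for a subset `S ⊆ {1, …, n}` (one gets `1 ∈ H_0` for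
`S = ∅`, and `c • (v₁ ⊗ ⋯ ⊗ v_{k-1}) ∈ H_k` for `S = {s₁ < ⋯ < s_k}`). -/
def Tfun (iv : V) (φ : V →ₗ[ℂ] ℂ) (ψ : ℕ → V) (n : ℕ) (S : Finset ℕ) : HAlg V iv :=
  if S = ∅ then 1
  else (Tlist iv φ ψ n (S.sort (· ≤ ·))).1 • pt iv (Tlist iv φ ψ n (S.sort (· ≤ ·))).2

/-- The indexing `ψ : {1, …, n} → V` (1-based) associated to a list `[ψ₁, …, ψ_{n-1}]`. -/
def psiOf (l : List V) : ℕ → V := fun j => l.getD (j - 1) 0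

/-- The defining property of the coproduct `Δ` of `H_{(ι,a,b)}`: `Δ(1) = 1 ⊗ 1` and, on
a pure tensor `ψ = ψ₁ ⊗ ⋯ ⊗ ψ_{n-1} ∈ H_n`,
`Δ(ψ) = ∑_{A ⊆ {1,…,n}} T_a(A; ψ) ⊗ T_b(Aᶜ; ψ)`. -/
def DeltaSpec (iv : V) (a b : V →ₗ[ℂ] ℂ)
    (Δ : HAlg V iv →ₗ[ℂ] HAlg V iv ⊗[ℂ] HAlg V iv) : Prop :=
  Δ 1 = 1 ⊗ₜ[ℂ] 1 ∧
  ∀ l : List V,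
    Δ (pt iv l) =
      ∑ A ∈ (Finset.Icc 1 (l.length + 1)).powerset,
        Tfun iv a (psiOf l) (l.length + 1) A ⊗ₜ[ℂ]
          Tfun iv b (psiOf l) (l.length + 1) (Finset.Icc 1 (l.length + 1) \ A)

end HAlg

end PaperCHA


namespace FreeProofAux
open PaperCHA
open scoped Classical

variable {V : Type} [AddCommGroup V] [Module ℂ V]

/-- Pure tensor in the tensor algebra. -/
def ptT (l : List V) : TensorAlgebra ℂ V := (l.map (TensorAlgebra.ι ℂ)).prod

lemma pt_def (iv : V) (l : List V) :
    pt iv l = Unitization.inr (IotaCore.ofT iv (ptT l)) := rfl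

lemma ptT_mul (iv : V) (u v : List V) :
    ptT u * TensorAlgebra.ι ℂ iv * ptT v = ptT (u ++ iv :: v) := by
  simp [ptT, List.prod_append, mul_assoc]

lemma pt_mul (iv : V) (u v : List V) :
    pt iv u * pt iv v = pt iv (u ++ iv :: v) := by
  rw [pt_def, pt_def, pt_def, ← Unitization.inr_mul]
  congr 1
  show ptT u * TensorAlgebra.ι ℂ iv * ptT v = ptT (u ++ iv :: v)
  exact ptT_mul iv u v

/-- Split a list at the first occurrence of `iv`: first piece and remaining pieces. -/
noncomputable def sp (iv : V) : List V → List V × List (List V)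
  | [] => ([], [])
  | x :: xs =>
    if x = iv then ([], (sp iv xs).1 :: (sp iv xs).2)
    else (x :: (sp iv xs).1, (sp iv xs).2)

/-- All the pieces of a list, split at every occurrence of `iv`. -/
noncomputable def pieces (iv : V) (l : List V) : List (List V) :=
  (sp iv l).1 :: (sp iv l).2

lemma sp_append (iv : V) (u v : List V) :
    sp iv (u ++ iv :: v) = ((sp iv u).1, (sp iv u).2 ++ (sp iv v).1 :: (sp iv v).2) := by
  induction u with
  | nil =>
    rw [List.nil_append]
    have h1 : sp iv (iv :: v) = ([], (sp iv v).1 :: (sp iv v).2) := by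
      rw [sp, if_pos rfl]
    rw [h1, sp]
    rfl
  | cons x u ih =>
    rw [List.cons_append, sp, sp]
    by_cases hx : x = iv
    · rw [if_pos hx, if_pos hx, ih]
      rfl
    · rw [if_neg hx, if_neg hx, ih]

lemma pieces_append (iv : V) (u v : List V) :
    pieces iv (u ++ iv :: v) = pieces iv u ++ pieces iv v := by
  rw [pieces, pieces, pieces, sp_append]
  rfl

lemma sp_of_not_mem (iv : V) (l : List V) (h : iv ∉ l) : sp iv l = (l, []) := by
  induction l with
  | nil => rfl
  | cons x xs ih =>
    have hx : x ≠ iv := fun hh => h (hh ▸ List.mem_cons_self (a := x) (l := xs))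
    have hxs : iv ∉ xs := fun hh => h (List.mem_cons_of_mem x hh)
    rw [sp, if_neg hx, ih hxs]

lemma pieces_of_not_mem (iv : V) (l : List V) (h : iv ∉ l) : pieces iv l = [l] := by
  rw [pieces, sp_of_not_mem iv l h]

lemma pieces_mem (iv : V) (l : List V) :
    ∀ p ∈ pieces iv l, ∀ x ∈ p, x ∈ l ∧ x ≠ iv := by
  induction l with
  | nil =>
    intro p hp x hx
    simp only [pieces, sp, List.mem_singleton] at hp
    subst hp; simp at hx
  | cons y ys ih =>
    intro p hp x hx
    by_cases hy : y = iv
    · rw [pieces, sp, if_pos hy] at hp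
      rcases List.mem_cons.mp hp with rfl | hp
      · simp at hx
      · have := ih p hp x hx
        exact ⟨List.mem_cons_of_mem _ this.1, this.2⟩
    · rw [pieces, sp, if_neg hy] at hp
      rcases List.mem_cons.mp hp with rfl | hp
      · rcases List.mem_cons.mp hx with rfl | hx'
        · exact ⟨List.mem_cons_self, hy⟩
        · have := ih (sp iv ys).1 (List.mem_cons_self) x hx'
          exact ⟨List.mem_cons_of_mem _ this.1, this.2⟩
      · have := ih p (List.mem_cons_of_mem _ hp) x hx
        exact ⟨List.mem_cons_of_mem _ this.1, this.2⟩

variable (iv : V) (B : Set V)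

/-- The generating set of Proposition 3.7. -/
abbrev Xt : Type :=
  {x : HAlg V iv // ∃ l : List V, (∀ v ∈ l, v ∈ B \ {iv}) ∧ x = pt iv l}

/-- The generator of the free algebra corresponding to an `iv`-free list. -/
noncomputable def gen (p : List V) : FreeAlgebra ℂ (Xt iv B) :=
  if h : ∀ v ∈ p, v ∈ B \ {iv} then FreeAlgebra.ι ℂ ⟨pt iv p, p, h, rfl⟩ else 0

/-- The would-be inverse of the canonical map, on pure tensors. -/
noncomputable def FF (l : List V) : FreeAlgebra ℂ (Xt iv B) :=
  ((pieces iv l).map (gen iv B)).prod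

lemma FF_append (u v : List V) : FF iv B (u ++ iv :: v) = FF iv B u * FF iv B v := by
  rw [FF, pieces_append, List.map_append, List.prod_append]; rfl

lemma FF_no_iv (l : List V) (h : ∀ v ∈ l, v ∈ B \ {iv}) :
    FF iv B l = FreeAlgebra.ι ℂ ⟨pt iv l, l, h, rfl⟩ := by
  have hiv : iv ∉ l := fun hm => (h iv hm).2 rfl
  rw [FF, pieces_of_not_mem iv l hiv]
  simp only [List.map_cons, List.map_nil, List.prod_cons, List.prod_nil, mul_one]
  rw [gen, dif_pos h]

lemma basisFreeMonoid_apply (X : Type) (w : FreeMonoid X) :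
    FreeAlgebra.basisFreeMonoid ℂ X w = FreeMonoid.lift (FreeAlgebra.ι ℂ) w := by
  have hrepr : FreeAlgebra.basisFreeMonoid ℂ X w
      = (FreeAlgebra.equivMonoidAlgebraFreeMonoid (R := ℂ) (X := X)).symm
        (MonoidAlgebra.single w (1 : ℂ)) := rfl
  rw [hrepr, AlgEquiv.symm_apply_eq]
  clear hrepr
  induction w using FreeMonoid.recOn with
  | one => rw [map_one, map_one, MonoidAlgebra.one_def]
  | of_mul x w ihw =>
    have hx : (FreeAlgebra.equivMonoidAlgebraFreeMonoid (R := ℂ) (X := X))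
        (FreeMonoid.lift (FreeAlgebra.ι ℂ) (FreeMonoid.of x))
        = MonoidAlgebra.single (FreeMonoid.of x) (1 : ℂ) := by
      rw [FreeMonoid.lift_eval_of]
      show (FreeAlgebra.lift ℂ
          (fun x => (MonoidAlgebra.of ℂ (FreeMonoid X)) (FreeMonoid.of x)))
          (FreeAlgebra.ι ℂ x) = _
      rw [FreeAlgebra.lift_ι_apply, MonoidAlgebra.of_apply]
    rw [map_mul, map_mul, hx, ← ihw, MonoidAlgebra.single_mul_single, one_mul]

variable (b : Module.Basis B ℂ V)

lemma bT_apply (hb : ∀ i : B, b i = (i : V)) (w : FreeMonoid B) :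
    b.tensorAlgebra w = ptT ((FreeMonoid.toList w).map ((↑) : B → V)) := by
  rw [Module.Basis.tensorAlgebra, Module.Basis.map_apply, basisFreeMonoid_apply]
  rw [show ((TensorAlgebra.equivFreeAlgebra b).symm.toLinearEquiv
      (FreeMonoid.lift (FreeAlgebra.ι ℂ) w))
    = (TensorAlgebra.equivFreeAlgebra b).symm
      (FreeMonoid.lift (FreeAlgebra.ι ℂ) w) from rfl]
  rw [FreeMonoid.lift_apply]
  simp only [map_list_prod]
  rw [ptT, List.map_map, List.map_map]
  refine congrArg List.prod (List.map_congr_left fun i _ => ?_)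
  simp only [Function.comp_apply]
  rw [TensorAlgebra.equivFreeAlgebra_symm_ι, hb i]

/-- The inverse map, as a linear map on the tensor algebra. -/
noncomputable def psiT : TensorAlgebra ℂ V →ₗ[ℂ] FreeAlgebra ℂ (Xt iv B) :=
  (b.tensorAlgebra).constr ℂ
    (fun w : FreeMonoid B => FF iv B ((FreeMonoid.toList w).map ((↑) : B → V)))

lemma psiT_ptT (hb : ∀ i : B, b i = (i : V)) (l : List V) (h : ∀ v ∈ l, v ∈ B) :
    psiT iv B b (ptT l) = FF iv B l := by
  set w : FreeMonoid B := FreeMonoid.ofList (l.attach.map (fun x => (⟨x.1, h x.1 x.2⟩ : B)))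
  have hw : (FreeMonoid.toList w).map ((↑) : B → V) = l := by
    show (l.attach.map (fun x => (⟨x.1, h x.1 x.2⟩ : B))).map ((↑) : B → V) = l
    rw [List.map_map]
    exact List.attach_map_val (l := l) (f := fun v : V => v) |>.trans (List.map_id l)
  have h1 : ptT l = b.tensorAlgebra w := by rw [bT_apply B b hb w, hw]
  rw [h1, psiT, Module.Basis.constr_basis, hw]

lemma psiT_mul (hb : ∀ i : B, b i = (i : V)) (hivB : iv ∈ B)
    (x y : TensorAlgebra ℂ V) :
    psiT iv B b (x * TensorAlgebra.ι ℂ iv * y) = psiT iv B b x * psiT iv B b y := by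
  let T := TensorAlgebra ℂ V
  let Fr := FreeAlgebra ℂ (Xt iv B)
  let L₁ : T →ₗ[ℂ] T →ₗ[ℂ] Fr :=
    (((LinearMap.mul ℂ T).comp (LinearMap.mulRight ℂ (TensorAlgebra.ι ℂ iv))).compr₂
      (psiT iv B b))
  let L₂ : T →ₗ[ℂ] T →ₗ[ℂ] Fr :=
    ((LinearMap.mul ℂ Fr).comp (psiT iv B b)).compl₂ (psiT iv B b)
  have hL : L₁ = L₂ := by
    apply (b.tensorAlgebra).ext
    intro w₁
    apply (b.tensorAlgebra).ext
    intro w₂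
    show psiT iv B b (b.tensorAlgebra w₁ * TensorAlgebra.ι ℂ iv * b.tensorAlgebra w₂)
        = psiT iv B b (b.tensorAlgebra w₁) * psiT iv B b (b.tensorAlgebra w₂)
    rw [bT_apply B b hb w₁, bT_apply B b hb w₂, ptT_mul]
    have hmem : ∀ v ∈ ((FreeMonoid.toList w₁).map ((↑) : B → V)
        ++ iv :: (FreeMonoid.toList w₂).map ((↑) : B → V)), v ∈ B := by
      intro v hv
      rcases List.mem_append.mp hv with hv | hv
      · obtain ⟨i, _, rfl⟩ := List.mem_map.mp hv; exact i.2
      · rcases List.mem_cons.mp hv with rfl | hv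
        · exact hivB
        · obtain ⟨i, _, rfl⟩ := List.mem_map.mp hv; exact i.2
    have hmem₁ : ∀ v ∈ (FreeMonoid.toList w₁).map ((↑) : B → V), v ∈ B := by
      intro v hv; obtain ⟨i, _, rfl⟩ := List.mem_map.mp hv; exact i.2
    have hmem₂ : ∀ v ∈ (FreeMonoid.toList w₂).map ((↑) : B → V), v ∈ B := by
      intro v hv; obtain ⟨i, _, rfl⟩ := List.mem_map.mp hv; exact i.2
    rw [psiT_ptT iv B b hb _ hmem, psiT_ptT iv B b hb _ hmem₁,
      psiT_ptT iv B b hb _ hmem₂, FF_append]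
  have := congrFun (congrArg (fun L => fun u v => L u v) hL) x
  exact congrFun this y

/-- The inverse map, as a non-unital algebra homomorphism on `IotaCore`. -/
noncomputable def psiNA (hb : ∀ i : B, b i = (i : V)) (hivB : iv ∈ B) :
    IotaCore V iv →ₙₐ[ℂ] FreeAlgebra ℂ (Xt iv B) :=
  { toFun := fun u => psiT iv B b (IotaCore.toT u)
    map_smul' := fun c u => (psiT iv B b).map_smul c (IotaCore.toT u)
    map_zero' := (psiT iv B b).map_zero
    map_add' := fun u v => (psiT iv B b).map_add (IotaCore.toT u) (IotaCore.toT v)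
    map_mul' := fun u v =>
      psiT_mul iv B b hb hivB (IotaCore.toT u) (IotaCore.toT v) }

end FreeProofAux

open PaperCHA in
/-- **Proposition 3.7 (freeness):** if `B` is a `ℂ`-basis of `V` containing `ι`, then
`H_{(ι,a,b)}` is free as an associative unital `ℂ`-algebra on the set of pure tensors
`x₁ ⊗ ⋯ ⊗ x_k` with all `xᵢ ∈ B ∖ {ι}` (`k ≥ 0`, the case `k = 0` giving `1₁ ∈ H_1`):
the canonical map from the free associative `ℂ`-algebra on this set is bijective. -/
theorem free_on_iota_free_pure_tensors
    {V : Type} [AddCommGroup V] [Module ℂ V] (iv : V)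
    (B : Set V) (hBli : LinearIndependent ℂ ((↑) : B → V))
    (hBsp : Submodule.span ℂ B = ⊤) (hivB : iv ∈ B) :
    Function.Bijective
      ⇑(FreeAlgebra.lift ℂ
        (Subtype.val :
          {x : HAlg V iv // ∃ l : List V, (∀ v ∈ l, v ∈ B \ {iv}) ∧ x = pt iv l} →
          HAlg V iv)) := by
  classical
  set b : Module.Basis B ℂ V := Module.Basis.mk hBli (by rw [Subtype.range_coe]; exact hBsp.ge) with hbdef
  have hb : ∀ i : B, b i = (i : V) := fun i => by rw [hbdef, Module.Basis.mk_apply]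
  set φ : FreeAlgebra ℂ (FreeProofAux.Xt iv B) →ₐ[ℂ] HAlg V iv :=
    FreeAlgebra.lift ℂ (Subtype.val : FreeProofAux.Xt iv B → HAlg V iv) with hφdef
  set Ψ : HAlg V iv →ₐ[ℂ] FreeAlgebra ℂ (FreeProofAux.Xt iv B) :=
    Unitization.lift (FreeProofAux.psiNA iv B b hb hivB) with hΨdef
  -- Ψ on pure tensors with entries in B \ {iv}
  have hΨpt : ∀ (l : List V) (hl : ∀ v ∈ l, v ∈ B \ {iv}),
      Ψ (pt iv l) = FreeAlgebra.ι ℂ (⟨pt iv l, l, hl, rfl⟩ : FreeProofAux.Xt iv B) := by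
    intro l hl
    conv_lhs => rw [FreeProofAux.pt_def]
    simp only [hΨdef, Unitization.lift_apply, NonUnitalAlgHom.toAlgHom_apply, Unitization.fst_inr, map_zero,
      Unitization.snd_inr, zero_add]
    show FreeProofAux.psiT iv B b (FreeProofAux.ptT l) = _
    rw [FreeProofAux.psiT_ptT iv B b hb l (fun v hv => (hl v hv).1),
      FreeProofAux.FF_no_iv iv B l hl]
  -- left inverse
  have hcomp : Ψ.comp φ = AlgHom.id ℂ (FreeAlgebra ℂ (FreeProofAux.Xt iv B)) := by
    apply FreeAlgebra.hom_ext
    funext x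
    obtain ⟨l, hl, hx⟩ := x.2
    simp only [Function.comp_apply, AlgHom.coe_comp, AlgHom.coe_id, id_eq]
    rw [hφdef, FreeAlgebra.lift_ι_apply]
    have hxval : (x : HAlg V iv) = pt iv l := hx
    rw [hxval, hΨpt l hl]
    congr 1
    exact Subtype.ext hxval.symm
  have hinj : Function.Injective ⇑φ := by
    intro u v huv
    have h1 : Ψ (φ u) = Ψ (φ v) := congrArg Ψ huv
    have h2 : ∀ y, Ψ (φ y) = y := fun y => by
      simpa using AlgHom.congr_fun hcomp y
    rw [h2 u, h2 v] at h1
    exact h1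
  -- surjectivity
  have hrange_pt : ∀ n : ℕ, ∀ l : List V, l.length ≤ n → (∀ v ∈ l, v ∈ B) →
      pt iv l ∈ φ.range := by
    intro n
    induction n with
    | zero =>
      intro l hlen hl
      have : l = [] := List.length_eq_zero_iff.mp (Nat.le_zero.mp hlen)
      subst this
      exact ⟨FreeAlgebra.ι ℂ (⟨pt iv [], [], by simp, rfl⟩ : FreeProofAux.Xt iv B),
        by simp [hφdef]⟩
    | succ n ih =>
      intro l hlen hl
      by_cases hiv : iv ∈ l
      · obtain ⟨u, v, rfl⟩ := List.append_of_mem hiv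
        have hu : u.length ≤ n := by
          have := hlen
          simp only [List.length_append, List.length_cons] at this
          omega
        have hv : v.length ≤ n := by
          have := hlen
          simp only [List.length_append, List.length_cons] at this
          omega
        have h1 : pt iv u ∈ φ.range :=
          ih u hu (fun x hx => hl x (List.mem_append.mpr (Or.inl hx)))
        have h2 : pt iv v ∈ φ.range :=
          ih v hv (fun x hx => hl x (List.mem_append.mpr (Or.inr (List.mem_cons_of_mem _ hx))))
        rw [← FreeProofAux.pt_mul]
        exact mul_mem h1 h2
      · have hl' : ∀ v ∈ l, v ∈ B \ {iv} := fun v hv => ⟨hl v hv, fun hh => hiv (hh ▸ hv)⟩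
        exact ⟨FreeAlgebra.ι ℂ (⟨pt iv l, l, hl', rfl⟩ : FreeProofAux.Xt iv B),
          by simp [hφdef]⟩
  -- the linear map t ↦ inr (ofT t)
  let J : TensorAlgebra ℂ V →ₗ[ℂ] HAlg V iv :=
    { toFun := fun t => Unitization.inr (IotaCore.ofT iv t)
      map_add' := fun s t => Unitization.inr_add ℂ s t
      map_smul' := fun c t => Unitization.inr_smul ℂ c t }
  have hJ : ∀ t : TensorAlgebra ℂ V, Unitization.inr (IotaCore.ofT iv t) ∈ φ.range := by
    intro t
    have htop : t ∈ Submodule.span ℂ (Set.range ⇑(b.tensorAlgebra)) := by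
      rw [Module.Basis.span_eq]; trivial
    have hle : Submodule.span ℂ (Set.range ⇑(b.tensorAlgebra))
        ≤ (Subalgebra.toSubmodule φ.range).comap J := by
      rw [Submodule.span_le]
      rintro _ ⟨w, rfl⟩
      rw [FreeProofAux.bT_apply B b hb w]
      have hmem : ∀ v ∈ (FreeMonoid.toList w).map ((↑) : B → V), v ∈ B := by
        intro v hv; obtain ⟨i, _, rfl⟩ := List.mem_map.mp hv; exact i.2
      have := hrange_pt _ _ le_rfl hmem
      rw [FreeProofAux.pt_def] at this
      exact this
    exact hle htop
  have hsurj : Function.Surjective ⇑φ := by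
    intro y
    have hy : y = Unitization.inl y.fst + Unitization.inr y.snd :=
      (Unitization.inl_fst_add_inr_snd_eq y).symm
    have h1 : Unitization.inl y.fst ∈ φ.range := by
      have : Unitization.inl y.fst = algebraMap ℂ (HAlg V iv) y.fst := by
        rw [Unitization.algebraMap_eq_inl]
      rw [this]
      exact Subalgebra.algebraMap_mem _ _
    have h2 : Unitization.inr y.snd ∈ φ.range := hJ (IotaCore.toT y.snd)
    have : y ∈ φ.range := by rw [hy]; exact add_mem h1 h2
    obtain ⟨x, hxx⟩ := this
    exact ⟨x, hxx⟩
  exact ⟨hinj, hsurj⟩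
end
end

section
/- Assume a = b and a(ι) = 1, and let f : H → ℂ be the linear character with f(1) = 1 and f(γ_1⊗⋯⊗γ_{n−1}) = Π_{i=1}^{n−1} a(γ_i) for n ≥ 1 and γ_1,…,γ_{n−1} ∈ V (so f(1₁) = 1). Then f has a convolution inverse f^{−1}, and f is odd: f^{−1}(x) = (−1)^n f(x) for every n ≥ 0 and every x ∈ H_n. -/
open scoped TensorProduct

noncomputable section

namespace PaperCHAProof
open PaperCHA

variable {V : Type} [AddCommGroup V] [Module ℂ V]

lemma sort_map_prod (A : Finset ℕ) (F : ℕ → ℂ) :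
    ((A.sort (· ≤ ·)).map F).prod = ∏ i ∈ A, F i := by
  rw [Finset.prod_eq_multiset_prod, ← Finset.sort_eq A (· ≤ ·), Multiset.map_coe,
    Multiset.prod_coe]

lemma sum_neg_one_pow {S : Finset ℕ} (hS : S.Nonempty) :
    ∑ A ∈ S.powerset, (-1 : ℂ) ^ A.card = 0 := by
  have h := Finset.sum_powerset_neg_one_pow_card_of_nonempty hS
  have h2 := congrArg (Int.cast : ℤ → ℂ) h
  push_cast at h2
  simpa using h2

lemma neg_one_pow_sub_eq {s k : ℕ} (h : k ≤ s) : (-1 : ℂ) ^ (s - k) = (-1) ^ s * (-1) ^ k := by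
  have h2 : ((-1 : ℂ) ^ k) * ((-1 : ℂ) ^ k) = 1 := by
    rw [← pow_add, ← two_mul, pow_mul]; norm_num
  calc (-1 : ℂ) ^ (s - k) = (-1) ^ (s - k) * (((-1 : ℂ) ^ k) * ((-1 : ℂ) ^ k)) := by
        rw [h2, mul_one]
    _ = ((-1 : ℂ) ^ (s - k) * (-1) ^ k) * (-1) ^ k := by ring
    _ = (-1 : ℂ) ^ s * (-1) ^ k := by rw [← pow_add, Nat.sub_add_cancel h]

def mono (l : List V) : TensorAlgebra ℂ V := (l.map (TensorAlgebra.ι ℂ)).prod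

lemma span_mono_top :
    Submodule.span ℂ {x : TensorAlgebra ℂ V | ∃ l : List V, x = mono l} = ⊤ := by
  set M : Set (TensorAlgebra ℂ V) := {x | ∃ l : List V, x = mono l} with hM
  have hmul : ∀ x ∈ Submodule.span ℂ M, ∀ y ∈ Submodule.span ℂ M,
      x * y ∈ Submodule.span ℂ M := by
    intro x hx y hy
    have hle : Submodule.span ℂ M * Submodule.span ℂ M ≤ Submodule.span ℂ M := by
      rw [Submodule.span_mul_span]
      apply Submodule.span_le.2
      rintro z hz
      obtain ⟨u, hu, v, hv, rfl⟩ := Set.mem_mul.mp hz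
      obtain ⟨l, rfl⟩ := hu
      obtain ⟨l', rfl⟩ := hv
      exact Submodule.subset_span ⟨l ++ l', by simp [mono]⟩
    exact hle (Submodule.mul_mem_mul hx hy)
  rw [eq_top_iff]
  rintro t -
  induction t using TensorAlgebra.induction with
  | algebraMap c =>
      have h1 : (algebraMap ℂ (TensorAlgebra ℂ V)) c = c • mono ([] : List V) := by
        simp [mono, Algebra.algebraMap_eq_smul_one]
      rw [h1]
      exact Submodule.smul_mem _ _ (Submodule.subset_span ⟨[], rfl⟩)
  | ι v => exact Submodule.subset_span ⟨[v], by simp [mono]⟩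
  | mul x y hx hy => exact hmul x hx y hy
  | add x y hx hy => exact Submodule.add_mem _ hx hy

def Jmap (iv : V) : TensorAlgebra ℂ V →ₗ[ℂ] HAlg V iv where
  toFun t := Unitization.inr (IotaCore.ofT iv t)
  map_add' x y := Unitization.inr_add ℂ (IotaCore.ofT iv x) (IotaCore.ofT iv y)
  map_smul' c x := Unitization.inr_smul ℂ c (IotaCore.ofT iv x)

lemma span_pt_top (iv : V) :
    Submodule.span ℂ ({x : HAlg V iv | ∃ l : List V, x = pt iv l} ∪ {1}) = ⊤ := by
  rw [eq_top_iff]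
  rintro x -
  have h2 : Unitization.inr x.snd ∈
      Submodule.span ℂ ({x : HAlg V iv | ∃ l : List V, x = pt iv l} ∪ {1}) := by
    have hmem : IotaCore.toT x.snd ∈
        Submodule.span ℂ {x : TensorAlgebra ℂ V | ∃ l : List V, x = mono l} := by
      rw [span_mono_top]; trivial
    have hmap := Submodule.mem_map_of_mem (f := Jmap iv) hmem
    rw [Submodule.map_span] at hmap
    refine Submodule.span_le.2 ?_ hmap
    rintro z ⟨u, ⟨l, rfl⟩, rfl⟩
    exact Submodule.subset_span (Or.inl ⟨l, rfl⟩)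
  have h1 : Unitization.inl x.fst ∈
      Submodule.span ℂ ({x : HAlg V iv | ∃ l : List V, x = pt iv l} ∪ {1}) := by
    have hx1 : (Unitization.inl x.fst : HAlg V iv) = x.fst • 1 := by
      rw [← Unitization.algebraMap_eq_inl, Algebra.algebraMap_eq_smul_one]
    rw [hx1]
    exact Submodule.smul_mem _ _ (Submodule.subset_span (Or.inr rfl))
  have hsum := Submodule.add_mem _ h1 h2
  rwa [Unitization.inl_fst_add_inr_snd_eq] at hsum

def coreT (iv : V) : IotaCore V iv →ₗ[ℂ] TensorAlgebra ℂ V where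
  toFun := IotaCore.toT
  map_add' _ _ := rfl
  map_smul' _ _ := rfl

/-- The candidate convolution inverse: the character attached to `-a`, up to unitization. -/
def gmap (iv : V) (a : V →ₗ[ℂ] ℂ) : HAlg V iv →ₗ[ℂ] ℂ :=
  (Unitization.fstHom ℂ (IotaCore V iv)).toLinearMap -
    (TensorAlgebra.lift ℂ (-a)).toLinearMap ∘ₗ coreT iv ∘ₗ Unitization.sndHom ℂ ℂ (IotaCore V iv)

lemma lift_mono (φ : V →ₗ[ℂ] ℂ) (l : List V) :
    (TensorAlgebra.lift ℂ φ) (mono l) = (l.map (fun v => φ v)).prod := by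
  unfold mono
  rw [map_list_prod]
  simp [Function.comp_def, TensorAlgebra.lift_ι_apply]

lemma map_neg_prod (a : V →ₗ[ℂ] ℂ) (l : List V) :
    (l.map (fun v => -(a v))).prod = (-1) ^ l.length * (l.map a).prod := by
  induction l with
  | nil => simp
  | cons h t ih => simp only [List.map_cons, List.prod_cons, List.length_cons, ih, pow_succ]; ring

lemma gmap_apply (iv : V) (a : V →ₗ[ℂ] ℂ) (x : HAlg V iv) :
    gmap iv a x = x.fst - (TensorAlgebra.lift ℂ (-a)) (IotaCore.toT x.snd) := rfl

lemma gmap_pt (iv : V) (a : V →ₗ[ℂ] ℂ) (l : List V) :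
    gmap iv a (pt iv l) = (-1) ^ (l.length + 1) * (l.map a).prod := by
  rw [gmap_apply]
  have h1 : (pt iv l).fst = 0 := rfl
  have h2 : IotaCore.toT (pt iv l).snd = mono l := rfl
  rw [h1, h2, lift_mono]
  have h3 : (l.map (fun v => (-a) v)).prod = (-1) ^ l.length * (l.map a).prod := by
    simpa using map_neg_prod a l
  rw [h3, pow_succ]
  ring

lemma gmap_one (iv : V) (a : V →ₗ[ℂ] ℂ) : gmap iv a 1 = 1 := by
  rw [gmap_apply]
  have h1 : (1 : HAlg V iv).fst = 1 := rfl
  have h2 : IotaCore.toT (1 : HAlg V iv).snd = 0 := rfl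
  rw [h1, h2]
  simp

lemma Tlist_cons_cons (iv : V) (a : V →ₗ[ℂ] ℂ) (ψ : ℕ → V) (n s t : ℕ) (rest : List ℕ) :
    Tlist iv a ψ n (s :: t :: rest) =
      if t = s + 1 then
        ((Tlist iv a ψ n (t :: rest)).1, ψ s :: (Tlist iv a ψ n (t :: rest)).2)
      else (a (ψ s) * (Tlist iv a ψ n (t :: rest)).1, iv :: (Tlist iv a ψ n (t :: rest)).2) := by
  rw [Tlist]

lemma Tlist_spec (iv : V) (a : V →ₗ[ℂ] ℂ) (ha : a iv = 1) (ψ : ℕ → V) (n : ℕ) :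
    ∀ s : List ℕ, s.IsChain (· < ·) → (∀ x ∈ s, x ≤ n) →
      (Tlist iv a ψ n s).1 * (((Tlist iv a ψ n s).2.map a).prod)
          = (s.map (fun i => if i = n then 1 else a (ψ i))).prod ∧
        ((Tlist iv a ψ n s).2.length + 1 = s.length ∨ s = []) := by
  intro s
  induction s with
  | nil => intro _ _; exact ⟨by simp [Tlist], Or.inr rfl⟩
  | cons hd tl ih =>
    intro hc hb
    cases tl with
    | nil => exact ⟨by simp [Tlist], Or.inl rfl⟩
    | cons t rest =>
      have hht : hd < t := (List.isChain_cons_cons.mp hc).1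
      have hc' : (t :: rest).IsChain (· < ·) := (List.isChain_cons_cons.mp hc).2
      have hb' : ∀ x ∈ t :: rest, x ≤ n := fun x hx => hb x (List.mem_cons_of_mem _ hx)
      have hdn : hd ≠ n := by
        have : t ≤ n := hb' t List.mem_cons_self
        omega
      obtain ⟨ih1, ih2⟩ := ih hc' hb'
      have hlen : (Tlist iv a ψ n (t :: rest)).2.length + 1 = (t :: rest).length := by
        rcases ih2 with h | h
        · exact h
        · exact absurd h (by simp)
      simp only [List.length_cons] at hlen
      by_cases htc : t = hd + 1
      · refine ⟨?_, ?_⟩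
        · rw [Tlist_cons_cons, if_pos htc]
          simp only [List.map_cons, List.prod_cons] at ih1 ⊢
          rw [if_neg hdn, ← ih1]
          ring
        · left
          rw [Tlist_cons_cons, if_pos htc]
          simp only [List.length_cons]
          omega
      · refine ⟨?_, ?_⟩
        · rw [Tlist_cons_cons, if_neg htc]
          simp only [List.map_cons, List.prod_cons] at ih1 ⊢
          rw [if_neg hdn, ha, ← ih1]
          ring
        · left
          rw [Tlist_cons_cons, if_neg htc]
          simp only [List.length_cons]
          omega

lemma sort_chain' (A : Finset ℕ) : (A.sort (· ≤ ·)).IsChain (· < ·) :=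
  (Finset.sortedLT_sort A).isChain

lemma char_Tfun (iv : V) (a : V →ₗ[ℂ] ℂ) (ha : a iv = 1) (ψ : ℕ → V) (n : ℕ)
    (f : HAlg V iv →ₐ[ℂ] ℂ) (hf : ∀ l : List V, f (pt iv l) = (l.map a).prod)
    (A : Finset ℕ) (hA : ∀ i ∈ A, i ≤ n) :
    f (Tfun iv a ψ n A) = ∏ i ∈ A, (if i = n then 1 else a (ψ i)) := by
  by_cases hAe : A = ∅
  · simp [hAe, Tfun]
  · rw [Tfun, if_neg hAe, map_smul, hf, smul_eq_mul]
    have hs := Tlist_spec iv a ha ψ n (A.sort (· ≤ ·)) (sort_chain' A)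
      (fun x hx => hA x ((Finset.mem_sort _).1 hx))
    rw [hs.1, sort_map_prod]

lemma gmap_Tfun (iv : V) (a : V →ₗ[ℂ] ℂ) (ha : a iv = 1) (ψ : ℕ → V) (n : ℕ)
    (A : Finset ℕ) (hA : ∀ i ∈ A, i ≤ n) :
    gmap iv a (Tfun iv a ψ n A)
      = (-1) ^ A.card * ∏ i ∈ A, (if i = n then 1 else a (ψ i)) := by
  by_cases hAe : A = ∅
  · simp [hAe, Tfun, gmap_one]
  · rw [Tfun, if_neg hAe, map_smul, gmap_pt, smul_eq_mul]
    have hs := Tlist_spec iv a ha ψ n (A.sort (· ≤ ·)) (sort_chain' A)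
      (fun x hx => hA x ((Finset.mem_sort _).1 hx))
    have hlen : (Tlist iv a ψ n (A.sort (· ≤ ·))).2.length + 1 = A.card := by
      rcases hs.2 with h | h
      · rw [h, Finset.length_sort]
      · exfalso
        apply hAe
        have := congrArg List.length h
        rw [Finset.length_sort] at this
        exact Finset.card_eq_zero.1 this
    rw [hlen, ← sort_map_prod, ← hs.1]
    ring

end PaperCHAProof


open PaperCHA in
/-- **Corollary 5.5 (oddness):** if `a = b` and `a(ι) = 1`, the linear character `f` of
`H_{(ι,a,b)}` with `f(γ₁⊗⋯⊗γ_{n-1}) = ∏ᵢ a(γᵢ)` has a convolution inverse `f⁻¹`, and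
`f` is odd: `f⁻¹(x) = (−1)ⁿ f(x)` for every `x` in the `n`-th graded component. -/
theorem supported_character_is_odd
    {V : Type} [AddCommGroup V] [Module ℂ V] (iv : V) (a b : V →ₗ[ℂ] ℂ)
    (hab : a = b) (ha : a iv = 1)
    (Δ : HAlg V iv →ₗ[ℂ] HAlg V iv ⊗[ℂ] HAlg V iv) (hΔ : DeltaSpec iv a b Δ)
    (f : HAlg V iv →ₐ[ℂ] ℂ) (hf : ∀ l : List V, f (pt iv l) = (l.map a).prod) :
    ∃ g : HAlg V iv →ₗ[ℂ] ℂ,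
      (∀ x : HAlg V iv,
        TensorProduct.lid ℂ ℂ (TensorProduct.map f.toLinearMap g (Δ x)) = eps iv x) ∧
      (∀ x : HAlg V iv,
        TensorProduct.lid ℂ ℂ (TensorProduct.map g f.toLinearMap (Δ x)) = eps iv x) ∧
      ∀ (n : ℕ) (x : HAlg V iv), x ∈ grade iv n → g x = (-1 : ℂ) ^ n * f x := by
  classical
  subst hab
  obtain ⟨hΔ1, hΔ2⟩ := hΔ
  refine ⟨PaperCHAProof.gmap iv a, ?_, ?_, ?_⟩
  · -- f ∗ g = ε
    intro x
    have hx : x ∈ Submodule.span ℂ ({y : HAlg V iv | ∃ l : List V, y = pt iv l} ∪ {1}) := by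
      rw [PaperCHAProof.span_pt_top iv]; trivial
    induction hx using Submodule.span_induction with
    | mem y hy =>
      rcases hy with ⟨l, rfl⟩ | hy
      · rw [hΔ2 l, map_sum, map_sum]
        simp only [TensorProduct.map_tmul, TensorProduct.lid_tmul, smul_eq_mul,
          AlgHom.toLinearMap_apply]
        have heps : eps iv (pt iv l) = 0 := rfl
        rw [heps]
        set n := l.length + 1 with hn
        set ψ := psiOf l with hψ
        set S := Finset.Icc 1 n with hS
        have hbound : ∀ i ∈ S, i ≤ n := fun i hi => (Finset.mem_Icc.1 hi).2
        set G : ℕ → ℂ := fun i => if i = n then 1 else a (ψ i) with hG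
        calc ∑ A ∈ S.powerset, f (Tfun iv a ψ n A) * PaperCHAProof.gmap iv a (Tfun iv a ψ n (S \ A))
            = ∑ A ∈ S.powerset, (((-1) ^ S.card * ∏ i ∈ S, G i) * (-1) ^ A.card) := by
              refine Finset.sum_congr rfl (fun A hA => ?_)
              have hAS : A ⊆ S := Finset.mem_powerset.1 hA
              rw [PaperCHAProof.char_Tfun iv a ha ψ n f hf A (fun i hi => hbound i (hAS hi)),
                PaperCHAProof.gmap_Tfun iv a ha ψ n (S \ A)
                  (fun i hi => hbound i (Finset.sdiff_subset hi))]
              have hprod : ((∏ i ∈ S \ A, G i) * ∏ i ∈ A, G i) = ∏ i ∈ S, G i :=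
                Finset.prod_sdiff hAS
              have hcard : (S \ A).card = S.card - A.card := Finset.card_sdiff_of_subset hAS
              rw [hcard, PaperCHAProof.neg_one_pow_sub_eq (Finset.card_le_card hAS), ← hprod]
              ring
          _ = 0 := by
              rw [← Finset.mul_sum,
                PaperCHAProof.sum_neg_one_pow ⟨1, Finset.mem_Icc.2 ⟨le_refl 1, by omega⟩⟩,
                mul_zero]
      · rw [Set.mem_singleton_iff] at hy
        subst hy
        rw [hΔ1]
        have heps : eps iv (1 : HAlg V iv) = 1 := rfl
        simp [heps, PaperCHAProof.gmap_one]
    | zero => simp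
    | add u v _ _ hu hv => simp only [map_add, hu, hv]
    | smul c u _ hu => simp only [map_smul, smul_eq_mul, hu]
  · -- g ∗ f = ε
    intro x
    have hx : x ∈ Submodule.span ℂ ({y : HAlg V iv | ∃ l : List V, y = pt iv l} ∪ {1}) := by
      rw [PaperCHAProof.span_pt_top iv]; trivial
    induction hx using Submodule.span_induction with
    | mem y hy =>
      rcases hy with ⟨l, rfl⟩ | hy
      · rw [hΔ2 l, map_sum, map_sum]
        simp only [TensorProduct.map_tmul, TensorProduct.lid_tmul, smul_eq_mul,
          AlgHom.toLinearMap_apply]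
        have heps : eps iv (pt iv l) = 0 := rfl
        rw [heps]
        set n := l.length + 1 with hn
        set ψ := psiOf l with hψ
        set S := Finset.Icc 1 n with hS
        have hbound : ∀ i ∈ S, i ≤ n := fun i hi => (Finset.mem_Icc.1 hi).2
        set G : ℕ → ℂ := fun i => if i = n then 1 else a (ψ i) with hG
        calc ∑ A ∈ S.powerset, PaperCHAProof.gmap iv a (Tfun iv a ψ n A) * f (Tfun iv a ψ n (S \ A))
            = ∑ A ∈ S.powerset, ((∏ i ∈ S, G i) * (-1) ^ A.card) := by
              refine Finset.sum_congr rfl (fun A hA => ?_)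
              have hAS : A ⊆ S := Finset.mem_powerset.1 hA
              rw [PaperCHAProof.gmap_Tfun iv a ha ψ n A (fun i hi => hbound i (hAS hi)),
                PaperCHAProof.char_Tfun iv a ha ψ n f hf (S \ A)
                  (fun i hi => hbound i (Finset.sdiff_subset hi))]
              have hprod : ((∏ i ∈ S \ A, G i) * ∏ i ∈ A, G i) = ∏ i ∈ S, G i :=
                Finset.prod_sdiff hAS
              rw [← hprod]
              ring
          _ = 0 := by
              rw [← Finset.mul_sum,
                PaperCHAProof.sum_neg_one_pow ⟨1, Finset.mem_Icc.2 ⟨le_refl 1, by omega⟩⟩,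
                mul_zero]
      · rw [Set.mem_singleton_iff] at hy
        subst hy
        rw [hΔ1]
        have heps : eps iv (1 : HAlg V iv) = 1 := rfl
        simp [heps, PaperCHAProof.gmap_one]
    | zero => simp
    | add u v _ _ hu hv => simp only [map_add, hu, hv]
    | smul c u _ hu => simp only [map_smul, smul_eq_mul, hu]
  · -- oddness
    intro n x hx
    cases n with
    | zero =>
      have hx' : x ∈ Submodule.span ℂ ({1} : Set (HAlg V iv)) := hx
      obtain ⟨c, rfl⟩ := Submodule.mem_span_singleton.1 hx'
      simp [map_smul, PaperCHAProof.gmap_one, map_one]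
    | succ m =>
      have hx' : x ∈ Submodule.span ℂ
          {y : HAlg V iv | ∃ l : List V, l.length = m ∧ y = pt iv l} := hx
      clear hx
      induction hx' using Submodule.span_induction with
      | mem y hy =>
        obtain ⟨l, hl, rfl⟩ := hy
        rw [PaperCHAProof.gmap_pt, hf, hl]
      | zero => simp
      | add u v _ _ hu hv => simp only [map_add, hu, hv]; ring
      | smul c u _ hu => simp only [map_smul, smul_eq_mul, hu]; ring
end
end

section
/- For every n ≥ 1, the number of set compositions of {1,…,n} with no toggle point equals 3^{n−1}. -/
namespace PaperSetComp

/-- `L` is a set composition of `{1, …, n}`: a tuple of nonempty pairwise disjoint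
subsets whose union is `{1, …, n}`. -/
def IsSetComposition (n : ℕ) (L : List (Finset ℕ)) : Prop :=
  (∀ A ∈ L, A.Nonempty) ∧ L.Pairwise Disjoint ∧ L.foldr (· ∪ ·) ∅ = Finset.Icc 1 n

/-- `j` is a split toggle point of `L`: for the block `A_k` containing `j`, `j = max A_k`,
`A_{k+1}` exists, and `min A_{k+1} > j + 1`. -/
def IsSplitToggle (L : List (Finset ℕ)) (j : ℕ) : Prop :=
  ∃ k : ℕ, k + 1 < L.length ∧ j ∈ L.getD k ∅ ∧ (∀ x ∈ L.getD k ∅, x ≤ j) ∧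
    ∀ y ∈ L.getD (k + 1) ∅, j + 1 < y

/-- `j` is a fused toggle point of `L`: for the block `A_k` containing `j`, `j < max A_k`
and `j + 1 ∉ A_k`. -/
def IsFusedToggle (L : List (Finset ℕ)) (j : ℕ) : Prop :=
  ∃ k : ℕ, k < L.length ∧ j ∈ L.getD k ∅ ∧ (∃ x ∈ L.getD k ∅, j < x) ∧ j + 1 ∉ L.getD k ∅

/-- `j` is a toggle point of `L`. -/
def IsToggle (L : List (Finset ℕ)) (j : ℕ) : Prop :=
  IsSplitToggle L j ∨ IsFusedToggle L j

end PaperSetComp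

namespace SCProof
open PaperSetComp Finset

/-- The chain relation: the next block has an element ≤ (some element of prev) + 1. -/
def R (A B : Finset ℕ) : Prop := ∃ y ∈ B, ∃ x ∈ A, y ≤ x + 1

/-- Structural characterization of toggle-free set compositions. -/
def Good (n : ℕ) (L : List (Finset ℕ)) : Prop :=
  (∀ A ∈ L, ∃ a b, a ≤ b ∧ A = Finset.Icc a b) ∧
  L.Chain' R ∧ L.Pairwise Disjoint ∧ L.foldr (· ∪ ·) ∅ = Finset.Icc 1 n

lemma mem_foldr {a : ℕ} {L : List (Finset ℕ)} :
    a ∈ L.foldr (· ∪ ·) ∅ ↔ ∃ A ∈ L, a ∈ A := by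
  induction L with
  | nil => simp
  | cons B T ih => simp [ih]

lemma foldr_append (s t : List (Finset ℕ)) :
    (s ++ t).foldr (· ∪ ·) ∅ = s.foldr (· ∪ ·) ∅ ∪ t.foldr (· ∪ ·) ∅ := by
  induction s with
  | nil => simp
  | cons B T ih => simp [ih, Finset.union_assoc]

lemma interval_of (A : Finset ℕ) (hne : A.Nonempty)
    (h : ∀ j ∈ A, (∃ x ∈ A, j < x) → j + 1 ∈ A) :
    A = Finset.Icc (A.min' hne) (A.max' hne) := by
  have key : ∀ d : ℕ, A.min' hne + d ≤ A.max' hne → A.min' hne + d ∈ A := by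
    intro d
    induction d with
    | zero => intro _; simpa using A.min'_mem hne
    | succ k ih =>
      intro hk
      have h1 : A.min' hne + k ∈ A := ih (by omega)
      have h2 : A.min' hne + k < A.max' hne := by omega
      have h3 : A.min' hne + k + 1 ∈ A :=
        h _ h1 ⟨A.max' hne, A.max'_mem hne, h2⟩
      exact h3
  ext x
  simp only [Finset.mem_Icc]
  constructor
  · intro hx; exact ⟨A.min'_le x hx, A.le_max' x hx⟩
  · rintro ⟨h1, h2⟩
    have : x = A.min' hne + (x - A.min' hne) := by omega
    rw [this]; exact key _ (by omega)

lemma good_iff {n : ℕ} {L : List (Finset ℕ)} :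
    (IsSetComposition n L ∧ ∀ j, ¬ IsToggle L j) ↔ Good n L := by
  constructor
  · rintro ⟨⟨hne, hD, hU⟩, hT⟩
    refine ⟨?_, ?_, hD, hU⟩
    · intro A hA
      obtain ⟨k, hk, hAk⟩ := List.mem_iff_getElem.1 hA
      have hgd : L.getD k ∅ = A := by rw [List.getD_eq_getElem _ _ hk, hAk]
      have hAne := hne A hA
      have hint : ∀ j ∈ A, (∃ x ∈ A, j < x) → j + 1 ∈ A := by
        intro j hj hx
        by_contra hj1
        exact hT j (Or.inr ⟨k, hk, by rw [hgd]; exact hj, by rw [hgd]; exact hx,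
          by rw [hgd]; exact hj1⟩)
      exact ⟨A.min' hAne, A.max' hAne, A.min'_le _ (A.max'_mem hAne),
        interval_of A hAne hint⟩
    · unfold List.Chain'; rw [List.isChain_iff_getElem]
      intro i hi
      by_contra hR
      rw [R] at hR
      push_neg at hR
      have hi1 : i + 1 < L.length := by omega
      have hi0 : i < L.length := by omega
      have hAmem : L.get ⟨i, hi0⟩ ∈ L := L.get_mem ⟨i, hi0⟩
      have hAne := hne _ hAmem
      set m := (L.get ⟨i, hi0⟩).max' hAne with hm
      have h1 : m ∈ L.getD i ∅ := by
        rw [List.getD_eq_getElem _ _ hi0]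
        exact Finset.max'_mem _ _
      have h2 : ∀ x ∈ L.getD i ∅, x ≤ m := by
        rw [List.getD_eq_getElem _ _ hi0]
        intro x hx
        exact Finset.le_max' _ x hx
      have h3 : ∀ y ∈ L.getD (i + 1) ∅, m + 1 < y := by
        rw [List.getD_eq_getElem _ _ hi1]
        intro y hy
        have := hR y hy m (Finset.max'_mem _ _)
        omega
      exact hT m (Or.inl ⟨i, hi1, h1, h2, h3⟩)
  · rintro ⟨hI, hC, hD, hU⟩
    have hne : ∀ A ∈ L, A.Nonempty := by
      intro A hA
      obtain ⟨a, b, hab, rfl⟩ := hI A hA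
      exact Finset.nonempty_Icc.2 hab
    refine ⟨⟨hne, hD, hU⟩, ?_⟩
    rintro j (⟨k, hk, hj, hmax, hnext⟩ | ⟨k, hk, hj, ⟨x, hx, hjx⟩, hj1⟩)
    · have hk' : k < L.length := by omega
      rw [List.getD_eq_getElem _ _ hk'] at hj hmax
      rw [List.getD_eq_getElem _ _ hk] at hnext
      have hch := List.isChain_iff_getElem.1 hC k (by omega)
      obtain ⟨y, hy, x, hx, hyx⟩ := hch
      have h1 := hnext y hy
      have h2 := hmax x hx
      omega
    · rw [List.getD_eq_getElem _ _ hk] at hj hx hj1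
      have hmem : L[k] ∈ L := List.getElem_mem hk
      obtain ⟨a, b, hab, hEq⟩ := hI _ hmem
      rw [hEq, Finset.mem_Icc] at hj hx hj1
      omega


lemma R_mono {A A' B B' : Finset ℕ} (h : R A B) (hA : A ⊆ A') (hB : B ⊆ B') : R A' B' := by
  obtain ⟨y, hy, x, hx, hyx⟩ := h
  exact ⟨y, hB hy, x, hA hx, hyx⟩

lemma chain'_replace {s t : List (Finset ℕ)} {C C' : Finset ℕ}
    (h : (s ++ C :: t).Chain' R)
    (h1 : ∀ A ∈ s.getLast?, R A C → R A C') (h2 : ∀ B ∈ t.head?, R C B → R C' B) :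
    (s ++ C' :: t).Chain' R := by
  unfold List.Chain' at h ⊢
  rw [List.isChain_append] at h ⊢
  obtain ⟨hs, hct, hlink⟩ := h
  rw [List.isChain_cons] at hct
  refine ⟨hs, ?_, ?_⟩
  · rw [List.isChain_cons]
    exact ⟨fun b hb => h2 _ hb (hct.1 b hb), hct.2⟩
  · intro x hx y hy
    simp only [List.head?_cons, Option.mem_def, Option.some.injEq] at hy
    subst hy
    exact h1 _ hx (hlink x hx C (by simp))

lemma pairwise_replace {s t : List (Finset ℕ)} {C C' : Finset ℕ}
    (h : (s ++ C :: t).Pairwise Disjoint)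
    (h1 : ∀ A ∈ s, Disjoint A C → Disjoint A C')
    (h2 : ∀ B ∈ t, Disjoint C B → Disjoint C' B) :
    (s ++ C' :: t).Pairwise Disjoint := by
  rw [List.pairwise_append] at h ⊢
  obtain ⟨hs, hct, hcross⟩ := h
  rw [List.pairwise_cons] at hct
  refine ⟨hs, ?_, ?_⟩
  · rw [List.pairwise_cons]
    exact ⟨fun B hB => h2 B hB (hct.1 B hB), hct.2⟩
  · intro a ha b hb
    rcases List.mem_cons.1 hb with rfl | hb
    · exact h1 a ha (hcross a ha C (by simp))
    · exact hcross a ha b (by simp [hb])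

lemma insert_Icc_top {a n : ℕ} (ha : a ≤ n) :
    insert (n+1) (Finset.Icc a n) = Finset.Icc a (n+1) := by
  ext x
  simp only [Finset.mem_insert, Finset.mem_Icc]
  omega

lemma insert_Icc_one {n : ℕ} (hn : 1 ≤ n) :
    insert (n+1) (Finset.Icc 1 n) = Finset.Icc 1 (n+1) := insert_Icc_top hn

def addTop (n : ℕ) (L : List (Finset ℕ)) : List (Finset ℕ) :=
  L.map (fun A => if n ∈ A then insert (n+1) A else A)

def insAfter (n : ℕ) : List (Finset ℕ) → List (Finset ℕ)
  | [] => []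
  | A :: T => if n ∈ A then A :: {n+1} :: T else A :: insAfter n T

def F (n : ℕ) : Fin 3 → List (Finset ℕ) → List (Finset ℕ)
  | 0, L => addTop n L
  | 1, L => insAfter n L
  | 2, L => {n+1} :: L

lemma not_mem_of_decomp {s t : List (Finset ℕ)} {C : Finset ℕ} {j : ℕ}
    (hD : (s ++ C :: t).Pairwise Disjoint) (hj : j ∈ C) :
    (∀ A ∈ s, j ∉ A) ∧ (∀ A ∈ t, j ∉ A) := by
  rw [List.pairwise_append] at hD
  obtain ⟨h1, h2, h3⟩ := hD
  constructor
  · intro A hA hjA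
    exact Finset.disjoint_left.1 (h3 A hA C (by simp)) hjA hj
  · intro A hA hjA
    rw [List.pairwise_cons] at h2
    exact Finset.disjoint_left.1 (h2.1 A hA) hj hjA

lemma blocks_subset {n : ℕ} {L : List (Finset ℕ)} (hG : Good n L) {A : Finset ℕ}
    (hA : A ∈ L) : A ⊆ Finset.Icc 1 n := by
  intro x hx
  rw [← hG.2.2.2]
  exact mem_foldr.2 ⟨A, hA, hx⟩

lemma exists_decomp {n : ℕ} {L : List (Finset ℕ)} (hG : Good n L) {j : ℕ}
    (hj : j ∈ Finset.Icc 1 n) :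
    ∃ s C t, L = s ++ C :: t ∧ j ∈ C ∧ (∀ A ∈ s, j ∉ A) ∧ (∀ A ∈ t, j ∉ A) := by
  have : j ∈ L.foldr (· ∪ ·) ∅ := by rw [hG.2.2.2]; exact hj
  obtain ⟨C, hC, hjC⟩ := mem_foldr.1 this
  obtain ⟨s, t, rfl⟩ := List.append_of_mem hC
  have := not_mem_of_decomp (hG.2.2.1) hjC
  exact ⟨s, C, t, rfl, hjC, this.1, this.2⟩

lemma insAfter_eq {n : ℕ} {s t : List (Finset ℕ)} {C : Finset ℕ}
    (hs : ∀ A ∈ s, n ∉ A) (hC : n ∈ C) :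
    insAfter n (s ++ C :: t) = s ++ C :: {n+1} :: t := by
  induction s with
  | nil => simp [insAfter, hC]
  | cons B T ih =>
    have : n ∉ B := hs B (by simp)
    simp only [List.cons_append, insAfter, if_neg this, List.append_eq]
    rw [ih (fun A hA => hs A (by simp [hA]))]

lemma addTop_eq {n : ℕ} {s t : List (Finset ℕ)} {C : Finset ℕ}
    (hs : ∀ A ∈ s, n ∉ A) (hC : n ∈ C) (ht : ∀ A ∈ t, n ∉ A) :
    addTop n (s ++ C :: t) = s ++ insert (n+1) C :: t := by
  unfold addTop
  rw [List.map_append, List.map_cons, if_pos hC,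
    List.map_congr_left (fun A hA => if_neg (hs A hA)),
    List.map_congr_left (fun A hA => if_neg (ht A hA)), List.map_id', List.map_id']

lemma goodF {n : ℕ} (hn : 1 ≤ n) {L : List (Finset ℕ)} (hG : Good n L) (c : Fin 3) :
    Good (n+1) (F n c L) := by
  have hsub : ∀ A ∈ L, A ⊆ Finset.Icc 1 n := fun A hA => blocks_subset hG hA
  obtain ⟨hI, hC, hD, hU⟩ := hG
  have hGd : Good n L := ⟨hI, hC, hD, hU⟩
  fin_cases c
  · -- c = 0 : addTop
    obtain ⟨s, C, t, rfl, hnC, hns, hnt⟩ := exists_decomp hGd (j := n) (by rw [Finset.mem_Icc]; omega)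
    show Good (n+1) (addTop n (s ++ C :: t))
    rw [addTop_eq hns hnC hnt]
    have hCmem : C ∈ s ++ C :: t := by simp
    obtain ⟨a, b, hab, hCE⟩ := hI C hCmem
    have hbn : b = n := by
      have h1 : n ≤ b := by rw [hCE, Finset.mem_Icc] at hnC; exact hnC.2
      have h2 : b ≤ n := by
        have : b ∈ C := by rw [hCE]; simp [Finset.mem_Icc]; omega
        have := hsub C hCmem this
        rw [Finset.mem_Icc] at this; exact this.2
      omega
    rw [hbn] at hCE hab
    have hins : insert (n+1) C = Finset.Icc a (n+1) := by
      rw [hCE]; exact insert_Icc_top hab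
    refine ⟨?_, ?_, ?_, ?_⟩
    · intro A hA
      rcases List.mem_append.1 hA with hA | hA
      · exact hI A (by simp [hA])
      · rcases List.mem_cons.1 hA with rfl | hA
        · exact ⟨a, n+1, by omega, hins⟩
        · exact hI A (by simp [hA])
    · refine chain'_replace hC ?_ ?_
      · exact fun A _ hR => R_mono hR (fun x hx => hx) (Finset.subset_insert _ _)
      · exact fun B _ hR => R_mono hR (Finset.subset_insert _ _) (fun x hx => hx)
    · refine pairwise_replace hD ?_ ?_
      · intro A hA hdis
        have : n + 1 ∉ A := by
          intro hmem
          have := hsub A (by simp [hA]) hmem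
          rw [Finset.mem_Icc] at this; omega
        rw [Finset.disjoint_insert_right]
        exact ⟨this, hdis⟩
      · intro B hB hdis
        have : n + 1 ∉ B := by
          intro hmem
          have := hsub B (by simp [hB]) hmem
          rw [Finset.mem_Icc] at this; omega
        rw [Finset.disjoint_insert_left]
        exact ⟨this, hdis⟩
    · have hU' := hU
      rw [foldr_append] at hU' ⊢
      simp only [List.foldr_cons] at hU' ⊢
      rw [← insert_Icc_one hn, ← hU']
      ext z
      simp only [Finset.mem_union, Finset.mem_insert]
      tauto
  · -- c = 1 : insAfter
    obtain ⟨s, C, t, rfl, hnC, hns, hnt⟩ := exists_decomp hGd (j := n) (by rw [Finset.mem_Icc]; omega)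
    show Good (n+1) (insAfter n (s ++ C :: t))
    rw [insAfter_eq hns hnC]
    unfold List.Chain' at hC
    rw [List.isChain_append] at hC
    obtain ⟨hCs, hCct, hClink⟩ := hC
    rw [List.isChain_cons] at hCct
    rw [List.pairwise_append] at hD
    obtain ⟨hDs, hDct, hDcross⟩ := hD
    rw [List.pairwise_cons] at hDct
    have hsing : ∀ A ∈ s ++ C :: t, Disjoint ({n+1} : Finset ℕ) A := by
      intro A hA
      rw [Finset.disjoint_singleton_left]
      intro hmem
      have := hsub A hA hmem
      rw [Finset.mem_Icc] at this; omega
    refine ⟨?_, ?_, ?_, ?_⟩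
    · intro A hA
      simp only [List.mem_append, List.mem_cons] at hA
      rcases hA with hA | rfl | rfl | hA
      · exact hI A (by simp [hA])
      · exact hI A (by simp)
      · exact ⟨n+1, n+1, le_refl _, by simp⟩
      · exact hI A (by simp [hA])
    · unfold List.Chain'; rw [List.isChain_append]
      refine ⟨hCs, ?_, ?_⟩
      · rw [List.isChain_cons]
        refine ⟨?_, ?_⟩
        · intro b hb
          simp only [List.head?_cons, Option.mem_def, Option.some.injEq] at hb
          subst hb
          exact ⟨n+1, by simp, n, hnC, le_refl _⟩
        · rw [List.isChain_cons]
          refine ⟨?_, hCct.2⟩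
          intro b hb
          have hbmem : b ∈ t := List.mem_of_mem_head? hb
          have hR := hCct.1 b hb
          obtain ⟨y, hy, x, hx, hyx⟩ := hR
          refine ⟨y, hy, n+1, by simp, ?_⟩
          have := hsub b (by simp [hbmem]) hy
          rw [Finset.mem_Icc] at this; omega
      · intro x hx y hy
        simp only [List.head?_cons, Option.mem_def, Option.some.injEq] at hy
        subst hy
        exact hClink x hx C (by simp)
    · rw [List.pairwise_append]
      refine ⟨hDs, ?_, ?_⟩
      · rw [List.pairwise_cons]
        refine ⟨?_, ?_⟩
        · intro B hB
          rcases List.mem_cons.1 hB with rfl | hB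
          · exact (hsing C (by simp)).symm
          · exact hDct.1 B hB
        · rw [List.pairwise_cons]
          exact ⟨fun B hB => hsing B (by simp [hB]), hDct.2⟩
      · intro a ha b hb
        simp only [List.mem_cons] at hb
        rcases hb with rfl | rfl | hb
        · exact hDcross a ha b (by simp)
        · exact (hsing a (by simp [ha])).symm
        · exact hDcross a ha b (by simp [hb])
    · rw [foldr_append] at hU ⊢
      simp only [List.foldr_cons] at hU ⊢
      rw [← insert_Icc_one hn, ← hU]
      ext z
      simp only [Finset.mem_union, Finset.mem_insert, Finset.mem_singleton]
      tauto
  · -- c = 2 : cons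
    show Good (n+1) ({n+1} :: L)
    refine ⟨?_, ?_, ?_, ?_⟩
    · intro A hA
      rcases List.mem_cons.1 hA with rfl | hA
      · exact ⟨n+1, n+1, le_refl _, by simp⟩
      · exact hI A hA
    · unfold List.Chain'; rw [List.isChain_cons]
      refine ⟨?_, hC⟩
      intro b hb
      have hbmem : b ∈ L := List.mem_of_mem_head? hb
      have hbne : b.Nonempty := by
        obtain ⟨a', b', hab', rfl⟩ := hI b hbmem
        exact Finset.nonempty_Icc.2 hab'
      obtain ⟨y, hy⟩ := hbne
      refine ⟨y, hy, n+1, by simp, ?_⟩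
      have := hsub b hbmem hy
      rw [Finset.mem_Icc] at this; omega
    · rw [List.pairwise_cons]
      refine ⟨?_, hD⟩
      intro A hA
      rw [Finset.disjoint_singleton_left]
      intro hmem
      have := hsub A hA hmem
      rw [Finset.mem_Icc] at this; omega
    · simp only [List.foldr_cons]
      rw [hU]
      have : ({n+1} : Finset ℕ) ∪ Finset.Icc 1 n = insert (n+1) (Finset.Icc 1 n) := by
        ext z; simp
      rw [this, insert_Icc_one hn]


lemma no_top_block {n : ℕ} {L : List (Finset ℕ)} (hG : Good n L) :
    ∀ A ∈ L, n + 1 ∉ A := by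
  intro A hA hmem
  have := blocks_subset hG hA hmem
  rw [Finset.mem_Icc] at this; omega

lemma addTop_retract {n : ℕ} {L : List (Finset ℕ)} (hsub : ∀ A ∈ L, n + 1 ∉ A) :
    (addTop n L).map (·.erase (n+1)) = L := by
  unfold addTop
  rw [List.map_map]
  conv_rhs => rw [← List.map_id L]
  refine List.map_congr_left ?_
  intro A hA
  simp only [Function.comp_apply, id_eq]
  by_cases hnA : n ∈ A
  · rw [if_pos hnA, Finset.erase_insert (hsub A hA)]
  · rw [if_neg hnA, Finset.erase_eq_of_notMem (hsub A hA)]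

lemma insAfter_injective (n : ℕ) : Function.Injective (insAfter n) := by
  intro L₁ L₂ h
  induction L₁ generalizing L₂ with
  | nil =>
    cases L₂ with
    | nil => rfl
    | cons B T =>
      unfold insAfter at h
      split_ifs at h <;> exact absurd h (by simp)
  | cons A T ih =>
    cases L₂ with
    | nil =>
      unfold insAfter at h
      split_ifs at h <;> exact absurd h (by simp)
    | cons B T₂ =>
      unfold insAfter at h
      split_ifs at h with h1 h2 h2
      · injection h with hAB h'
        injection h' with _ hTT
        rw [hAB, hTT]
      · injection h with hAB h'
        exact absurd (hAB ▸ h1) h2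
      · injection h with hAB h'
        exact absurd (hAB ▸ h2) h1
      · injection h with hAB h'
        rw [hAB, ih h']

lemma mem_insAfter {n : ℕ} {A : Finset ℕ} {L : List (Finset ℕ)} (h : A ∈ insAfter n L) :
    A ∈ L ∨ A = {n+1} := by
  induction L with
  | nil => simp [insAfter] at h
  | cons B T ih =>
    unfold insAfter at h
    split_ifs at h
    · simp only [List.mem_cons] at h
      rcases h with rfl | rfl | h
      · exact Or.inl (by simp)
      · exact Or.inr rfl
      · exact Or.inl (by simp [h])
    · rcases List.mem_cons.1 h with rfl | h
      · exact Or.inl (by simp)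
      · rcases ih h with h | h
        · exact Or.inl (by simp [h])
        · exact Or.inr h

lemma mem_both_F0 {n : ℕ} (hn : 1 ≤ n) {L : List (Finset ℕ)} (hG : Good n L) :
    ∃ A ∈ F n 0 L, n ∈ A ∧ n + 1 ∈ A := by
  obtain ⟨s, C, t, rfl, hnC, hns, hnt⟩ := exists_decomp hG (j := n) (by rw [Finset.mem_Icc]; omega)
  show ∃ A ∈ addTop n (s ++ C :: t), n ∈ A ∧ n + 1 ∈ A
  rw [addTop_eq hns hnC hnt]
  exact ⟨insert (n+1) C, by simp, Finset.mem_insert_of_mem hnC, Finset.mem_insert_self _ _⟩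

lemma head_F1 {n : ℕ} (hn : 1 ≤ n) {L : List (Finset ℕ)} (hG : Good n L) :
    (F n 1 L).head? ≠ some {n+1} := by
  obtain ⟨s, C, t, hLE, hnC, hns, hnt⟩ := exists_decomp hG (j := n) (by rw [Finset.mem_Icc]; omega)
  show (insAfter n L).head? ≠ some {n+1}
  rw [hLE, insAfter_eq hns hnC]
  cases s with
  | nil =>
    simp only [List.nil_append, List.head?_cons, ne_eq, Option.some.injEq]
    intro hEq
    rw [hEq, Finset.mem_singleton] at hnC
    omega
  | cons B s' =>
    simp only [List.cons_append, List.head?_cons, ne_eq, Option.some.injEq]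
    intro hEq
    have hB : B ∈ L := by rw [hLE]; simp
    exact no_top_block hG B hB (by rw [hEq]; simp)

lemma F_inj {n : ℕ} (hn : 1 ≤ n) {L₁ L₂ : List (Finset ℕ)} {c₁ c₂ : Fin 3}
    (h₁ : Good n L₁) (h₂ : Good n L₂) (h : F n c₁ L₁ = F n c₂ L₂) :
    c₁ = c₂ ∧ L₁ = L₂ := by
  have hcase01 : ∀ {M₁ M₂ : List (Finset ℕ)}, Good n M₁ → Good n M₂ →
      F n 0 M₁ = F n 1 M₂ → False := by
    intro M₁ M₂ g₁ g₂ hEq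
    obtain ⟨A, hA, hnA, hn1A⟩ := mem_both_F0 hn g₁
    rw [hEq] at hA
    rcases mem_insAfter hA with hA | rfl
    · exact no_top_block g₂ A hA hn1A
    · rw [Finset.mem_singleton] at hnA; omega
  have hcase02 : ∀ {M₁ M₂ : List (Finset ℕ)}, Good n M₁ → Good n M₂ →
      F n 0 M₁ = F n 2 M₂ → False := by
    intro M₁ M₂ g₁ g₂ hEq
    obtain ⟨A, hA, hnA, hn1A⟩ := mem_both_F0 hn g₁
    rw [hEq] at hA
    rcases List.mem_cons.1 hA with rfl | hA
    · rw [Finset.mem_singleton] at hnA; omega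
    · exact no_top_block g₂ A hA hn1A
  have hcase12 : ∀ {M₁ M₂ : List (Finset ℕ)}, Good n M₁ → Good n M₂ →
      F n 1 M₁ = F n 2 M₂ → False := by
    intro M₁ M₂ g₁ g₂ hEq
    apply head_F1 hn g₁
    rw [hEq]
    rfl
  fin_cases c₁ <;> fin_cases c₂
  · refine ⟨rfl, ?_⟩
    replace h : addTop n L₁ = addTop n L₂ := h
    rw [← addTop_retract (no_top_block h₁), h, addTop_retract (no_top_block h₂)]
  · exact absurd h (fun hh => hcase01 h₁ h₂ hh)
  · exact absurd h (fun hh => hcase02 h₁ h₂ hh)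
  · exact absurd h.symm (fun hh => hcase01 h₂ h₁ hh)
  · refine ⟨rfl, ?_⟩
    replace h : insAfter n L₁ = insAfter n L₂ := h
    exact insAfter_injective n h
  · exact absurd h (fun hh => hcase12 h₁ h₂ hh)
  · exact absurd h.symm (fun hh => hcase02 h₂ h₁ hh)
  · exact absurd h.symm (fun hh => hcase12 h₂ h₁ hh)
  · refine ⟨rfl, ?_⟩
    have : ({n+1} : Finset ℕ) :: L₁ = ({n+1} : Finset ℕ) :: L₂ := h
    injection this


lemma eq_Icc_drop {n : ℕ} {X : Finset ℕ} (hn : 1 ≤ n)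
    (hins : insert (n+1) X = Finset.Icc 1 (n+1)) (hX : n + 1 ∉ X) :
    X = Finset.Icc 1 n := by
  ext z
  have h1 := Finset.ext_iff.1 hins z
  simp only [Finset.mem_insert, Finset.mem_Icc] at h1
  rw [Finset.mem_Icc]
  constructor
  · intro hz
    have hb := h1.1 (Or.inr hz)
    have : z ≠ n + 1 := fun h => hX (h ▸ hz)
    omega
  · intro hz
    rcases h1.2 ⟨hz.1, by omega⟩ with h | h
    · omega
    · exact h

lemma F_surj {n : ℕ} (hn : 1 ≤ n) {M : List (Finset ℕ)} (hM : Good (n+1) M) :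
    ∃ c L, Good n L ∧ F n c L = M := by
  obtain ⟨hI, hC, hD, hU⟩ := hM
  have hMd : Good (n+1) M := ⟨hI, hC, hD, hU⟩
  obtain ⟨s, B, t, rfl, hn1B, hn1s, hn1t⟩ :=
    exists_decomp hMd (j := n+1) (by rw [Finset.mem_Icc]; omega)
  have hBmem : B ∈ s ++ B :: t := by simp
  obtain ⟨a, b, hab, hBE⟩ := hI B hBmem
  have hb : b = n + 1 := by
    have h1 : n + 1 ≤ b := by rw [hBE, Finset.mem_Icc] at hn1B; exact hn1B.2
    have h2 : b ≤ n + 1 := by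
      have hbB : b ∈ B := by rw [hBE, Finset.mem_Icc]; omega
      have := blocks_subset hMd hBmem hbB
      rw [Finset.mem_Icc] at this; exact this.2
    omega
  rw [hb] at hBE hab
  have hSfold : n + 1 ∉ s.foldr (· ∪ ·) ∅ := by
    intro h
    obtain ⟨A, hA, hmem⟩ := mem_foldr.1 h
    exact hn1s A hA hmem
  have hTfold : n + 1 ∉ t.foldr (· ∪ ·) ∅ := by
    intro h
    obtain ⟨A, hA, hmem⟩ := mem_foldr.1 h
    exact hn1t A hA hmem
  rw [foldr_append, List.foldr_cons] at hU
  by_cases han : a ≤ n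
  · -- n ∈ B : c = 0
    set C' := Finset.Icc a n with hC'
    have hCB : C' ⊆ B := by
      rw [hBE]; exact Finset.Icc_subset_Icc (le_refl _) (by omega)
    refine ⟨0, s ++ C' :: t, ?_, ?_⟩
    · refine ⟨?_, ?_, ?_, ?_⟩
      · intro A hA
        simp only [List.mem_append, List.mem_cons] at hA
        rcases hA with hA | rfl | hA
        · exact hI A (by simp [hA])
        · exact ⟨a, n, han, rfl⟩
        · exact hI A (by simp [hA])
      · refine chain'_replace hC ?_ ?_
        · intro A hA hR
          obtain ⟨y, hy, x, hx, hyx⟩ := hR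
          rw [hBE, Finset.mem_Icc] at hy
          by_cases hyn : y ≤ n
          · exact ⟨y, by rw [hC', Finset.mem_Icc]; omega, x, hx, hyx⟩
          · exact ⟨n, by rw [hC', Finset.mem_Icc]; omega, x, hx, by omega⟩
        · intro D hD' hR
          obtain ⟨y, hy, x, hx, hyx⟩ := hR
          rw [hBE, Finset.mem_Icc] at hx
          by_cases hxn : x ≤ n
          · exact ⟨y, hy, x, by rw [hC', Finset.mem_Icc]; omega, hyx⟩
          · have hDt : D ∈ t := List.mem_of_mem_head? hD'
            have hyle := blocks_subset hMd (by simp [hDt] : D ∈ s ++ B :: t) hy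
            rw [Finset.mem_Icc] at hyle
            exact ⟨y, hy, n, by rw [hC', Finset.mem_Icc]; omega, by omega⟩
      · refine pairwise_replace hD ?_ ?_
        · exact fun A _ hdis => hdis.mono_right hCB
        · exact fun A _ hdis => hdis.mono_left hCB
      · rw [foldr_append, List.foldr_cons]
        refine eq_Icc_drop hn ?_ ?_
        · rw [← hU, hBE]
          ext z
          simp only [Finset.mem_insert, Finset.mem_union, hC', Finset.mem_Icc]
          constructor
          · rintro (rfl | h | h | h)
            · right; left; omega
            · exact Or.inl h
            · right; left; omega
            · right; right; exact h
          · rintro (h | h | h)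
            · right; left; exact h
            · by_cases hz : z = n + 1
              · exact Or.inl hz
              · right; right; left; omega
            · right; right; right; exact h
        · simp only [Finset.mem_union, hC', Finset.mem_Icc]
          push_neg
          exact ⟨hSfold, by omega, hTfold⟩
    · show addTop n (s ++ C' :: t) = s ++ B :: t
      have hnC' : n ∈ C' := by rw [hC', Finset.mem_Icc]; omega
      have hns : ∀ A ∈ s, n ∉ A := by
        intro A hA hmem
        have hd := not_mem_of_decomp (C := C') (s := s) (t := t) ?_ hnC'
        · exact hd.1 A hA hmem
        · exact pairwise_replace hD (fun A _ hdis => hdis.mono_right hCB)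
            (fun A _ hdis => hdis.mono_left hCB)
      have hnt : ∀ A ∈ t, n ∉ A := by
        intro A hA hmem
        have hd := not_mem_of_decomp (C := C') (s := s) (t := t) ?_ hnC'
        · exact hd.2 A hA hmem
        · exact pairwise_replace hD (fun A _ hdis => hdis.mono_right hCB)
            (fun A _ hdis => hdis.mono_left hCB)
      rw [addTop_eq hns hnC' hnt]
      have : insert (n+1) C' = B := by
        rw [hC', hBE, insert_Icc_top han]
      rw [this]
  · -- B = {n+1}
    have hBsing : B = {n+1} := by
      have ha : a = n + 1 := by omega
      rw [hBE, ha, Finset.Icc_self]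
    rcases List.eq_nil_or_concat s with rfl | ⟨s', C, rfl⟩
    · -- c = 2
      refine ⟨2, t, ?_, ?_⟩
      · rw [List.nil_append] at hC hD
        unfold List.Chain' at hC
        rw [List.isChain_cons] at hC
        rw [List.pairwise_cons] at hD
        refine ⟨fun A hA => hI A (by simp [hA]), hC.2, hD.2, ?_⟩
        refine eq_Icc_drop hn ?_ hTfold
        rw [← hU, hBsing]
        simp only [List.foldr_nil, Finset.empty_union]
        ext z; simp
      · show ({n+1} : Finset ℕ) :: t = [] ++ B :: t
        rw [hBsing, List.nil_append]
    · -- c = 1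
      have hn1C : n + 1 ∉ C := hn1s C (by simp)
      have hn1s' : ∀ A ∈ s', n + 1 ∉ A := fun A hA => hn1s A (by simp [hA])
      simp only [List.concat_eq_append, foldr_append, List.foldr_cons, List.foldr_nil,
        Finset.union_empty, List.append_assoc, List.singleton_append] at hU hI hC hD hMd ⊢
      have hRCB : R C B := by
        have hsh : ((s' ++ [C]) ++ B :: t).Chain' R := by
          simpa [List.append_assoc] using hC
        exact (List.isChain_append.1 hsh).2.2 C (by simp [List.getLast?_concat]) B (by simp)
      obtain ⟨y, hy, x, hx, hyx⟩ := hRCB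
      rw [hBsing, Finset.mem_singleton] at hy
      subst hy
      have hxle : x ≤ n + 1 := by
        have := blocks_subset hMd (show C ∈ s' ++ C :: B :: t by simp) hx
        rw [Finset.mem_Icc] at this; exact this.2
      have hxn : x = n := by
        have : x ≠ n + 1 := fun h => hn1C (h ▸ hx)
        omega
      have hnC : n ∈ C := hxn ▸ hx
      obtain ⟨hCs', hCcbt, hClink⟩ := List.isChain_append.1 hC
      rw [List.isChain_cons] at hCcbt
      obtain ⟨_, hCbt⟩ := hCcbt
      rw [List.isChain_cons] at hCbt
      obtain ⟨hBlink, hCt⟩ := hCbt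
      have hsub2 : (s' ++ C :: t).Sublist (s' ++ C :: B :: t) := by
        apply List.Sublist.append_left
        exact List.Sublist.cons₂ C (List.sublist_cons_self B t)
      refine ⟨1, s' ++ C :: t, ⟨?_, ?_, ?_, ?_⟩, ?_⟩
      · intro A hA
        exact hI A (hsub2.subset hA)
      · unfold List.Chain'; rw [List.isChain_append]
        refine ⟨hCs', ?_, ?_⟩
        · rw [List.isChain_cons]
          refine ⟨?_, hCt⟩
          intro b hb
          obtain ⟨y, hy, x', hx', hyx'⟩ := hBlink b hb
          refine ⟨y, hy, n, hnC, ?_⟩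
          have hbt : b ∈ t := List.mem_of_mem_head? hb
          have := blocks_subset hMd (show b ∈ s' ++ C :: B :: t by simp [hbt]) hy
          rw [Finset.mem_Icc] at this
          omega
        · intro x hx0 y hy0
          simp only [List.head?_cons, Option.mem_def, Option.some.injEq] at hy0
          subst hy0
          exact hClink x hx0 C (by simp)
      · exact List.Pairwise.sublist hsub2 hD
      · rw [foldr_append, List.foldr_cons]
        refine eq_Icc_drop hn ?_ ?_
        · rw [← hU, hBsing]
          ext z
          simp only [Finset.mem_insert, Finset.mem_union, Finset.mem_singleton]
          tauto
        · simp only [Finset.mem_union]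
          push_neg
          refine ⟨?_, hn1C, hTfold⟩
          intro h
          obtain ⟨A, hA, hmem⟩ := mem_foldr.1 h
          exact hn1s' A hA hmem
      · show insAfter n (s' ++ C :: t) = s' ++ C :: B :: t
        have hns' : ∀ A ∈ s', n ∉ A := by
          have := not_mem_of_decomp (s := s') (C := C) (t := B :: t) hD hnC
          exact fun A hA => this.1 A hA
        rw [insAfter_eq hns' hnC, hBsing]


lemma card_step {n : ℕ} (hn : 1 ≤ n) :
    Nat.card {L : List (Finset ℕ) // Good (n+1) L}
      = 3 * Nat.card {L : List (Finset ℕ) // Good n L} := by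
  have hb : Function.Bijective
      (fun p : Fin 3 × {L : List (Finset ℕ) // Good n L} =>
        (⟨F n p.1 p.2.1, goodF hn p.2.2 p.1⟩ : {L : List (Finset ℕ) // Good (n+1) L})) := by
    constructor
    · rintro ⟨c₁, L₁, hL₁⟩ ⟨c₂, L₂, hL₂⟩ h
      simp only [Subtype.mk.injEq] at h
      obtain ⟨hc, hL⟩ := F_inj hn hL₁ hL₂ h
      simp [Prod.ext_iff, Subtype.ext_iff, hc, hL]
    · rintro ⟨M, hM⟩
      obtain ⟨c, L, hL, hF⟩ := F_surj hn hM
      exact ⟨⟨c, ⟨L, hL⟩⟩, by simp [hF]⟩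
  rw [← Nat.card_eq_of_bijective _ hb, Nat.card_prod, Nat.card_eq_fintype_card]
  simp

lemma good_one {L : List (Finset ℕ)} : Good 1 L ↔ L = [{1}] := by
  constructor
  · rintro ⟨hI, hC, hD, hU⟩
    have hone : ∀ A ∈ L, A = {1} := by
      intro A hA
      have hsub : A ⊆ Finset.Icc 1 1 := blocks_subset ⟨hI, hC, hD, hU⟩ hA
      obtain ⟨a, b, hab, rfl⟩ := hI A hA
      have h1 : a ∈ Finset.Icc 1 1 := hsub (by rw [Finset.mem_Icc]; omega)
      have h2 : b ∈ Finset.Icc 1 1 := hsub (by rw [Finset.mem_Icc]; omega)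
      rw [Finset.mem_Icc] at h1 h2
      have ha : a = 1 := by omega
      have hb : b = 1 := by omega
      rw [ha, hb, Finset.Icc_self]
    match L with
    | [] =>
      exfalso
      have h1 : (1:ℕ) ∈ Finset.Icc 1 1 := by simp
      rw [← hU] at h1
      simp at h1
    | [A] => rw [hone A (by simp)]
    | A :: B :: T =>
      exfalso
      have hA := hone A (by simp)
      have hB := hone B (by simp)
      rw [List.pairwise_cons] at hD
      have := hD.1 B (by simp)
      rw [hA, hB] at this
      simp at this
  · rintro rfl
    refine ⟨?_, ?_, ?_, ?_⟩
    · intro A hA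
      rw [List.mem_singleton] at hA
      exact ⟨1, 1, le_refl _, by rw [hA, Finset.Icc_self]⟩
    · simp [List.Chain']
    · simp
    · simp [Finset.Icc_self]

end SCProof

open PaperSetComp in
/-- **Lemma (a) of Section 5.2:** the number of set compositions of `{1, …, n}` with no
toggle point is `3^{n-1}`. -/
theorem card_toggle_free_set_compositions (n : ℕ) (hn : 1 ≤ n) :
    Set.ncard {L : List (Finset ℕ) | IsSetComposition n L ∧ ∀ j : ℕ, ¬ IsToggle L j}
      = 3 ^ (n - 1) := by
  have hset : ∀ m : ℕ, {L : List (Finset ℕ) | IsSetComposition m L ∧ ∀ j : ℕ, ¬ IsToggle L j}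
      = {L | SCProof.Good m L} := by
    intro m; ext L; exact SCProof.good_iff
  have key : ∀ m : ℕ, 1 ≤ m → Nat.card {L : List (Finset ℕ) // SCProof.Good m L} = 3 ^ (m - 1) := by
    intro m hm
    induction m with
    | zero => omega
    | succ k ih =>
      rcases Nat.eq_or_lt_of_le hm with h1 | h1
      · have : k = 0 := by omega
        subst this
        have hs1 : {L : List (Finset ℕ) | SCProof.Good 1 L} = {[({1} : Finset ℕ)]} := by
          ext L; simp [SCProof.good_one]
        have : Nat.card {L : List (Finset ℕ) // SCProof.Good (0+1) L}
            = ({L : List (Finset ℕ) | SCProof.Good 1 L}).ncard :=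
          Nat.card_coe_set_eq _
        rw [this, hs1]
        simp
      · have hk : 1 ≤ k := by omega
        rw [SCProof.card_step hk, ih hk]
        have : k + 1 - 1 = (k - 1) + 1 := by omega
        rw [this, pow_succ]
        ring
  rw [← Nat.card_coe_set_eq, hset n]
  exact key n hn
end

section
/- Let H and H′ be graded connected cocommutative ℂ-bialgebras, each free on some set of homogeneous elements of positive degree, and assume every graded component H_n and H′_n is finite-dimensional. Then there exists a bialgebra isomorphism H → H′ carrying H_n onto H′_n for every n if and only if dim_ℂ H_n = dim_ℂ H′_n for all n ≥ 0. -/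
open scoped TensorProduct

namespace PaperGradedBialg

/-- `H`, with the given family of subspaces `ℬ`, is a graded connected `ℂ`-bialgebra:
`H = ⨁ₙ ℬ n`, `ℬ 0 = ℂ·1`, the multiplication and comultiplication respect the grading,
and the counit vanishes in positive degrees. -/
def IsGradedConnected (H : Type) [Ring H] [Bialgebra ℂ H] (ℬ : ℕ → Submodule ℂ H) : Prop :=
  DirectSum.IsInternal ℬ ∧
  ℬ 0 = Submodule.span ℂ {1} ∧
  (∀ m n : ℕ, ℬ m * ℬ n ≤ ℬ (m + n)) ∧
  (∀ n : ℕ, ∀ x ∈ ℬ n, Coalgebra.comul (R := ℂ) x ∈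
    ⨆ p ∈ Finset.HasAntidiagonal.antidiagonal n,
      LinearMap.range (TensorProduct.map (ℬ p.1).subtype (ℬ p.2).subtype)) ∧
  (∀ n : ℕ, 0 < n → ∀ x ∈ ℬ n, Coalgebra.counit (R := ℂ) x = 0)

/-- `H` is cocommutative: `τ ∘ Δ = Δ` for the flip `τ`. -/
def IsCocommutative (H : Type) [Ring H] [Bialgebra ℂ H] : Prop :=
  ∀ x : H, TensorProduct.comm ℂ H H (Coalgebra.comul (R := ℂ) x) = Coalgebra.comul (R := ℂ) x

/-- `H` is free as an associative unital `ℂ`-algebra on the set `F` of homogeneous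
elements of positive degree: the canonical map from the free algebra on `F` is bijective. -/
def IsFreeOnHomogeneous (H : Type) [Ring H] [Algebra ℂ H] (ℬ : ℕ → Submodule ℂ H)
    (F : Set H) : Prop :=
  (∀ x ∈ F, ∃ n : ℕ, 0 < n ∧ x ∈ ℬ n) ∧
  Function.Bijective ⇑(FreeAlgebra.lift ℂ (Subtype.val : F → H))

end PaperGradedBialg

namespace P42

open Coalgebra TensorProduct

variable {H : Type} [Ring H] [Bialgebra ℂ H]
variable {K : Type} [Ring K] [Algebra ℂ K]
variable {K' : Type} [Ring K'] [Algebra ℂ K']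

/-- The unit of the convolution algebra. -/
noncomputable def cunit : H →ₗ[ℂ] K :=
  (Algebra.linearMap ℂ K) ∘ₗ Coalgebra.counit

lemma cunit_apply (x : H) : (cunit : H →ₗ[ℂ] K) x = algebraMap ℂ K (Coalgebra.counit x) := rfl

/-- Convolution product. -/
noncomputable def conv (f g : H →ₗ[ℂ] K) : H →ₗ[ℂ] K :=
  LinearMap.mul' ℂ K ∘ₗ TensorProduct.map f g ∘ₗ Coalgebra.comul

lemma conv_apply_repr (f g : H →ₗ[ℂ] K) {x : H} {ι : Type*} (r : Coalgebra.Repr ℂ x ι) :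
    conv f g x = ∑ i ∈ r.index, f (r.left i) * g (r.right i) := by
  simp only [conv, LinearMap.comp_apply, ← r.eq, map_sum, TensorProduct.map_tmul,
    LinearMap.mul'_apply]

lemma sum_counit_smul_left {x : H} {ι : Type*} (r : Coalgebra.Repr ℂ x ι) :
    ∑ i ∈ r.index, (Coalgebra.counit (R := ℂ) (r.right i)) • r.left i = x := by
  have h := Coalgebra.sum_tmul_counit_eq (R := ℂ) r
  calc ∑ i ∈ r.index, (Coalgebra.counit (R := ℂ) (r.right i)) • r.left i
      = TensorProduct.rid ℂ H (∑ i ∈ r.index, r.left i ⊗ₜ[ℂ] Coalgebra.counit (R := ℂ) (r.right i)) := by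
        rw [map_sum]; simp only [TensorProduct.rid_tmul]
    _ = TensorProduct.rid ℂ H (x ⊗ₜ[ℂ] 1) := by rw [h]
    _ = x := by simp

lemma sum_counit_smul_right {x : H} {ι : Type*} (r : Coalgebra.Repr ℂ x ι) :
    ∑ i ∈ r.index, (Coalgebra.counit (R := ℂ) (r.left i)) • r.right i = x := by
  have h := Coalgebra.sum_counit_tmul_eq (R := ℂ) r
  calc ∑ i ∈ r.index, (Coalgebra.counit (R := ℂ) (r.left i)) • r.right i
      = TensorProduct.lid ℂ H (∑ i ∈ r.index, (Coalgebra.counit (R := ℂ) (r.left i)) ⊗ₜ[ℂ] r.right i) := by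
        rw [map_sum]; simp only [TensorProduct.lid_tmul]
    _ = TensorProduct.lid ℂ H ((1:ℂ) ⊗ₜ[ℂ] x) := by rw [h]
    _ = x := by simp

lemma conv_cunit_right (f : H →ₗ[ℂ] K) : conv f cunit = f := by
  ext x
  rw [conv_apply_repr f cunit (ℛ ℂ x)]
  calc ∑ i ∈ (ℛ ℂ x).index, f ((ℛ ℂ x).left i) * cunit ((ℛ ℂ x).right i)
      = ∑ i ∈ (ℛ ℂ x).index, f ((Coalgebra.counit (R := ℂ) ((ℛ ℂ x).right i)) • (ℛ ℂ x).left i) := by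
        refine Finset.sum_congr rfl fun i _ => ?_
        rw [cunit_apply, map_smul, ← Algebra.commutes, Algebra.smul_def]
    _ = f x := by rw [← map_sum, sum_counit_smul_left]

lemma conv_cunit_left (f : H →ₗ[ℂ] K) : conv cunit f = f := by
  ext x
  rw [conv_apply_repr cunit f (ℛ ℂ x)]
  calc ∑ i ∈ (ℛ ℂ x).index, cunit ((ℛ ℂ x).left i) * f ((ℛ ℂ x).right i)
      = ∑ i ∈ (ℛ ℂ x).index, f ((Coalgebra.counit (R := ℂ) ((ℛ ℂ x).left i)) • (ℛ ℂ x).right i) := by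
        refine Finset.sum_congr rfl fun i _ => ?_
        rw [cunit_apply, map_smul, Algebra.smul_def]
    _ = f x := by rw [← map_sum, sum_counit_smul_right]

lemma conv_add_left (f f' g : H →ₗ[ℂ] K) : conv (f + f') g = conv f g + conv f' g := by
  simp [conv, TensorProduct.map_add_left, LinearMap.comp_add, LinearMap.add_comp]

lemma conv_add_right (f g g' : H →ₗ[ℂ] K) : conv f (g + g') = conv f g + conv f g' := by
  simp [conv, TensorProduct.map_add_right, LinearMap.comp_add, LinearMap.add_comp]

lemma conv_smul_left (c : ℂ) (f g : H →ₗ[ℂ] K) : conv (c • f) g = c • conv f g := by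
  simp [conv, TensorProduct.map_smul_left, LinearMap.comp_smul, LinearMap.smul_comp]

lemma conv_smul_right (c : ℂ) (f g : H →ₗ[ℂ] K) : conv f (c • g) = c • conv f g := by
  simp [conv, TensorProduct.map_smul_right, LinearMap.comp_smul, LinearMap.smul_comp]

lemma conv_sum_left {ι : Type*} (s : Finset ι) (f : ι → (H →ₗ[ℂ] K)) (g : H →ₗ[ℂ] K) :
    conv (∑ i ∈ s, f i) g = ∑ i ∈ s, conv (f i) g := by
  classical
  induction s using Finset.induction with
  | empty => simp [conv]
  | insert _ _ h ih => simp [Finset.sum_insert h, conv_add_left, ih]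

lemma conv_sum_right {ι : Type*} (s : Finset ι) (f : H →ₗ[ℂ] K) (g : ι → (H →ₗ[ℂ] K)) :
    conv f (∑ i ∈ s, g i) = ∑ i ∈ s, conv f (g i) := by
  classical
  induction s using Finset.induction with
  | empty => simp [conv]
  | insert _ _ h ih => simp [Finset.sum_insert h, conv_add_right, ih]

lemma conv_assoc (f g h : H →ₗ[ℂ] K) : conv (conv f g) h = conv f (conv g h) := by
  ext x
  set r := ℛ ℂ x with hr
  have key := Coalgebra.sum_map_tmul_tmul_eq (R := ℂ) (f : H →ₗ[ℂ] K) g h x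
    (repr := r) (a₁ := fun i => ℛ ℂ (r.left i)) (a₂ := fun i => ℛ ℂ (r.right i))
  -- apply the multiplication K ⊗ (K ⊗ K) → K to both sides
  have key2 := congrArg (LinearMap.mul' ℂ K ∘ₗ (LinearMap.lTensor K (LinearMap.mul' ℂ K))) key
  simp only [map_sum, LinearMap.comp_apply, LinearMap.lTensor_tmul, LinearMap.mul'_apply] at key2
  rw [conv_apply_repr (conv f g) h r, conv_apply_repr f (conv g h) r]
  calc ∑ i ∈ r.index, conv f g (r.left i) * h (r.right i)
      = ∑ i ∈ r.index, ∑ j ∈ (ℛ ℂ (r.left i)).index,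
          f ((ℛ ℂ (r.left i)).left j) * ((ℛ ℂ (r.left i)).right j |> g) * h (r.right i) := by
        refine Finset.sum_congr rfl fun i _ => ?_
        rw [conv_apply_repr f g (ℛ ℂ (r.left i)), Finset.sum_mul]
    _ = ∑ i ∈ r.index, ∑ j ∈ (ℛ ℂ (r.left i)).index,
          f ((ℛ ℂ (r.left i)).left j) * (g ((ℛ ℂ (r.left i)).right j) * h (r.right i)) := by
        simp [mul_assoc]
    _ = ∑ i ∈ r.index, ∑ j ∈ (ℛ ℂ (r.right i)).index,
          f (r.left i) * (g ((ℛ ℂ (r.right i)).left j) * h ((ℛ ℂ (r.right i)).right j)) := key2.symm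
    _ = ∑ i ∈ r.index, f (r.left i) * conv g h (r.right i) := by
        refine Finset.sum_congr rfl fun i _ => ?_
        rw [conv_apply_repr g h (ℛ ℂ (r.right i)), Finset.mul_sum]

/-- Convolution powers. -/
noncomputable def cpow (f : H →ₗ[ℂ] K) : ℕ → (H →ₗ[ℂ] K)
  | 0 => cunit
  | (k+1) => conv f (cpow f k)

lemma cpow_succ (f : H →ₗ[ℂ] K) (k : ℕ) : cpow f (k+1) = conv f (cpow f k) := rfl

lemma cpow_succ' (f : H →ₗ[ℂ] K) (k : ℕ) : cpow f (k+1) = conv (cpow f k) f := by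
  induction k with
  | zero => simp [cpow, conv_cunit_left, conv_cunit_right]
  | succ k ih =>
      show conv f (cpow f (k+1)) = _
      rw [ih, ← conv_assoc, ← ih]
      rfl

lemma algHom_comp_conv (φ : K →ₐ[ℂ] K') (f g : H →ₗ[ℂ] K) :
    φ.toLinearMap ∘ₗ conv f g = conv (φ.toLinearMap ∘ₗ f) (φ.toLinearMap ∘ₗ g) := by
  ext x
  simp only [LinearMap.comp_apply, conv_apply_repr _ _ (ℛ ℂ x), map_sum, map_mul,
    AlgHom.toLinearMap_apply]

lemma algHom_comp_cunit (φ : K →ₐ[ℂ] K') :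
    φ.toLinearMap ∘ₗ (cunit : H →ₗ[ℂ] K) = cunit := by
  ext x
  simp [cunit_apply, AlgHom.commutes]

end P42
namespace P42
section Cocomm
open Coalgebra TensorProduct PaperGradedBialg

variable {H : Type} [Ring H] [Bialgebra ℂ H]

/-- `x ↦ f x ⊗ 1`. -/
noncomputable def rho (f : H →ₗ[ℂ] H) : H →ₗ[ℂ] H ⊗[ℂ] H :=
  ((TensorProduct.mk ℂ H H).flip 1) ∘ₗ f

/-- `x ↦ 1 ⊗ f x`. -/
noncomputable def lam (f : H →ₗ[ℂ] H) : H →ₗ[ℂ] H ⊗[ℂ] H :=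
  (TensorProduct.mk ℂ H H 1) ∘ₗ f

@[simp] lemma rho_apply (f : H →ₗ[ℂ] H) (x : H) : rho f x = f x ⊗ₜ[ℂ] 1 := rfl
@[simp] lemma lam_apply (f : H →ₗ[ℂ] H) (x : H) : lam f x = (1 : H) ⊗ₜ[ℂ] f x := rfl

/-- `(f ⊗ g) ∘ Δ`. -/
noncomputable def Tm (f g : H →ₗ[ℂ] H) : H →ₗ[ℂ] H ⊗[ℂ] H :=
  TensorProduct.map f g ∘ₗ Coalgebra.comul

lemma Tm_apply_repr (f g : H →ₗ[ℂ] H) {x : H} {ι : Type*} (r : Coalgebra.Repr ℂ x ι) :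
    Tm f g x = ∑ i ∈ r.index, f (r.left i) ⊗ₜ[ℂ] g (r.right i) := by
  simp only [Tm, LinearMap.comp_apply, ← r.eq, map_sum, TensorProduct.map_tmul]

lemma conv_rho_rho (f g : H →ₗ[ℂ] H) : conv (rho f) (rho g) = rho (conv f g) := by
  ext x
  rw [conv_apply_repr _ _ (ℛ ℂ x)]
  simp only [rho_apply, Algebra.TensorProduct.tmul_mul_tmul, one_mul]
  rw [conv_apply_repr f g (ℛ ℂ x), ← TensorProduct.sum_tmul]

lemma conv_lam_lam (f g : H →ₗ[ℂ] H) : conv (lam f) (lam g) = lam (conv f g) := by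
  ext x
  rw [conv_apply_repr _ _ (ℛ ℂ x)]
  simp only [lam_apply, Algebra.TensorProduct.tmul_mul_tmul, one_mul]
  rw [conv_apply_repr f g (ℛ ℂ x), ← TensorProduct.tmul_sum]

lemma conv_rho_lam (f g : H →ₗ[ℂ] H) : conv (rho f) (lam g) = Tm f g := by
  ext x
  rw [conv_apply_repr _ _ (ℛ ℂ x), Tm_apply_repr f g (ℛ ℂ x)]
  simp only [rho_apply, lam_apply, Algebra.TensorProduct.tmul_mul_tmul, one_mul, mul_one]

lemma conv_lam_rho (hcc : IsCocommutative H) (f g : H →ₗ[ℂ] H) :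
    conv (lam g) (rho f) = Tm f g := by
  ext x
  rw [conv_apply_repr _ _ (ℛ ℂ x)]
  simp only [rho_apply, lam_apply, Algebra.TensorProduct.tmul_mul_tmul, one_mul, mul_one]
  have hsum : ∑ i ∈ (ℛ ℂ x).index, (ℛ ℂ x).right i ⊗ₜ[ℂ] (ℛ ℂ x).left i
      = Coalgebra.comul (R := ℂ) x := by
    calc ∑ i ∈ (ℛ ℂ x).index, (ℛ ℂ x).right i ⊗ₜ[ℂ] (ℛ ℂ x).left i
        = TensorProduct.comm ℂ H H (∑ i ∈ (ℛ ℂ x).index, (ℛ ℂ x).left i ⊗ₜ[ℂ] (ℛ ℂ x).right i) := by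
          rw [map_sum]; simp
      _ = TensorProduct.comm ℂ H H (Coalgebra.comul (R := ℂ) x) := by rw [(ℛ ℂ x).eq]
      _ = Coalgebra.comul (R := ℂ) x := hcc x
  calc ∑ i ∈ (ℛ ℂ x).index, f ((ℛ ℂ x).right i) ⊗ₜ[ℂ] g ((ℛ ℂ x).left i)
      = TensorProduct.map f g (∑ i ∈ (ℛ ℂ x).index, (ℛ ℂ x).right i ⊗ₜ[ℂ] (ℛ ℂ x).left i) := by
        rw [map_sum]; simp
    _ = Tm f g x := by rw [hsum]; rfl

lemma Tm_conv (hcc : IsCocommutative H) (f g f' g' : H →ₗ[ℂ] H) :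
    conv (Tm f g) (Tm f' g') = Tm (conv f f') (conv g g') := by
  rw [← conv_rho_lam f g, ← conv_rho_lam f' g', conv_assoc, ← conv_assoc (lam g),
    conv_lam_rho hcc, ← conv_rho_lam, conv_assoc, ← conv_assoc, ← conv_assoc,
    conv_rho_rho, conv_assoc, conv_lam_lam, conv_rho_lam]

lemma Tm_id_id : Tm (LinearMap.id) (LinearMap.id) = (Coalgebra.comul : H →ₗ[ℂ] H ⊗[ℂ] H) := by
  simp [Tm, TensorProduct.map_id]

lemma counit_mul_sum {x : H} {ι : Type*} (r : Coalgebra.Repr ℂ x ι) :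
    ∑ i ∈ r.index, (Coalgebra.counit (R := ℂ) (r.left i)) * Coalgebra.counit (R := ℂ) (r.right i)
      = Coalgebra.counit (R := ℂ) x := by
  have h := sum_counit_smul_right r
  calc ∑ i ∈ r.index, (Coalgebra.counit (R := ℂ) (r.left i)) * Coalgebra.counit (R := ℂ) (r.right i)
      = Coalgebra.counit (R := ℂ) (∑ i ∈ r.index, (Coalgebra.counit (R := ℂ) (r.left i)) • r.right i) := by
        rw [map_sum]; simp [smul_eq_mul]
    _ = Coalgebra.counit (R := ℂ) x := by rw [h]

lemma Tm_cunit_cunit : Tm (cunit : H →ₗ[ℂ] H) cunit = (cunit : H →ₗ[ℂ] H ⊗[ℂ] H) := by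
  ext x
  rw [Tm_apply_repr _ _ (ℛ ℂ x)]
  have : ∀ i, (cunit ((ℛ ℂ x).left i)) ⊗ₜ[ℂ] (cunit ((ℛ ℂ x).right i))
      = ((Coalgebra.counit (R := ℂ) ((ℛ ℂ x).left i)) * Coalgebra.counit (R := ℂ) ((ℛ ℂ x).right i))
        • ((1:H) ⊗ₜ[ℂ] (1:H)) := by
    intro i
    simp only [cunit_apply, Algebra.algebraMap_eq_smul_one, TensorProduct.smul_tmul',
      TensorProduct.tmul_smul, smul_smul]
    rw [mul_comm]
  rw [Finset.sum_congr rfl fun i _ => this i, ← Finset.sum_smul, counit_mul_sum (ℛ ℂ x),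
    cunit_apply, Algebra.algebraMap_eq_smul_one, Algebra.TensorProduct.one_def]

lemma Tm_cunit_right (f : H →ₗ[ℂ] H) (x : H) : Tm f cunit x = f x ⊗ₜ[ℂ] 1 := by
  rw [Tm_apply_repr _ _ (ℛ ℂ x)]
  have : ∀ i, f ((ℛ ℂ x).left i) ⊗ₜ[ℂ] (cunit ((ℛ ℂ x).right i) : H)
      = (f ((Coalgebra.counit (R := ℂ) ((ℛ ℂ x).right i)) • (ℛ ℂ x).left i)) ⊗ₜ[ℂ] (1:H) := by
    intro i
    rw [cunit_apply, Algebra.algebraMap_eq_smul_one, TensorProduct.tmul_smul,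
      TensorProduct.smul_tmul', ← map_smul]
  rw [Finset.sum_congr rfl fun i _ => this i, ← TensorProduct.sum_tmul, ← map_sum,
    sum_counit_smul_left (ℛ ℂ x)]

lemma Tm_cunit_left (f : H →ₗ[ℂ] H) (x : H) : Tm cunit f x = (1:H) ⊗ₜ[ℂ] f x := by
  rw [Tm_apply_repr _ _ (ℛ ℂ x)]
  have : ∀ i, (cunit ((ℛ ℂ x).left i) : H) ⊗ₜ[ℂ] f ((ℛ ℂ x).right i)
      = (1:H) ⊗ₜ[ℂ] (f ((Coalgebra.counit (R := ℂ) ((ℛ ℂ x).left i)) • (ℛ ℂ x).right i)) := by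
    intro i
    rw [cunit_apply, Algebra.algebraMap_eq_smul_one, TensorProduct.smul_tmul, ← map_smul]
  rw [Finset.sum_congr rfl fun i _ => this i, ← TensorProduct.tmul_sum, ← map_sum,
    sum_counit_smul_right (ℛ ℂ x)]

end Cocomm
end P42
namespace P42
section Graded
open Coalgebra TensorProduct PaperGradedBialg

variable {H : Type} [Ring H] [Bialgebra ℂ H]

/-- A linear map preserving the grading. -/
def IsGr (ℬ : ℕ → Submodule ℂ H) (f : H →ₗ[ℂ] H) : Prop := ∀ n, ∀ x ∈ ℬ n, f x ∈ ℬ n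

variable {ℬ : ℕ → Submodule ℂ H}

lemma one_mem_deg0 (hgr : IsGradedConnected H ℬ) : (1:H) ∈ ℬ 0 := by
  rw [hgr.2.1]; exact Submodule.mem_span_singleton_self 1

lemma deg0_eq (hgr : IsGradedConnected H ℬ) {x : H} (hx : x ∈ ℬ 0) :
    (Coalgebra.counit (R := ℂ) x) • (1:H) = x := by
  rw [hgr.2.1] at hx
  obtain ⟨c, rfl⟩ := Submodule.mem_span_singleton.mp hx
  rw [map_smul, smul_eq_mul, Bialgebra.counit_one, mul_one]

lemma cunit_isGr (hgr : IsGradedConnected H ℬ) : IsGr ℬ (cunit : H →ₗ[ℂ] H) := by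
  intro n x hx
  cases n with
  | zero =>
      have : (cunit : H →ₗ[ℂ] H) x = x := by
        rw [cunit_apply, Algebra.algebraMap_eq_smul_one, deg0_eq hgr hx]
      rwa [this]
  | succ n =>
      have h0 : Coalgebra.counit (R := ℂ) x = 0 := hgr.2.2.2.2 _ (Nat.succ_pos n) x hx
      rw [cunit_apply, h0, map_zero]
      exact Submodule.zero_mem _

/-- `J = id - u ∘ ε`. -/
noncomputable def Jm : H →ₗ[ℂ] H := LinearMap.id - cunit

lemma Jm_isGr (hgr : IsGradedConnected H ℬ) : IsGr ℬ (Jm : H →ₗ[ℂ] H) := by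
  intro n x hx
  exact Submodule.sub_mem _ hx (cunit_isGr hgr n x hx)

lemma Jm_deg0 (hgr : IsGradedConnected H ℬ) {x : H} (hx : x ∈ ℬ 0) : Jm x = 0 := by
  simp only [Jm, LinearMap.sub_apply, LinearMap.id_apply, cunit_apply,
    Algebra.algebraMap_eq_smul_one, deg0_eq hgr hx, sub_self]

lemma Jm_pos (hgr : IsGradedConnected H ℬ) {n : ℕ} (hn : 0 < n) {x : H} (hx : x ∈ ℬ n) :
    Jm x = x := by
  simp only [Jm, LinearMap.sub_apply, LinearMap.id_apply, cunit_apply,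
    hgr.2.2.2.2 n hn x hx, map_zero, sub_zero]

lemma exists_comul_repr (hgr : IsGradedConnected H ℬ) {n : ℕ} {x : H} (hx : x ∈ ℬ n) :
    ∃ w : ℕ × ℕ → H ⊗[ℂ] H,
      (∀ p, w p ∈ LinearMap.range (TensorProduct.map (ℬ p.1).subtype (ℬ p.2).subtype)) ∧
      Coalgebra.comul (R := ℂ) x = ∑ p ∈ Finset.HasAntidiagonal.antidiagonal n, w p := by
  have h := hgr.2.2.2.1 n x hx
  obtain ⟨μ, hμ⟩ := (Submodule.mem_iSup_finset_iff_exists_sum _ _).mp h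
  exact ⟨fun p => μ p, fun p => (μ p).2, hμ.symm⟩

lemma range_map_cases {i j : ℕ} {P : H ⊗[ℂ] H → Prop} (h0 : P 0)
    (hadd : ∀ u v, P u → P v → P (u + v))
    (hp : ∀ a ∈ ℬ i, ∀ b ∈ ℬ j, P ((a : H) ⊗ₜ[ℂ] (b : H))) {w : H ⊗[ℂ] H}
    (hw : w ∈ LinearMap.range (TensorProduct.map (ℬ i).subtype (ℬ j).subtype)) : P w := by
  obtain ⟨u, rfl⟩ := hw
  induction u with
  | zero => simpa using h0
  | tmul a b => simpa using hp a a.2 b b.2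
  | add u v hu hv => rw [map_add]; exact hadd _ _ hu hv

lemma mul_mem_of (hgr : IsGradedConnected H ℬ) {i j : ℕ} {a b : H} (ha : a ∈ ℬ i)
    (hb : b ∈ ℬ j) : a * b ∈ ℬ (i + j) :=
  hgr.2.2.1 i j (Submodule.mul_mem_mul ha hb)

lemma conv_apply_sum {f g : H →ₗ[ℂ] H} {n : ℕ} {x : H} {w : ℕ × ℕ → H ⊗[ℂ] H}
    (hcom : Coalgebra.comul (R := ℂ) x = ∑ p ∈ Finset.HasAntidiagonal.antidiagonal n, w p) :
    conv f g x = ∑ p ∈ Finset.HasAntidiagonal.antidiagonal n, LinearMap.mul' ℂ H (TensorProduct.map f g (w p)) := by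
  simp only [conv, LinearMap.comp_apply, hcom, map_sum]

lemma conv_isGr (hgr : IsGradedConnected H ℬ) {f g : H →ₗ[ℂ] H} (hf : IsGr ℬ f)
    (hg : IsGr ℬ g) : IsGr ℬ (conv f g) := by
  intro n x hx
  obtain ⟨w, hw, hcom⟩ := exists_comul_repr hgr hx
  rw [conv_apply_sum hcom]
  refine Submodule.sum_mem _ fun p hp => ?_
  have hpn : p.1 + p.2 = n := Finset.HasAntidiagonal.mem_antidiagonal.mp hp
  refine range_map_cases (P := fun z => LinearMap.mul' ℂ H (TensorProduct.map f g z) ∈ ℬ n)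
    ?_ ?_ ?_ (hw p)
  · simp
  · intro u v hu hv; rw [map_add, map_add]; exact add_mem hu hv
  · intro a ha b hb
    simp only [TensorProduct.map_tmul, LinearMap.mul'_apply]
    exact hpn ▸ mul_mem_of hgr (hf _ _ ha) (hg _ _ hb)

lemma Jp_isGr (hgr : IsGradedConnected H ℬ) (k : ℕ) : IsGr ℬ (cpow (Jm : H →ₗ[ℂ] H) k) := by
  induction k with
  | zero => exact cunit_isGr hgr
  | succ k ih => exact conv_isGr hgr (Jm_isGr hgr) ih

lemma Jp_vanish (hgr : IsGradedConnected H ℬ) :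
    ∀ k n, n < k → ∀ x ∈ ℬ n, cpow (Jm : H →ₗ[ℂ] H) k x = 0 := by
  intro k
  induction k using Nat.strong_induction_on with
  | _ k IH =>
    match k with
    | 0 => intro n h; omega
    | (k+1) =>
      intro n hnk x hx
      obtain ⟨w, hw, hcom⟩ := exists_comul_repr hgr hx
      show conv Jm (cpow Jm k) x = 0
      rw [conv_apply_sum hcom]
      refine Finset.sum_eq_zero fun p hp => ?_
      have hpn : p.1 + p.2 = n := Finset.HasAntidiagonal.mem_antidiagonal.mp hp
      refine range_map_cases
        (P := fun z => LinearMap.mul' ℂ H (TensorProduct.map Jm (cpow Jm k) z) = 0) ?_ ?_ ?_ (hw p)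
      · simp
      · intro u v hu hv; rw [map_add, map_add, hu, hv, add_zero]
      · intro a ha b hb
        simp only [TensorProduct.map_tmul, LinearMap.mul'_apply]
        rcases Nat.eq_zero_or_pos p.1 with h1 | h1
        · have ha0 : (a : H) ∈ ℬ 0 := by rwa [h1] at ha
          rw [Jm_deg0 hgr ha0, zero_mul]
        · have h2 : p.2 < k := by omega
          rw [IH k (by omega) p.2 h2 _ hb, mul_zero]

/-- Glue a family of maps on the graded pieces into a linear map. -/
noncomputable def glue (hgr : IsGradedConnected H ℬ) (c : (n : ℕ) → (ℬ n →ₗ[ℂ] H)) :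
    H →ₗ[ℂ] H :=
  (DirectSum.toModule ℂ ℕ H c) ∘ₗ
    (LinearEquiv.ofBijective (DirectSum.coeLinearMap ℬ) hgr.1).symm.toLinearMap

lemma glue_apply (hgr : IsGradedConnected H ℬ) (c : (n : ℕ) → (ℬ n →ₗ[ℂ] H)) {n : ℕ} {x : H}
    (hx : x ∈ ℬ n) : glue hgr c x = c n ⟨x, hx⟩ := by
  have h1 : (LinearEquiv.ofBijective (DirectSum.coeLinearMap ℬ) hgr.1).symm x
      = DirectSum.lof ℂ ℕ (fun n => ℬ n) n ⟨x, hx⟩ := by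
    apply (LinearEquiv.symm_apply_eq _).mpr
    show x = DirectSum.coeLinearMap ℬ (DirectSum.lof ℂ ℕ (fun n => ℬ n) n ⟨x, hx⟩)
    rw [DirectSum.lof_eq_of, DirectSum.coeLinearMap_of]
  simp only [glue, LinearMap.comp_apply, LinearEquiv.coe_coe, h1, DirectSum.toModule_lof]

/-- Truncated geometric series `∑ (-1)^k J^{*k}`. -/
noncomputable def Gm (n : ℕ) : H →ₗ[ℂ] H :=
  ∑ k ∈ Finset.range (n+1), ((-1:ℂ))^k • cpow (Jm : H →ₗ[ℂ] H) k

/-- The antipode. -/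
noncomputable def Sm (hgr : IsGradedConnected H ℬ) : H →ₗ[ℂ] H :=
  glue hgr (fun n => Gm n ∘ₗ (ℬ n).subtype)

lemma Sm_eq (hgr : IsGradedConnected H ℬ) {n : ℕ} {x : H} (hx : x ∈ ℬ n) :
    Sm hgr x = Gm n x :=
  glue_apply hgr _ hx

lemma Gm_stable (hgr : IsGradedConnected H ℬ) {m n : ℕ} (hmn : m ≤ n) {x : H} (hx : x ∈ ℬ m) :
    Gm n x = Gm m x := by
  simp only [Gm, LinearMap.sum_apply, LinearMap.smul_apply]
  refine (Finset.sum_subset (by intro k hk; simp only [Finset.mem_range] at *; omega)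
    (fun k _ hk' => ?_)).symm
  have : m < k := by simp only [Finset.mem_range] at hk'; omega
  rw [Jp_vanish hgr k m this x hx, smul_zero]

lemma Sm_eq_on_le (hgr : IsGradedConnected H ℬ) {m n : ℕ} (hmn : m ≤ n) {x : H}
    (hx : x ∈ ℬ m) : Sm hgr x = Gm n x :=
  (Sm_eq hgr hx).trans (Gm_stable hgr hmn hx).symm

lemma Sm_isGr (hgr : IsGradedConnected H ℬ) : IsGr ℬ (Sm hgr) := by
  intro n x hx
  rw [Sm_eq hgr hx]
  simp only [Gm, LinearMap.sum_apply, LinearMap.smul_apply]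
  exact Submodule.sum_mem _ fun k _ => Submodule.smul_mem _ _ (Jp_isGr hgr k n x hx)

lemma cunit_one : (cunit : H →ₗ[ℂ] H) 1 = 1 := by
  rw [cunit_apply, Bialgebra.counit_one, map_one]

lemma Sm_one (hgr : IsGradedConnected H ℬ) : Sm hgr 1 = 1 := by
  rw [Sm_eq hgr (one_mem_deg0 hgr)]
  have : Gm 0 = (cunit : H →ₗ[ℂ] H) := by
    simp [Gm, cpow]
  rw [this, cunit_apply, Bialgebra.counit_one, map_one]

lemma graded_ext (hgr : IsGradedConnected H ℬ) {M : Type*} [AddCommMonoid M] [Module ℂ M]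
    {f g : H →ₗ[ℂ] M} (h : ∀ n, ∀ x ∈ ℬ n, f x = g x) : f = g := by
  ext x
  have hx : x ∈ ⨆ n, ℬ n := by rw [hgr.1.submodule_iSup_eq_top]; trivial
  refine Submodule.iSup_induction (motive := fun z => f z = g z) _ hx (fun n z hz => h n z hz) (by simp)
    (fun u v h1 h2 => show f (u + v) = g (u + v) by
      rw [map_add, map_add, show f u = g u from h1, show f v = g v from h2])

lemma conv_congr_on (hgr : IsGradedConnected H ℬ) {f g f' g' : H →ₗ[ℂ] H} (n : ℕ)
    (hf : ∀ i ≤ n, ∀ a ∈ ℬ i, f a = f' a) (hg : ∀ j ≤ n, ∀ b ∈ ℬ j, g b = g' b)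
    {x : H} (hx : x ∈ ℬ n) : conv f g x = conv f' g' x := by
  obtain ⟨w, hw, hcom⟩ := exists_comul_repr hgr hx
  rw [conv_apply_sum hcom, conv_apply_sum hcom]
  refine Finset.sum_congr rfl fun p hp => ?_
  have hpn : p.1 + p.2 = n := Finset.HasAntidiagonal.mem_antidiagonal.mp hp
  refine range_map_cases
    (P := fun z => LinearMap.mul' ℂ H (TensorProduct.map f g z)
      = LinearMap.mul' ℂ H (TensorProduct.map f' g' z)) ?_ ?_ ?_ (hw p)
  · simp
  · intro u v hu hv; rw [map_add, map_add, map_add, map_add, hu, hv]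
  · intro a ha b hb
    simp only [TensorProduct.map_tmul, LinearMap.mul'_apply]
    rw [hf p.1 (by omega) _ ha, hg p.2 (by omega) _ hb]

lemma id_eq_Jm_add_cunit : (LinearMap.id : H →ₗ[ℂ] H) = (Jm + cunit : H →ₗ[ℂ] H) := by
  rw [Jm]; abel

lemma conv_Gm_id_apply (hgr : IsGradedConnected H ℬ) {n : ℕ} {x : H} (hx : x ∈ ℬ n) :
    conv (Gm n) LinearMap.id x = cunit x := by
  have h2 : conv (Gm n) LinearMap.id
      = ∑ k ∈ Finset.range (n+1), ((-1:ℂ))^k • (cpow (Jm : H →ₗ[ℂ] H) (k+1) + cpow Jm k) := by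
    calc conv (Gm n) LinearMap.id = conv (Gm n) (Jm + cunit) := by rw [← id_eq_Jm_add_cunit]
      _ = conv (Gm n) Jm + Gm n := by rw [conv_add_right, conv_cunit_right]
      _ = (∑ k ∈ Finset.range (n+1), ((-1:ℂ))^k • cpow Jm (k+1)) + Gm n := by
          rw [Gm, conv_sum_left]
          congr 1
          refine Finset.sum_congr rfl fun k _ => ?_
          rw [conv_smul_left, cpow_succ']
      _ = _ := by
          rw [Gm, ← Finset.sum_add_distrib]
          refine Finset.sum_congr rfl fun k _ => ?_
          rw [smul_add]
  rw [h2]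
  have h3 : ∀ k, ((-1:ℂ))^k • (cpow (Jm : H →ₗ[ℂ] H) (k+1) x + cpow (Jm : H →ₗ[ℂ] H) k x)
      = (((-1:ℂ))^k • cpow (Jm : H →ₗ[ℂ] H) k x)
        - (((-1:ℂ))^(k+1) • cpow (Jm : H →ₗ[ℂ] H) (k+1) x) := by
    intro k
    rw [smul_add, pow_succ, mul_neg_one, neg_smul, sub_neg_eq_add]
    abel
  rw [LinearMap.sum_apply]
  simp only [LinearMap.smul_apply, LinearMap.add_apply]
  rw [Finset.sum_congr rfl fun k _ => h3 k, Finset.sum_range_sub']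
  rw [Jp_vanish hgr (n+1) n (by omega) x hx, smul_zero, sub_zero]
  simp [cpow]

lemma conv_id_Gm_apply (hgr : IsGradedConnected H ℬ) {n : ℕ} {x : H} (hx : x ∈ ℬ n) :
    conv LinearMap.id (Gm n) x = cunit x := by
  have h2 : conv LinearMap.id (Gm n)
      = ∑ k ∈ Finset.range (n+1), ((-1:ℂ))^k • (cpow (Jm : H →ₗ[ℂ] H) (k+1) + cpow Jm k) := by
    calc conv LinearMap.id (Gm n) = conv (Jm + cunit) (Gm n) := by rw [← id_eq_Jm_add_cunit]
      _ = conv Jm (Gm n) + Gm n := by rw [conv_add_left, conv_cunit_left]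
      _ = (∑ k ∈ Finset.range (n+1), ((-1:ℂ))^k • cpow Jm (k+1)) + Gm n := by
          rw [Gm, conv_sum_right]
          congr 1
          refine Finset.sum_congr rfl fun k _ => ?_
          rw [conv_smul_right, cpow_succ]
      _ = _ := by
          rw [Gm, ← Finset.sum_add_distrib]
          refine Finset.sum_congr rfl fun k _ => ?_
          rw [smul_add]
  rw [h2]
  have h3 : ∀ k, ((-1:ℂ))^k • (cpow (Jm : H →ₗ[ℂ] H) (k+1) x + cpow (Jm : H →ₗ[ℂ] H) k x)
      = (((-1:ℂ))^k • cpow (Jm : H →ₗ[ℂ] H) k x)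
        - (((-1:ℂ))^(k+1) • cpow (Jm : H →ₗ[ℂ] H) (k+1) x) := by
    intro k
    rw [smul_add, pow_succ, mul_neg_one, neg_smul, sub_neg_eq_add]
    abel
  rw [LinearMap.sum_apply]
  simp only [LinearMap.smul_apply, LinearMap.add_apply]
  rw [Finset.sum_congr rfl fun k _ => h3 k, Finset.sum_range_sub']
  rw [Jp_vanish hgr (n+1) n (by omega) x hx, smul_zero, sub_zero]
  simp [cpow]

lemma conv_Sm_id (hgr : IsGradedConnected H ℬ) : conv (Sm hgr) LinearMap.id = cunit := by
  apply graded_ext hgr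
  intro n x hx
  have h1 : conv (Sm hgr) LinearMap.id x = conv (Gm n) LinearMap.id x :=
    conv_congr_on hgr n (fun i hi a ha => Sm_eq_on_le hgr hi ha) (fun _ _ _ _ => rfl) hx
  rw [h1, conv_Gm_id_apply hgr hx]

lemma conv_id_Sm (hgr : IsGradedConnected H ℬ) : conv LinearMap.id (Sm hgr) = cunit := by
  apply graded_ext hgr
  intro n x hx
  have h1 : conv LinearMap.id (Sm hgr) x = conv LinearMap.id (Gm n) x :=
    conv_congr_on hgr n (fun _ _ _ _ => rfl) (fun i hi a ha => Sm_eq_on_le hgr hi ha) hx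
  rw [h1, conv_id_Gm_apply hgr hx]

lemma comulAlgHom_toLinearMap :
    (Bialgebra.comulAlgHom ℂ H).toLinearMap = (Coalgebra.comul : H →ₗ[ℂ] H ⊗[ℂ] H) := rfl

lemma comul_comp_Sm (hgr : IsGradedConnected H ℬ) (hcc : IsCocommutative H) :
    (Coalgebra.comul : H →ₗ[ℂ] H ⊗[ℂ] H) ∘ₗ Sm hgr = Tm (Sm hgr) (Sm hgr) := by
  set Δ : H →ₗ[ℂ] H ⊗[ℂ] H := Coalgebra.comul with hΔ
  have hcomp : ∀ f : H →ₗ[ℂ] H, Δ ∘ₗ f = (Bialgebra.comulAlgHom ℂ H).toLinearMap ∘ₗ f :=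
    fun f => rfl
  have h1 : conv (Δ ∘ₗ Sm hgr) Δ = cunit := by
    have := algHom_comp_conv (Bialgebra.comulAlgHom ℂ H) (Sm hgr) LinearMap.id
    rw [conv_Sm_id hgr] at this
    rw [algHom_comp_cunit] at this
    simpa [comulAlgHom_toLinearMap] using this.symm
  have h2 : conv Δ (Δ ∘ₗ Sm hgr) = cunit := by
    have := algHom_comp_conv (Bialgebra.comulAlgHom ℂ H) LinearMap.id (Sm hgr)
    rw [conv_id_Sm hgr] at this
    rw [algHom_comp_cunit] at this
    simpa [comulAlgHom_toLinearMap] using this.symm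
  have h4 : conv Δ (Tm (Sm hgr) (Sm hgr)) = cunit := by
    have : conv (Tm LinearMap.id LinearMap.id) (Tm (Sm hgr) (Sm hgr))
        = Tm (conv LinearMap.id (Sm hgr)) (conv LinearMap.id (Sm hgr)) := Tm_conv hcc _ _ _ _
    rw [Tm_id_id, conv_id_Sm hgr, Tm_cunit_cunit] at this
    exact this
  calc Δ ∘ₗ Sm hgr = conv (Δ ∘ₗ Sm hgr) cunit := (conv_cunit_right _).symm
    _ = conv (Δ ∘ₗ Sm hgr) (conv Δ (Tm (Sm hgr) (Sm hgr))) := by rw [h4]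
    _ = conv (conv (Δ ∘ₗ Sm hgr) Δ) (Tm (Sm hgr) (Sm hgr)) := (conv_assoc _ _ _).symm
    _ = conv cunit (Tm (Sm hgr) (Sm hgr)) := by rw [h1]
    _ = Tm (Sm hgr) (Sm hgr) := conv_cunit_left _

/-- The grading operator `x ↦ n • x` on `ℬ n`. -/
noncomputable def Em (hgr : IsGradedConnected H ℬ) : H →ₗ[ℂ] H :=
  glue hgr (fun n => ((n : ℂ) • (ℬ n).subtype : ℬ n →ₗ[ℂ] H))

lemma Em_eq (hgr : IsGradedConnected H ℬ) {n : ℕ} {x : H} (hx : x ∈ ℬ n) :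
    Em hgr x = (n : ℂ) • x :=
  glue_apply hgr _ hx

lemma Em_isGr (hgr : IsGradedConnected H ℬ) : IsGr ℬ (Em hgr) := by
  intro n x hx
  rw [Em_eq hgr hx]
  exact Submodule.smul_mem _ _ hx

lemma comul_comp_Em (hgr : IsGradedConnected H ℬ) :
    (Coalgebra.comul : H →ₗ[ℂ] H ⊗[ℂ] H) ∘ₗ Em hgr
      = Tm (Em hgr) LinearMap.id + Tm LinearMap.id (Em hgr) := by
  apply graded_ext hgr
  intro n x hx
  obtain ⟨w, hw, hcom⟩ := exists_comul_repr hgr hx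
  have hL : (Coalgebra.comul (R := ℂ)) (Em hgr x) = (n : ℂ) • Coalgebra.comul (R := ℂ) x := by
    rw [Em_eq hgr hx, map_smul]
  have hR : ∀ p : ℕ × ℕ, TensorProduct.map (Em hgr) LinearMap.id (w p)
      + TensorProduct.map LinearMap.id (Em hgr) (w p) = ((p.1 + p.2 : ℕ) : ℂ) • w p := by
    intro p
    refine range_map_cases (P := fun z => TensorProduct.map (Em hgr) LinearMap.id z
      + TensorProduct.map LinearMap.id (Em hgr) z = ((p.1 + p.2 : ℕ) : ℂ) • z) ?_ ?_ ?_ (hw p)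
    · simp
    · intro u v hu hv
      rw [map_add, map_add, smul_add, ← hu, ← hv]; abel
    · intro a ha b hb
      simp only [TensorProduct.map_tmul, LinearMap.id_coe, id_eq, Em_eq hgr ha, Em_eq hgr hb,
        TensorProduct.smul_tmul', TensorProduct.tmul_smul]
      rw [← TensorProduct.add_tmul, ← add_smul]
      norm_cast
  have : ∀ p ∈ Finset.HasAntidiagonal.antidiagonal n, TensorProduct.map (Em hgr) LinearMap.id (w p)
      + TensorProduct.map LinearMap.id (Em hgr) (w p) = (n : ℂ) • w p := by
    intro p hp
    have hpn : p.1 + p.2 = n := Finset.HasAntidiagonal.mem_antidiagonal.mp hp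
    rw [hR p, hpn]
  simp only [LinearMap.comp_apply, LinearMap.add_apply, Tm, hcom, map_sum, hL, Finset.smul_sum]
  rw [← Finset.sum_add_distrib]
  exact (Finset.sum_congr rfl this).symm

/-- The Dynkin operator `S ⋆ E`. -/
noncomputable def Dyn (hgr : IsGradedConnected H ℬ) : H →ₗ[ℂ] H := conv (Sm hgr) (Em hgr)

lemma Dyn_isGr (hgr : IsGradedConnected H ℬ) : IsGr ℬ (Dyn hgr) :=
  conv_isGr hgr (Sm_isGr hgr) (Em_isGr hgr)

lemma comul_comp_Dyn (hgr : IsGradedConnected H ℬ) (hcc : IsCocommutative H) :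
    (Coalgebra.comul : H →ₗ[ℂ] H ⊗[ℂ] H) ∘ₗ Dyn hgr
      = Tm (Dyn hgr) cunit + Tm cunit (Dyn hgr) := by
  have h0 := algHom_comp_conv (Bialgebra.comulAlgHom ℂ H) (Sm hgr) (Em hgr)
  rw [comulAlgHom_toLinearMap] at h0
  calc (Coalgebra.comul : H →ₗ[ℂ] H ⊗[ℂ] H) ∘ₗ Dyn hgr
      = conv ((Coalgebra.comul : H →ₗ[ℂ] H ⊗[ℂ] H) ∘ₗ Sm hgr)
          ((Coalgebra.comul : H →ₗ[ℂ] H ⊗[ℂ] H) ∘ₗ Em hgr) := h0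
    _ = conv (Tm (Sm hgr) (Sm hgr)) (Tm (Em hgr) LinearMap.id + Tm LinearMap.id (Em hgr)) := by
        rw [comul_comp_Sm hgr hcc, comul_comp_Em hgr]
    _ = conv (Tm (Sm hgr) (Sm hgr)) (Tm (Em hgr) LinearMap.id)
        + conv (Tm (Sm hgr) (Sm hgr)) (Tm LinearMap.id (Em hgr)) := conv_add_right _ _ _
    _ = Tm (conv (Sm hgr) (Em hgr)) (conv (Sm hgr) LinearMap.id)
        + Tm (conv (Sm hgr) LinearMap.id) (conv (Sm hgr) (Em hgr)) := by
        rw [Tm_conv hcc, Tm_conv hcc]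
    _ = Tm (Dyn hgr) cunit + Tm cunit (Dyn hgr) := by
        rw [conv_Sm_id hgr]; rfl

lemma Dyn_primitive (hgr : IsGradedConnected H ℬ) (hcc : IsCocommutative H) (x : H) :
    Coalgebra.comul (R := ℂ) (Dyn hgr x) = Dyn hgr x ⊗ₜ[ℂ] 1 + (1:H) ⊗ₜ[ℂ] Dyn hgr x := by
  have := LinearMap.congr_fun (comul_comp_Dyn hgr hcc) x
  simpa [Tm_cunit_right, Tm_cunit_left] using this

end Graded
end P42
namespace P42
section Decomp
open Coalgebra TensorProduct PaperGradedBialg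

variable {H : Type} [Ring H] [Bialgebra ℂ H] {ℬ : ℕ → Submodule ℂ H}

/-- The submodule of decomposable elements of degree `n`. -/
noncomputable def Dec (ℬ : ℕ → Submodule ℂ H) (n : ℕ) : Submodule ℂ H :=
  ⨆ (p : ℕ × ℕ) (_ : p.1 + p.2 = n ∧ 0 < p.1 ∧ 0 < p.2), (ℬ p.1 * ℬ p.2)

lemma mem_Dec {n : ℕ} {p : ℕ × ℕ} (hp : p.1 + p.2 = n ∧ 0 < p.1 ∧ 0 < p.2) {z : H}
    (hz : z ∈ ℬ p.1 * ℬ p.2) : z ∈ Dec ℬ n :=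
  Submodule.mem_iSup_of_mem p (Submodule.mem_iSup_of_mem hp hz)

/-- counit on the left tensor factor. -/
noncomputable def epsL : H ⊗[ℂ] H →ₗ[ℂ] H :=
  (TensorProduct.lid ℂ H).toLinearMap ∘ₗ
    ((Coalgebra.counit : H →ₗ[ℂ] ℂ).rTensor H)

noncomputable def epsR : H ⊗[ℂ] H →ₗ[ℂ] H :=
  (TensorProduct.rid ℂ H).toLinearMap ∘ₗ
    ((Coalgebra.counit : H →ₗ[ℂ] ℂ).lTensor H)

@[simp] lemma epsL_tmul (a b : H) :
    epsL (a ⊗ₜ[ℂ] b) = (Coalgebra.counit (R := ℂ) a) • b := by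
  simp [epsL, LinearMap.rTensor_tmul]

@[simp] lemma epsR_tmul (a b : H) :
    epsR (a ⊗ₜ[ℂ] b) = (Coalgebra.counit (R := ℂ) b) • a := by
  simp [epsR, LinearMap.lTensor_tmul]

lemma epsL_comul (x : H) : epsL (Coalgebra.comul (R := ℂ) x) = x := by
  simp [epsL, Coalgebra.rTensor_counit_comul]

lemma epsR_comul (x : H) : epsR (Coalgebra.comul (R := ℂ) x) = x := by
  simp [epsR, Coalgebra.lTensor_counit_comul]

lemma left_deg0_form (hgr : IsGradedConnected H ℬ) {m : ℕ} {w : H ⊗[ℂ] H}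
    (hw : w ∈ LinearMap.range (TensorProduct.map (ℬ 0).subtype (ℬ m).subtype)) :
    ∃ b, b ∈ ℬ m ∧ w = (1:H) ⊗ₜ[ℂ] b := by
  refine range_map_cases (P := fun z => ∃ b, b ∈ ℬ m ∧ z = (1:H) ⊗ₜ[ℂ] b) ?_ ?_ ?_ hw
  · exact ⟨0, Submodule.zero_mem _, by simp⟩
  · rintro u v ⟨b, hb, rfl⟩ ⟨b', hb', rfl⟩
    exact ⟨b + b', add_mem hb hb', by rw [TensorProduct.tmul_add]⟩
  · intro a ha b hb
    refine ⟨(Coalgebra.counit (R := ℂ) a) • b, Submodule.smul_mem _ _ hb, ?_⟩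
    conv_lhs => rw [← deg0_eq hgr ha]
    rw [TensorProduct.smul_tmul]

lemma right_deg0_form (hgr : IsGradedConnected H ℬ) {m : ℕ} {w : H ⊗[ℂ] H}
    (hw : w ∈ LinearMap.range (TensorProduct.map (ℬ m).subtype (ℬ 0).subtype)) :
    ∃ a, a ∈ ℬ m ∧ w = a ⊗ₜ[ℂ] (1:H) := by
  refine range_map_cases (P := fun z => ∃ a, a ∈ ℬ m ∧ z = a ⊗ₜ[ℂ] (1:H)) ?_ ?_ ?_ hw
  · exact ⟨0, Submodule.zero_mem _, by simp⟩
  · rintro u v ⟨a, ha, rfl⟩ ⟨a', ha', rfl⟩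
    exact ⟨a + a', add_mem ha ha', by rw [TensorProduct.add_tmul]⟩
  · intro a ha b hb
    refine ⟨(Coalgebra.counit (R := ℂ) b) • a, Submodule.smul_mem _ _ ha, ?_⟩
    conv_lhs => rw [← deg0_eq hgr hb]
    rw [TensorProduct.tmul_smul, TensorProduct.smul_tmul']

lemma Dyn_decomp (hgr : IsGradedConnected H ℬ) {n : ℕ} (hn : 0 < n) {x : H} (hx : x ∈ ℬ n) :
    Dyn hgr x - (n : ℂ) • x ∈ Dec ℬ n := by
  classical
  obtain ⟨w, hw, hcom⟩ := exists_comul_repr hgr hx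
  -- split off the two extreme terms
  have h0n : ((0:ℕ), n) ∈ Finset.HasAntidiagonal.antidiagonal n := by simp
  have hn0 : ((n, (0:ℕ))) ∈ Finset.HasAntidiagonal.antidiagonal n := by simp
  have hne : ((0:ℕ), n) ≠ (n, (0:ℕ)) := by
    intro h; injection h with h1 h2; omega
  set s := ((Finset.HasAntidiagonal.antidiagonal n).erase ((0:ℕ), n)).erase (n, (0:ℕ)) with hs
  have hsplit : Coalgebra.comul (R := ℂ) x = w ((0:ℕ), n) + w (n, (0:ℕ)) + ∑ p ∈ s, w p := by
    rw [hcom, add_assoc]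
    rw [← Finset.add_sum_erase _ w h0n]
    congr 1
    rw [← Finset.add_sum_erase _ w (Finset.mem_erase.mpr ⟨(Ne.symm hne), hn0⟩)]
  -- elements of s have both components positive
  have hscond : ∀ p ∈ s, p.1 + p.2 = n ∧ 0 < p.1 ∧ 0 < p.2 := by
    intro p hp
    simp only [hs, Finset.mem_erase, Finset.HasAntidiagonal.mem_antidiagonal] at hp
    obtain ⟨hp1, hp2, hp3⟩ := hp
    refine ⟨hp3, ?_, ?_⟩
    · rcases Nat.eq_zero_or_pos p.1 with h | h
      · exact absurd (Prod.ext_iff.mpr ⟨h, by omega⟩) hp2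
      · exact h
    · rcases Nat.eq_zero_or_pos p.2 with h | h
      · exact absurd (Prod.ext_iff.mpr ⟨by omega, h⟩) hp1
      · exact h
  -- identify the extreme terms
  obtain ⟨b₀, hb₀, hw0⟩ := left_deg0_form hgr (hw ((0:ℕ), n))
  obtain ⟨a₀, ha₀, hwn⟩ := right_deg0_form hgr (hw (n, (0:ℕ)))
  have hepsw : ∀ p ∈ s, epsL (w p) = 0 := by
    intro p hp
    obtain ⟨-, hp1, -⟩ := hscond p hp
    refine range_map_cases (P := fun z => epsL z = 0) ?_ ?_ ?_ (hw p)
    · simp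
    · intro u v hu hv; rw [map_add, hu, hv, add_zero]
    · intro a ha b hb
      rw [epsL_tmul, hgr.2.2.2.2 p.1 hp1 a ha, zero_smul]
  have hb0x : b₀ = x := by
    have := epsL_comul (H := H) x  -- epsL (comul x) = x
    rw [hsplit] at this
    rw [map_add, map_add, map_sum, hw0, hwn] at this
    rw [Finset.sum_congr rfl hepsw, Finset.sum_const, smul_zero] at this
    rw [epsL_tmul, epsL_tmul, Bialgebra.counit_one, one_smul] at this
    rw [hgr.2.2.2.2 n hn a₀ ha₀, zero_smul, add_zero, add_zero] at this
    exact this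
  -- compute Dyn x
  rw [hw0, hb0x, hwn] at hsplit
  have hDyn : Dyn hgr x = LinearMap.mul' ℂ H (TensorProduct.map (Sm hgr) (Em hgr)
      (Coalgebra.comul (R := ℂ) x)) := rfl
  rw [hsplit, map_add, map_add, map_add, map_add] at hDyn
  have e1 : LinearMap.mul' ℂ H (TensorProduct.map (Sm hgr) (Em hgr) ((1:H) ⊗ₜ[ℂ] x))
      = (n : ℂ) • x := by
    simp only [TensorProduct.map_tmul, LinearMap.mul'_apply, Sm_one hgr, Em_eq hgr hx, one_mul]
  have e2 : LinearMap.mul' ℂ H (TensorProduct.map (Sm hgr) (Em hgr) (a₀ ⊗ₜ[ℂ] (1:H))) = 0 := by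
    have : Em hgr (1:H) = 0 := by
      rw [Em_eq hgr (one_mem_deg0 hgr)]; simp
    simp only [TensorProduct.map_tmul, LinearMap.mul'_apply, this, mul_zero]
  have e3 : LinearMap.mul' ℂ H (TensorProduct.map (Sm hgr) (Em hgr) (∑ p ∈ s, w p)) ∈ Dec ℬ n := by
    rw [map_sum, map_sum]
    refine Submodule.sum_mem _ fun p hp => ?_
    refine mem_Dec (hscond p hp) ?_
    refine range_map_cases (P := fun z => LinearMap.mul' ℂ H
      (TensorProduct.map (Sm hgr) (Em hgr) z) ∈ ℬ p.1 * ℬ p.2) ?_ ?_ ?_ (hw p)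
    · simp
    · intro u v hu hv; rw [map_add, map_add]; exact add_mem hu hv
    · intro a ha b hb
      simp only [TensorProduct.map_tmul, LinearMap.mul'_apply]
      exact Submodule.mul_mem_mul (Sm_isGr hgr _ _ ha) (Em_isGr hgr _ _ hb)
  rw [e1, e2] at hDyn
  rw [hDyn]
  have : ((n:ℂ) • x + 0 + LinearMap.mul' ℂ H (TensorProduct.map (Sm hgr) (Em hgr) (∑ p ∈ s, w p)))
      - (n:ℂ) • x = LinearMap.mul' ℂ H (TensorProduct.map (Sm hgr) (Em hgr) (∑ p ∈ s, w p)) := by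
    abel
  rw [this]
  exact e3

end Decomp
end P42
namespace P42
section Words
open PaperGradedBialg

variable {H : Type} [Ring H] [Bialgebra ℂ H] {ℬ : ℕ → Submodule ℂ H}
variable {X : Type}

/-- Total degree of a word. -/
def wD (d : X → ℕ) (l : List X) : ℕ := (l.map d).sum

/-- Product of a word. -/
def wP (u : X → H) (l : List X) : H := (l.map u).prod

@[simp] lemma wD_nil (d : X → ℕ) : wD d [] = 0 := rfl
@[simp] lemma wD_cons (d : X → ℕ) (x : X) (l : List X) : wD d (x :: l) = d x + wD d l := by
  simp [wD]
@[simp] lemma wP_nil (u : X → H) : wP u [] = 1 := rfl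
@[simp] lemma wP_cons (u : X → H) (x : X) (l : List X) : wP u (x :: l) = u x * wP u l := by
  simp [wP]
lemma wD_append (d : X → ℕ) (l₁ l₂ : List X) : wD d (l₁ ++ l₂) = wD d l₁ + wD d l₂ := by
  simp [wD]
lemma wP_append (u : X → H) (l₁ l₂ : List X) : wP u (l₁ ++ l₂) = wP u l₁ * wP u l₂ := by
  simp [wP]

lemma wP_mem (hgr : IsGradedConnected H ℬ) {u : X → H} {d : X → ℕ}
    (hu : ∀ x, u x ∈ ℬ (d x)) (l : List X) : wP u l ∈ ℬ (wD d l) := by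
  induction l with
  | nil => simpa using one_mem_deg0 hgr
  | cons x l ih =>
      rw [wP_cons, wD_cons]
      exact mul_mem_of hgr (hu x) ih

/-- Span of the degree-`n` words. -/
noncomputable def WSub (u : X → H) (d : X → ℕ) (n : ℕ) : Submodule ℂ H :=
  Submodule.span ℂ {z | ∃ l, wD d l = n ∧ wP u l = z}

lemma wP_mem_WSub {u : X → H} {d : X → ℕ} {n : ℕ} (l : List X) (hl : wD d l = n) :
    wP u l ∈ WSub u d n :=
  Submodule.subset_span ⟨l, hl, rfl⟩

lemma WSub_le (hgr : IsGradedConnected H ℬ) {u : X → H} {d : X → ℕ}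
    (hu : ∀ x, u x ∈ ℬ (d x)) (n : ℕ) : WSub u d n ≤ ℬ n := by
  rw [WSub, Submodule.span_le]
  rintro z ⟨l, hl, rfl⟩
  exact hl ▸ wP_mem hgr hu l

lemma WSub_mul (u : X → H) (d : X → ℕ) (a b : ℕ) :
    WSub u d a * WSub u d b ≤ WSub u d (a + b) := by
  rw [WSub, WSub, WSub, Submodule.span_mul_span, Submodule.span_le]
  rintro z hz
  obtain ⟨s, hs, t, ht, rfl⟩ := Set.mem_mul.mp hz
  obtain ⟨l₁, hl₁, rfl⟩ := hs
  obtain ⟨l₂, hl₂, rfl⟩ := ht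
  exact Submodule.subset_span ⟨l₁ ++ l₂, by rw [wD_append, hl₁, hl₂], wP_append u l₁ l₂⟩

lemma WSub_eq_of_span_top (hgr : IsGradedConnected H ℬ) {u : X → H} {d : X → ℕ}
    (hu : ∀ x, u x ∈ ℬ (d x)) (htop : Submodule.span ℂ (Set.range (wP u)) = ⊤) (n : ℕ) :
    WSub u d n = ℬ n := by
  refine le_antisymm (WSub_le hgr hu n) ?_
  intro x hx
  have hsup : (⊤ : Submodule ℂ H) ≤ ⨆ m, WSub u d m := by
    rw [← htop, Submodule.span_le]
    rintro z ⟨l, rfl⟩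
    exact Submodule.mem_iSup_of_mem (wD d l) (wP_mem_WSub l rfl)
  obtain ⟨f, hf, hsum⟩ := (Submodule.mem_iSup_iff_exists_finsupp _ _).mp (hsup trivial :
    x ∈ ⨆ m, WSub u d m)
  have hxn : x - f n ∈ ℬ n := sub_mem hx (WSub_le hgr hu n (hf n))
  have hxs : x - f n = ∑ m ∈ f.support.erase n, f m := by
    rcases em (n ∈ f.support) with h | h
    · rw [← hsum, Finsupp.sum, ← Finset.add_sum_erase _ _ h]; abel
    · rw [Finset.erase_eq_of_notMem h, ← hsum, Finsupp.sum,
        Finsupp.notMem_support_iff.mp h, sub_zero]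
  have h2 : x - f n ∈ ⨆ (m) (_ : m ≠ n), ℬ m := by
    rw [hxs]
    refine Submodule.sum_mem _ fun m hm => ?_
    have hmne : m ≠ n := (Finset.mem_erase.mp hm).1
    exact Submodule.mem_iSup_of_mem m (Submodule.mem_iSup_of_mem hmne
      (WSub_le hgr hu m (hf m)))
  have hd : Disjoint (ℬ n) (⨆ (m) (_ : m ≠ n), ℬ m) :=
    iSupIndep_def.mp hgr.1.submodule_iSupIndep n
  have : x - f n = 0 := by
    have := hd.le_bot (Submodule.mem_inf.mpr ⟨hxn, h2⟩ : x - f n ∈ _ ⊓ _)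
    simpa using this
  have hxfn : x = f n := by rwa [sub_eq_zero] at this
  rw [hxfn]
  exact hf n

lemma lift_freeMonoid_basis (u : X → H) (w : FreeMonoid X) :
    FreeAlgebra.lift ℂ u (FreeAlgebra.basisFreeMonoid ℂ X w) = wP u (FreeMonoid.toList w) := by
  have hb : (Finsupp.basisSingleOne : Module.Basis (FreeMonoid X) ℂ (FreeMonoid X →₀ ℂ)) w
      = Finsupp.single w (1:ℂ) := congrFun Finsupp.coe_basisSingleOne w
  have h1 : FreeAlgebra.basisFreeMonoid ℂ X w
      = (FreeAlgebra.equivMonoidAlgebraFreeMonoid (R := ℂ) (X := X)).symm.toLinearEquiv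
          (MonoidAlgebra.single w 1) := by
    rw [FreeAlgebra.basisFreeMonoid, Module.Basis.map_apply, hb]
    rfl
  rw [h1]
  have h2 : (FreeAlgebra.equivMonoidAlgebraFreeMonoid (R := ℂ) (X := X)).symm.toLinearEquiv
      (MonoidAlgebra.single w 1)
      = FreeMonoid.lift (FreeAlgebra.ι ℂ) w := by
    show (MonoidAlgebra.lift ℂ (FreeAlgebra ℂ X) (FreeMonoid X))
      (FreeMonoid.lift (FreeAlgebra.ι ℂ)) (MonoidAlgebra.single w 1) = _
    rw [MonoidAlgebra.lift_single, one_smul]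
  rw [h2, FreeMonoid.lift_apply]
  rw [map_list_prod]
  rw [List.map_map]
  congr 1
  ext x
  simp [FreeAlgebra.lift_ι_apply]

/-- The basis of words attached to a free generating family. -/
noncomputable def wordBasis (u : X → H) (hbij : Function.Bijective (FreeAlgebra.lift ℂ u)) :
    Module.Basis (List X) ℂ H :=
  ((FreeAlgebra.basisFreeMonoid ℂ X).map
    (LinearEquiv.ofBijective (FreeAlgebra.lift ℂ u).toLinearMap hbij)).reindex
      FreeMonoid.toList

lemma wordBasis_apply (u : X → H) (hbij : Function.Bijective (FreeAlgebra.lift ℂ u))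
    (l : List X) : wordBasis u hbij l = wP u l := by
  rw [wordBasis, Module.Basis.reindex_apply, Module.Basis.map_apply]
  exact lift_freeMonoid_basis u _

lemma wordBasis_coe (u : X → H) (hbij : Function.Bijective (FreeAlgebra.lift ℂ u)) :
    ⇑(wordBasis u hbij) = wP u := funext (wordBasis_apply u hbij)

lemma span_range_wP (u : X → H) (hbij : Function.Bijective (FreeAlgebra.lift ℂ u)) :
    Submodule.span ℂ (Set.range (wP u)) = ⊤ := by
  have h := (wordBasis u hbij).span_eq
  rwa [wordBasis_coe] at h

lemma words_indep (u : X → H) (hbij : Function.Bijective (FreeAlgebra.lift ℂ u)) :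
    LinearIndependent ℂ (wP u : List X → H) := by
  have h := (wordBasis u hbij).linearIndependent
  rwa [wordBasis_coe] at h

lemma range_restrict_eq (u : X → H) (d : X → ℕ) (n : ℕ) :
    Set.range (fun l : {l : List X // wD d l = n} => wP u l.1)
      = {z | ∃ l, wD d l = n ∧ wP u l = z} := by
  ext z
  constructor
  · rintro ⟨⟨l, hl⟩, rfl⟩; exact ⟨l, hl, rfl⟩
  · rintro ⟨l, hl, rfl⟩; exact ⟨⟨l, hl⟩, rfl⟩

lemma span_restrict_eq_WSub (u : X → H) (d : X → ℕ) (n : ℕ) :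
    Submodule.span ℂ (Set.range (fun l : {l : List X // wD d l = n} => wP u l.1))
      = WSub u d n := by
  rw [range_restrict_eq, WSub]

/-- Module.Basis of the degree-`n` component given by degree-`n` words. -/
noncomputable def degBasis (hgr : IsGradedConnected H ℬ) (u : X → H) (d : X → ℕ)
    (hu : ∀ x, u x ∈ ℬ (d x)) (hbij : Function.Bijective (FreeAlgebra.lift ℂ u)) (n : ℕ) :
    Module.Basis {l : List X // wD d l = n} ℂ (ℬ n) :=
  (Module.Basis.span ((words_indep u hbij).comp (Subtype.val : {l : List X // wD d l = n} → List X)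
    Subtype.val_injective)).map
    (LinearEquiv.ofEq _ _ (by
      rw [show (wP u ∘ (Subtype.val : {l : List X // wD d l = n} → List X))
        = (fun l : {l : List X // wD d l = n} => wP u l.1) from rfl]
      rw [span_restrict_eq_WSub]
      exact WSub_eq_of_span_top hgr hu (span_range_wP u hbij) n))

lemma finrank_eq_card_words (hgr : IsGradedConnected H ℬ) (u : X → H) (d : X → ℕ)
    (hu : ∀ x, u x ∈ ℬ (d x)) (hbij : Function.Bijective (FreeAlgebra.lift ℂ u)) (n : ℕ)
    [FiniteDimensional ℂ (ℬ n)] :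
    Module.finrank ℂ (ℬ n) = Nat.card {l : List X // wD d l = n} := by
  haveI : Fintype {l : List X // wD d l = n} :=
    FiniteDimensional.fintypeBasisIndex (degBasis hgr u d hu hbij n)
  rw [Module.finrank_eq_card_basis (degBasis hgr u d hu hbij n), Nat.card_eq_fintype_card]

lemma words_finite (hgr : IsGradedConnected H ℬ) (u : X → H) (d : X → ℕ)
    (hu : ∀ x, u x ∈ ℬ (d x)) (hbij : Function.Bijective (FreeAlgebra.lift ℂ u)) (n : ℕ)
    [FiniteDimensional ℂ (ℬ n)] : Finite {l : List X // wD d l = n} := by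
  haveI : Fintype {l : List X // wD d l = n} :=
    FiniteDimensional.fintypeBasisIndex (degBasis hgr u d hu hbij n)
  infer_instance

end Words
end P42
namespace P42
section LiftBij
open PaperGradedBialg

variable {H : Type} [Ring H] [Bialgebra ℂ H] {ℬ : ℕ → Submodule ℂ H} {X : Type}

lemma lift_bijective_of (hgr : IsGradedConnected H ℬ) {u : X → H} {d : X → ℕ}
    (hu : ∀ x, u x ∈ ℬ (d x))
    (hWeq : ∀ n, WSub u d n = ℬ n)
    (hfin : ∀ n, Finite {l : List X // wD d l = n})
    (hcard : ∀ n, Nat.card {l : List X // wD d l = n} = Module.finrank ℂ (ℬ n)) :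
    Function.Bijective (FreeAlgebra.lift ℂ u) := by
  classical
  haveI : ∀ n, Fintype {l : List X // wD d l = n} := fun n => @Fintype.ofFinite _ (hfin n)
  let v : (n : ℕ) → {l : List X // wD d l = n} → (ℬ n) :=
    fun n l => ⟨wP u l.1, by have := wP_mem hgr hu l.1; rwa [l.2] at this⟩
  have hspan : ∀ n, Submodule.span ℂ (Set.range (v n)) = (⊤ : Submodule ℂ (ℬ n)) := by
    intro n
    apply Submodule.map_injective_of_injective (ℬ n).injective_subtype
    rw [Submodule.map_span, Submodule.map_subtype_top]
    have himg : (ℬ n).subtype '' Set.range (v n)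
        = Set.range (fun l : {l : List X // wD d l = n} => wP u l.1) := by
      ext z
      constructor
      · rintro ⟨y, ⟨l, rfl⟩, rfl⟩; exact ⟨l, rfl⟩
      · rintro ⟨l, rfl⟩; exact ⟨v n l, ⟨l, rfl⟩, rfl⟩
    rw [himg, span_restrict_eq_WSub, hWeq n]
  have hcards : ∀ n, Fintype.card {l : List X // wD d l = n} = Module.finrank ℂ (ℬ n) := by
    intro n
    rw [← Nat.card_eq_fintype_card, hcard n]
  let B : (n : ℕ) → Module.Basis {l : List X // wD d l = n} ℂ (ℬ n) := fun n =>
    basisOfTopLeSpanOfCardEqFinrank (v n) (le_of_eq (hspan n).symm) (hcards n)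
  have hB : ∀ n l, ((B n l : ℬ n) : H) = wP u l.1 := by
    intro n l
    have : B n l = v n l := congrFun (coe_basisOfTopLeSpanOfCardEqFinrank (v n) _ _) l
    rw [this]
  let Bg := hgr.1.collectedBasis B
  have hBg : ∀ a : Σ n, {l : List X // wD d l = n}, Bg a = wP u a.2.1 := by
    intro a
    have := congrFun (hgr.1.collectedBasis_coe B) a
    rw [show Bg a = ((B a.1 a.2 : ℬ a.1) : H) from this, hB]
  let ι : FreeMonoid X ≃ Σ n, {l : List X // wD d l = n} :=
    FreeMonoid.toList.trans (Equiv.sigmaFiberEquiv (wD d)).symm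
  have hkey : ∀ w, (FreeAlgebra.lift ℂ u).toLinearMap (FreeAlgebra.basisFreeMonoid ℂ X w)
      = Bg (ι w) := by
    intro w
    rw [AlgHom.toLinearMap_apply, lift_freeMonoid_basis, hBg]
    rfl
  have heq : (FreeAlgebra.lift ℂ u).toLinearMap
      = ((FreeAlgebra.basisFreeMonoid ℂ X).equiv Bg ι).toLinearMap := by
    apply (FreeAlgebra.basisFreeMonoid ℂ X).ext
    intro w
    rw [hkey w, LinearEquiv.coe_coe, Module.Basis.equiv_apply]
  have hbij2 : Function.Bijective ⇑((FreeAlgebra.lift ℂ u).toLinearMap) := by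
    rw [heq]
    exact ((FreeAlgebra.basisFreeMonoid ℂ X).equiv Bg ι).bijective
  exact hbij2

end LiftBij
end P42
namespace P42
section Count

variable {X X' : Type}

lemma wD_zero_iff {d : X → ℕ} (hd : ∀ x, 0 < d x) (l : List X) : wD d l = 0 ↔ l = [] := by
  cases l with
  | nil => simp
  | cons x t => simp only [wD_cons]; constructor
                · intro h; have := hd x; omega
                · intro h; exact absurd h (by simp)

lemma count_W0 {d : X → ℕ} (hd : ∀ x, 0 < d x) : Nat.card {l : List X // wD d l = 0} = 1 := by
  haveI : Unique {l : List X // wD d l = 0} :=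
    { default := ⟨[], rfl⟩
      uniq := fun l => Subtype.ext ((wD_zero_iff hd l.1).mp l.2) }
  exact Nat.card_unique

lemma card_cons {d : X → ℕ} {n : ℕ} (hn : n ≠ 0) :
    Nat.card {l : List X // wD d l = n}
      = Nat.card {q : X × List X // d q.1 + wD d q.2 = n} := by
  refine (Nat.card_congr (Equiv.ofBijective
    (fun q : {q : X × List X // d q.1 + wD d q.2 = n} =>
      (⟨q.1.1 :: q.1.2, by simpa using q.2⟩ : {l : List X // wD d l = n})) ⟨?_, ?_⟩)).symm
  · rintro ⟨⟨x, t⟩, h⟩ ⟨⟨x', t'⟩, h'⟩ hq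
    simp only [Subtype.mk.injEq, List.cons.injEq] at hq
    exact Subtype.ext (Prod.ext_iff.mpr ⟨hq.1, hq.2⟩)
  · rintro ⟨l, hl⟩
    cases l with
    | nil => exact absurd (by simpa using hl.symm) hn
    | cons x t => exact ⟨⟨(x, t), by simpa using hl⟩, rfl⟩

lemma card_pairs {d : X → ℕ} (hd : ∀ x, 0 < d x)
    (hfinF : ∀ k, Finite {x : X // d x = k}) (hfinW : ∀ k, Finite {l : List X // wD d l = k})
    {n : ℕ} :
    Nat.card {q : X × List X // d q.1 + wD d q.2 = n}
      = ∑ k ∈ Finset.Icc 1 n, Nat.card {x : X // d x = k} * Nat.card {l : List X // wD d l = n - k} := by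
  classical
  have E : {q : X × List X // d q.1 + wD d q.2 = n}
      ≃ Σ k : ↑(Finset.Icc 1 n), ({x : X // d x = ↑k} × {l : List X // wD d l = n - ↑k}) :=
    { toFun := fun q => ⟨⟨d q.1.1, Finset.mem_Icc.mpr ⟨hd q.1.1, by have := q.2; omega⟩⟩,
        ⟨q.1.1, rfl⟩, ⟨q.1.2, by have := q.2; show wD d q.1.2 = n - d q.1.1; omega⟩⟩
      invFun := fun a => ⟨(a.2.1.1, a.2.2.1), by
        have hk := Finset.mem_Icc.mp a.1.2
        have h1 := a.2.1.2
        have h2 := a.2.2.2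
        show d a.2.1.1 + wD d a.2.2.1 = n
        omega⟩
      left_inv := fun q => rfl
      right_inv := by
        rintro ⟨⟨k, hk⟩, ⟨x, hx⟩, ⟨t, ht⟩⟩
        simp only at hx
        subst hx
        rfl }
  rw [Nat.card_congr E]
  haveI : ∀ k, Fintype {x : X // d x = k} := fun k => @Fintype.ofFinite _ (hfinF k)
  haveI : ∀ k, Fintype {l : List X // wD d l = k} := fun k => @Fintype.ofFinite _ (hfinW k)
  rw [Nat.card_eq_fintype_card, Fintype.card_sigma]
  rw [← Finset.sum_coe_sort (Finset.Icc 1 n)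
    (fun k => Nat.card {x : X // d x = k} * Nat.card {l : List X // wD d l = n - k})]
  refine Finset.sum_congr rfl fun k _ => ?_
  rw [Fintype.card_prod, Nat.card_eq_fintype_card, Nat.card_eq_fintype_card]

lemma card_W_rec {d : X → ℕ} (hd : ∀ x, 0 < d x)
    (hfinF : ∀ k, Finite {x : X // d x = k}) (hfinW : ∀ k, Finite {l : List X // wD d l = k})
    {n : ℕ} (hn : n ≠ 0) :
    Nat.card {l : List X // wD d l = n}
      = ∑ k ∈ Finset.Icc 1 n, Nat.card {x : X // d x = k} * Nat.card {l : List X // wD d l = n - k} := by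
  rw [card_cons hn, card_pairs hd hfinF hfinW]

lemma gen_count_eq {d : X → ℕ} {d' : X' → ℕ} (hd : ∀ x, 0 < d x) (hd' : ∀ x, 0 < d' x)
    (hfinF : ∀ k, Finite {x : X // d x = k}) (hfinF' : ∀ k, Finite {x : X' // d' x = k})
    (hfinW : ∀ k, Finite {l : List X // wD d l = k})
    (hfinW' : ∀ k, Finite {l : List X' // wD d' l = k})
    (hW : ∀ k, Nat.card {l : List X // wD d l = k} = Nat.card {l : List X' // wD d' l = k}) :
    ∀ n, Nat.card {x : X // d x = n} = Nat.card {x' : X' // d' x' = n} := by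
  intro n
  induction n using Nat.strong_induction_on with
  | _ n IH =>
    match n with
    | 0 =>
        haveI : IsEmpty {x : X // d x = 0} := ⟨fun x => by have := hd x.1; omega⟩
        haveI : IsEmpty {x : X' // d' x = 0} := ⟨fun x => by have := hd' x.1; omega⟩
        rw [Nat.card_of_isEmpty, Nat.card_of_isEmpty]
    | (m+1) =>
        have h1 := card_W_rec hd hfinF hfinW (n := m+1) (by omega)
        have h1' := card_W_rec hd' hfinF' hfinW' (n := m+1) (by omega)
        rw [show Finset.Icc 1 (m+1) = insert (m+1) (Finset.Icc 1 m) from by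
          ext k; simp [Finset.mem_Icc]; omega] at h1 h1'
        rw [Finset.sum_insert (by simp [Finset.mem_Icc])] at h1 h1'
        rw [Nat.sub_self, count_W0 hd, mul_one] at h1
        rw [Nat.sub_self, count_W0 hd', mul_one] at h1'
        have hsums : ∑ k ∈ Finset.Icc 1 m,
            Nat.card {x : X // d x = k} * Nat.card {l : List X // wD d l = m + 1 - k}
            = ∑ k ∈ Finset.Icc 1 m,
            Nat.card {x : X' // d' x = k} * Nat.card {l : List X' // wD d' l = m + 1 - k} := by
          refine Finset.sum_congr rfl fun k hk => ?_
          have hkm : k < m + 1 := by have := (Finset.mem_Icc.mp hk).2; omega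
          rw [IH k hkm, hW (m + 1 - k)]
        have := hW (m+1)
        omega

lemma exists_deg_equiv {d : X → ℕ} {d' : X' → ℕ}
    (hfinF : ∀ k, Finite {x : X // d x = k}) (hfinF' : ∀ k, Finite {x : X' // d' x = k})
    (hcount : ∀ n, Nat.card {x : X // d x = n} = Nat.card {x' : X' // d' x' = n}) :
    ∃ σ : X ≃ X', ∀ x, d' (σ x) = d x := by
  have hne : ∀ n, Nonempty ({x : X // d x = n} ≃ {x' : X' // d' x' = n}) := by
    intro n
    haveI := Fintype.ofFinite {x : X // d x = n}
    haveI := Fintype.ofFinite {x' : X' // d' x' = n}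
    exact ⟨Fintype.equivOfCardEq (by
      rw [← Nat.card_eq_fintype_card, ← Nat.card_eq_fintype_card, hcount n])⟩
  have e := fun n => Classical.choice (hne n)
  refine ⟨(Equiv.sigmaFiberEquiv d).symm.trans ((Equiv.sigmaCongrRight e).trans
    (Equiv.sigmaFiberEquiv d')), fun x => ?_⟩
  simp only [Equiv.trans_apply]
  have h1 : (Equiv.sigmaFiberEquiv d).symm x = ⟨d x, ⟨x, rfl⟩⟩ := rfl
  rw [h1]
  have h2 : (Equiv.sigmaCongrRight e) (⟨d x, ⟨x, rfl⟩⟩ : Σ n, {x : X // d x = n})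
      = ⟨d x, e (d x) ⟨x, rfl⟩⟩ := rfl
  rw [h2]
  exact (e (d x) ⟨x, rfl⟩).2

end Count
end P42
namespace P42
section Package
open Coalgebra TensorProduct PaperGradedBialg

variable {H : Type} [Ring H] [Bialgebra ℂ H] {ℬ : ℕ → Submodule ℂ H}

lemma side_package (hgr : IsGradedConnected H ℬ) (hcc : IsCocommutative H) (F : Set H)
    (hF : IsFreeOnHomogeneous H ℬ F) (hfd : ∀ n, FiniteDimensional ℂ (ℬ n)) :
    ∃ (d : ↥F → ℕ) (g : ↥F → H),
      (∀ x, 0 < d x) ∧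
      (∀ x, g x ∈ ℬ (d x)) ∧
      (∀ x, Coalgebra.comul (R := ℂ) (g x) = g x ⊗ₜ[ℂ] (1:H) + (1:H) ⊗ₜ[ℂ] g x) ∧
      Function.Bijective (FreeAlgebra.lift ℂ g) ∧
      (∀ n, WSub g d n = ℬ n) ∧
      (∀ n, Finite {l : List ↥F // wD d l = n}) ∧
      (∀ n, Finite {x : ↥F // d x = n}) ∧
      (∀ n, Nat.card {l : List ↥F // wD d l = n} = Module.finrank ℂ (ℬ n)) := by
  classical
  set d : ↥F → ℕ := fun x => Classical.choose (hF.1 x.1 x.2) with hd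
  have hdspec : ∀ x : ↥F, 0 < d x ∧ (x : H) ∈ ℬ (d x) :=
    fun x => Classical.choose_spec (hF.1 x.1 x.2)
  have hd0 : ∀ x, 0 < d x := fun x => (hdspec x).1
  have hdmem : ∀ x : ↥F, (x : H) ∈ ℬ (d x) := fun x => (hdspec x).2
  have hbij : Function.Bijective (FreeAlgebra.lift ℂ (Subtype.val : ↥F → H)) := hF.2
  -- counting data (from the original generators)
  have hcardW : ∀ n, Nat.card {l : List ↥F // wD d l = n} = Module.finrank ℂ (ℬ n) := by
    intro n
    haveI := hfd n
    exact (finrank_eq_card_words hgr _ d hdmem hbij n).symm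
  have hfinW : ∀ n, Finite {l : List ↥F // wD d l = n} := by
    intro n
    haveI := hfd n
    exact words_finite hgr _ d hdmem hbij n
  have hfinF : ∀ n, Finite {x : ↥F // d x = n} := by
    intro n
    haveI := hfinW n
    refine Finite.of_injective (fun x : {x : ↥F // d x = n} =>
      (⟨[x.1], by simp [x.2]⟩ : {l : List ↥F // wD d l = n})) ?_
    rintro ⟨x, hx⟩ ⟨y, hy⟩ h
    simp only [Subtype.mk.injEq, List.cons.injEq] at h
    exact Subtype.ext h.1
  -- the primitive generators
  set g : ↥F → H := fun x => ((d x : ℂ))⁻¹ • Dyn hgr (x : H) with hgdef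
  have hg_mem : ∀ x, g x ∈ ℬ (d x) :=
    fun x => Submodule.smul_mem _ _ (Dyn_isGr hgr _ _ (hdmem x))
  have hg_prim : ∀ x, Coalgebra.comul (R := ℂ) (g x)
      = g x ⊗ₜ[ℂ] (1:H) + (1:H) ⊗ₜ[ℂ] g x := by
    intro x
    rw [hgdef]
    simp only [map_smul, Dyn_primitive hgr hcc]
    rw [smul_add, TensorProduct.smul_tmul', TensorProduct.tmul_smul]
  have hsub : ∀ x : ↥F, (x : H) - g x ∈ Dec ℬ (d x) := by
    intro x
    have hdx : ((d x : ℂ)) ≠ 0 := by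
      exact_mod_cast Nat.pos_iff_ne_zero.mp (hd0 x)
    have h1 := Dyn_decomp hgr (hd0 x) (hdmem x)
    have h2 : (x : H) - g x = -(((d x : ℂ))⁻¹ • (Dyn hgr (x : H) - (d x : ℂ) • (x : H))) := by
      rw [smul_sub, smul_smul, inv_mul_cancel₀ hdx, one_smul, neg_sub, hgdef]
    rw [h2]
    exact Submodule.neg_mem _ (Submodule.smul_mem _ _ h1)
  -- spanning by primitive words
  have hWg_ge : ∀ n, ℬ n ≤ WSub g d n := by
    intro n
    induction n using Nat.strong_induction_on with
    | _ n IH =>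
      rcases Nat.eq_zero_or_pos n with rfl | hn
      · rw [hgr.2.1]
        rw [Submodule.span_le]
        rintro z rfl
        exact SetLike.mem_coe.mpr (wP_mem_WSub [] (by simp))
      · have hval : ℬ n = WSub (Subtype.val : ↥F → H) d n :=
          (WSub_eq_of_span_top hgr hdmem (span_range_wP _ hbij) n).symm
        rw [hval, WSub, Submodule.span_le]
        rintro z ⟨l, hl, rfl⟩
        cases l with
        | nil => simp at hl; omega
        | cons x t =>
            have hdt : d x + wD d t = n := by simpa using hl
            have hlt : wD d t < n := by have := hd0 x; omega
            have hdxn : d x ≤ n := by omega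
            have ht2 : wP (Subtype.val : ↥F → H) t ∈ WSub g d (wD d t) :=
              IH (wD d t) hlt (wP_mem hgr hdmem t)
            have hDec : Dec ℬ (d x) ≤ WSub g d (d x) := by
              refine iSup_le fun p => iSup_le fun hp => ?_
              have h1 : ℬ p.1 ≤ WSub g d p.1 := IH p.1 (by omega)
              have h2 : ℬ p.2 ≤ WSub g d p.2 := IH p.2 (by omega)
              calc ℬ p.1 * ℬ p.2 ≤ WSub g d p.1 * WSub g d p.2 :=
                    mul_le_mul' h1 h2
                _ ≤ WSub g d (p.1 + p.2) := WSub_mul g d p.1 p.2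
                _ = WSub g d (d x) := by rw [hp.1]
            have hx_g : g x ∈ WSub g d (d x) := by
              have h0 : wD d [x] = d x := by simp
              have := wP_mem_WSub (u := g) (d := d) [x] h0
              simpa using this
            have hterm : ∀ y ∈ WSub g d (d x),
                y * wP (Subtype.val : ↥F → H) t ∈ WSub g d n := by
              intro y hy
              have := Submodule.mul_mem_mul hy ht2
              have h3 := WSub_mul g d (d x) (wD d t) this
              rwa [hdt] at h3
            have hsplitx : (x : H) * wP (Subtype.val : ↥F → H) t
                = g x * wP (Subtype.val : ↥F → H) t
                  + ((x : H) - g x) * wP (Subtype.val : ↥F → H) t := by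
              rw [← add_mul]
              congr 1
              abel
            rw [SetLike.mem_coe, wP_cons, hsplitx]
            exact add_mem (hterm _ hx_g) (hterm _ (hDec (hsub x)))
  have hWg : ∀ n, WSub g d n = ℬ n :=
    fun n => le_antisymm (WSub_le hgr hg_mem n) (hWg_ge n)
  have hgbij : Function.Bijective (FreeAlgebra.lift ℂ g) :=
    lift_bijective_of hgr hg_mem hWg hfinW hcardW
  exact ⟨d, g, hd0, hg_mem, hg_prim, hgbij, hWg, hfinW, hfinF, hcardW⟩

end Package
end P42
namespace P42
section Assemble
open Coalgebra TensorProduct PaperGradedBialg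

noncomputable def freeEquiv {X X' : Type} (σ : X ≃ X') :
    FreeAlgebra ℂ X ≃ₐ[ℂ] FreeAlgebra ℂ X' :=
  AlgEquiv.ofAlgHom (FreeAlgebra.lift ℂ (fun x => FreeAlgebra.ι ℂ (σ x)))
    (FreeAlgebra.lift ℂ (fun y => FreeAlgebra.ι ℂ (σ.symm y)))
    (by apply FreeAlgebra.hom_ext; funext y; simp)
    (by apply FreeAlgebra.hom_ext; funext x; simp)

lemma freeEquiv_ι {X X' : Type} (σ : X ≃ X') (x : X) :
    freeEquiv σ (FreeAlgebra.ι ℂ x) = FreeAlgebra.ι ℂ (σ x) := by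
  show FreeAlgebra.lift ℂ (fun x => FreeAlgebra.ι ℂ (σ x)) (FreeAlgebra.ι ℂ x) = _
  rw [FreeAlgebra.lift_ι_apply]

variable {H H' : Type} [Ring H] [Ring H'] [Bialgebra ℂ H] [Bialgebra ℂ H']

noncomputable def mkCoalgHom (e : H ≃ₐ[ℂ] H')
    (h1 : ∀ z, Coalgebra.counit (R := ℂ) (e z) = Coalgebra.counit (R := ℂ) z)
    (h2 : ∀ z, Coalgebra.comul (R := ℂ) (e z)
      = TensorProduct.map e.toLinearMap e.toLinearMap (Coalgebra.comul (R := ℂ) z)) :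
    H →ₗc[ℂ] H' where
  toLinearMap := e.toLinearMap
  counit_comp := by ext z; exact h1 z
  map_comp_comul := by ext z; exact (h2 z).symm

/-- Build a bialgebra equivalence from an algebra equivalence compatible with the
coalgebra structure. -/
noncomputable def mkBialgEquiv (e : H ≃ₐ[ℂ] H')
    (h1 : ∀ z, Coalgebra.counit (R := ℂ) (e z) = Coalgebra.counit (R := ℂ) z)
    (h2 : ∀ z, Coalgebra.comul (R := ℂ) (e z)
      = TensorProduct.map e.toLinearMap e.toLinearMap (Coalgebra.comul (R := ℂ) z)) :
    H ≃ₐc[ℂ] H' where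
  toCoalgHom := mkCoalgHom e h1 h2
  invFun := e.symm
  left_inv := e.left_inv
  right_inv := e.right_inv
  map_mul' := e.map_mul

lemma mkBialgEquiv_apply (e : H ≃ₐ[ℂ] H')
    (h1 : ∀ z, Coalgebra.counit (R := ℂ) (e z) = Coalgebra.counit (R := ℂ) z)
    (h2 : ∀ z, Coalgebra.comul (R := ℂ) (e z)
      = TensorProduct.map e.toLinearMap e.toLinearMap (Coalgebra.comul (R := ℂ) z)) (z : H) :
    mkBialgEquiv e h1 h2 z = e z := rfl

end Assemble
end P42


open P42

open PaperGradedBialg in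
/-- **Theorem 4.2:** two free graded connected cocommutative `ℂ`-bialgebras with
finite-dimensional graded components are isomorphic as graded bialgebras if and only if
their graded components have the same dimensions. -/
theorem free_graded_cocommutative_iso_iff_dimensions_agree
    (H H' : Type) [Ring H] [Ring H'] [Bialgebra ℂ H] [Bialgebra ℂ H']
    (ℬ : ℕ → Submodule ℂ H) (ℬ' : ℕ → Submodule ℂ H')
    (hgr : IsGradedConnected H ℬ) (hgr' : IsGradedConnected H' ℬ')
    (hcc : IsCocommutative H) (hcc' : IsCocommutative H')
    (F : Set H) (hF : IsFreeOnHomogeneous H ℬ F)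
    (F' : Set H') (hF' : IsFreeOnHomogeneous H' ℬ' F')
    (hfd : ∀ n : ℕ, FiniteDimensional ℂ (ℬ n)) (hfd' : ∀ n : ℕ, FiniteDimensional ℂ (ℬ' n)) :
    (∃ e : H ≃ₐc[ℂ] H', ∀ n : ℕ, (fun x => e x) '' (ℬ n : Set H) = (ℬ' n : Set H')) ↔
      ∀ n : ℕ, Module.finrank ℂ (ℬ n) = Module.finrank ℂ (ℬ' n) := by
  constructor
  · rintro ⟨e, he⟩ n
    haveI := hfd n; haveI := hfd' n
    have hmap : Submodule.map (e.toCoalgEquiv.toLinearEquiv : H →ₗ[ℂ] H') (ℬ n) = ℬ' n := by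
      apply SetLike.coe_injective
      rw [Submodule.map_coe]
      exact he n
    have h2 := LinearEquiv.finrank_eq
      ((e.toCoalgEquiv.toLinearEquiv).submoduleMap (ℬ n))
    rw [hmap] at h2
    exact h2
  · intro hdim
    obtain ⟨d, g, hd0, hg_mem, hg_prim, hgbij, hWg, hfinW, hfinF, hcardW⟩ :=
      side_package hgr hcc F hF hfd
    obtain ⟨d', g', hd0', hg_mem', hg_prim', hgbij', hWg', hfinW', hfinF', hcardW'⟩ :=
      side_package hgr' hcc' F' hF' hfd'
    have hWeq : ∀ k, Nat.card {l : List ↥F // wD d l = k}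
        = Nat.card {l : List ↥F' // wD d' l = k} := by
      intro k
      rw [hcardW k, hdim k, ← hcardW' k]
    have hcnt := gen_count_eq hd0 hd0' hfinF hfinF' hfinW hfinW' hWeq
    obtain ⟨σ, hσ⟩ := exists_deg_equiv hfinF hfinF' hcnt
    let E1 : FreeAlgebra ℂ ↥F ≃ₐ[ℂ] H := AlgEquiv.ofBijective (FreeAlgebra.lift ℂ g) hgbij
    let E2 : FreeAlgebra ℂ ↥F' ≃ₐ[ℂ] H' := AlgEquiv.ofBijective (FreeAlgebra.lift ℂ g') hgbij'
    let e0 : H ≃ₐ[ℂ] H' := (E1.symm.trans (freeEquiv σ)).trans E2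
    have he_g : ∀ x : ↥F, e0 (g x) = g' (σ x) := by
      intro x
      have h1 : E1.symm (g x) = FreeAlgebra.ι ℂ x := by
        rw [AlgEquiv.symm_apply_eq]
        show g x = FreeAlgebra.lift ℂ g (FreeAlgebra.ι ℂ x)
        rw [FreeAlgebra.lift_ι_apply]
      show E2 (freeEquiv σ (E1.symm (g x))) = g' (σ x)
      rw [h1, freeEquiv_ι]
      show FreeAlgebra.lift ℂ g' (FreeAlgebra.ι ℂ (σ x)) = g' (σ x)
      rw [FreeAlgebra.lift_ι_apply]
    have he_word : ∀ l : List ↥F, e0 (wP g l) = wP g' (l.map σ) := by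
      intro l
      induction l with
      | nil => simp
      | cons x t ih => rw [wP_cons, map_mul, he_g, ih, List.map_cons, wP_cons]
    have hwDmap : ∀ l : List ↥F, wD d' (l.map σ) = wD d l := by
      intro l
      induction l with
      | nil => simp
      | cons x t ih => rw [List.map_cons, wD_cons, wD_cons, ih, hσ]
    have hwDmap' : ∀ l' : List ↥F', wD d (l'.map σ.symm) = wD d' l' := by
      intro l'
      induction l' with
      | nil => simp
      | cons x t ih =>
          rw [List.map_cons, wD_cons, wD_cons, ih]
          congr 1
          rw [← hσ (σ.symm x), Equiv.apply_symm_apply]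
    -- compatibility with counit
    have hcounit0 : ∀ z, Coalgebra.counit (R := ℂ) (e0 z) = Coalgebra.counit (R := ℂ) z := by
      have hAB : ((Bialgebra.counitAlgHom ℂ H').comp e0.toAlgHom).comp (FreeAlgebra.lift ℂ g)
          = (Bialgebra.counitAlgHom ℂ H).comp (FreeAlgebra.lift ℂ g) := by
        apply FreeAlgebra.hom_ext
        funext x
        show Coalgebra.counit (R := ℂ) (e0 (FreeAlgebra.lift ℂ g (FreeAlgebra.ι ℂ x)))
          = Coalgebra.counit (R := ℂ) (FreeAlgebra.lift ℂ g (FreeAlgebra.ι ℂ x))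
        rw [FreeAlgebra.lift_ι_apply, he_g]
        rw [hgr'.2.2.2.2 (d' (σ x)) (by rw [hσ]; exact hd0 x) _ (hg_mem' (σ x))]
        rw [hgr.2.2.2.2 (d x) (hd0 x) _ (hg_mem x)]
      intro z
      obtain ⟨y, rfl⟩ := hgbij.2 z
      exact AlgHom.congr_fun hAB y
    -- compatibility with comul
    have hmapagree : ∀ w : H ⊗[ℂ] H,
        (Algebra.TensorProduct.map e0.toAlgHom e0.toAlgHom) w
          = TensorProduct.map e0.toLinearMap e0.toLinearMap w := by
      intro w
      induction w using TensorProduct.induction_on with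
      | zero => simp
      | tmul a b => simp [Algebra.TensorProduct.map_tmul]
      | add u v hu hv => rw [map_add, map_add, hu, hv]
    have hcomul0 : ∀ z, Coalgebra.comul (R := ℂ) (e0 z)
        = TensorProduct.map e0.toLinearMap e0.toLinearMap (Coalgebra.comul (R := ℂ) z) := by
      have hAB : ((Bialgebra.comulAlgHom ℂ H').comp e0.toAlgHom).comp (FreeAlgebra.lift ℂ g)
          = ((Algebra.TensorProduct.map e0.toAlgHom e0.toAlgHom).comp
              (Bialgebra.comulAlgHom ℂ H)).comp (FreeAlgebra.lift ℂ g) := by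
        apply FreeAlgebra.hom_ext
        funext x
        show Coalgebra.comul (R := ℂ) (e0 (FreeAlgebra.lift ℂ g (FreeAlgebra.ι ℂ x)))
          = (Algebra.TensorProduct.map e0.toAlgHom e0.toAlgHom)
              (Coalgebra.comul (R := ℂ) (FreeAlgebra.lift ℂ g (FreeAlgebra.ι ℂ x)))
        rw [FreeAlgebra.lift_ι_apply, he_g, hg_prim' (σ x), hg_prim x]
        rw [map_add, Algebra.TensorProduct.map_tmul, Algebra.TensorProduct.map_tmul]
        show _ = e0 (g x) ⊗ₜ[ℂ] e0 1 + e0 1 ⊗ₜ[ℂ] e0 (g x)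
        rw [map_one, he_g]
      intro z
      obtain ⟨y, rfl⟩ := hgbij.2 z
      have := AlgHom.congr_fun hAB y
      rw [← hmapagree]
      exact this
    -- the bialgebra equivalence
    refine ⟨mkBialgEquiv e0 hcounit0 hcomul0, ?_⟩
    intro n
    have hmap : Submodule.map e0.toLinearMap (ℬ n) = ℬ' n := by
      rw [← hWg n, ← hWg' n, WSub, WSub, Submodule.map_span]
      congr 1
      ext z
      constructor
      · rintro ⟨y, ⟨l, hl, rfl⟩, rfl⟩
        exact ⟨l.map σ, by rw [hwDmap, hl], (he_word l).symm⟩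
      · rintro ⟨l', hl', rfl⟩
        refine ⟨wP g (l'.map σ.symm), ⟨l'.map σ.symm, by rw [hwDmap', hl'], rfl⟩, ?_⟩
        show e0 (wP g (l'.map σ.symm)) = wP g' l'
        rw [he_word, List.map_map]
        congr 1
        simp
    have : (fun x => (mkBialgEquiv e0 hcounit0 hcomul0) x) '' (ℬ n : Set H)
        = ⇑e0.toLinearMap '' (ℬ n : Set H) := rfl
    rw [this, ← Submodule.map_coe, hmap]
end

section
/- Assume a(ι) = b(ι) = 1 and let τ ∈ V satisfy a(τ) = b(τ) = 0. Then for every n ≥ 1 the pure tensor τ^{⊗(n−1)} ∈ H_n is primitive: Δ(τ^{⊗(n−1)}) = τ^{⊗(n−1)}⊗1 + 1⊗τ^{⊗(n−1)} (for n = 1 this reads Δ(1₁) = 1₁⊗1 + 1⊗1₁). -/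
open scoped TensorProduct

noncomputable section

namespace PaperCHAAux
open PaperCHA

variable {V : Type} [AddCommGroup V] [Module ℂ V]

lemma tlist_run (iv : V) (φ : V →ₗ[ℂ] ℂ) (ψ : ℕ → V) :
    ∀ (k s : ℕ), Tlist iv φ ψ (s + k) (List.range' s (k + 1)) = (1, (List.range' s k).map ψ)
  | 0, s => by simp [Tlist, List.range'_succ]
  | (k + 1), s => by
    have h1 : List.range' s (k + 2) = s :: (s + 1) :: List.range' (s + 2) k := by
      rw [List.range'_succ, List.range'_succ]
    have h2 : (s + 1) :: List.range' (s + 2) k = List.range' (s + 1) (k + 1) := by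
      rw [List.range'_succ]
    rw [h1]
    show (if s + 1 = s + 1 then _ else _) = _
    rw [if_pos rfl, h2]
    have hn : s + (k + 1) = (s + 1) + k := by omega
    rw [hn, tlist_run iv φ ψ k (s + 1)]
    have h3 : List.range' s (k + 1) = s :: List.range' (s + 1) k := by
      rw [List.range'_succ]
    rw [h3]
    simp

lemma tlist_ne_zero_mem (iv : V) (φ : V →ₗ[ℂ] ℂ) (ψ : ℕ → V) (n : ℕ)
    (hφ : ∀ j, φ (ψ j) = 0) :
    ∀ L : List ℕ, L ≠ [] → (Tlist iv φ ψ n L).1 ≠ 0 → n ∈ L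
  | [], h, _ => absurd rfl h
  | [s], _, h => by
    by_cases hs : s = n
    · simp [hs]
    · exfalso; apply h; simp [Tlist, hs, hφ]
  | s :: t :: rest, _, h => by
    by_cases ht : t = s + 1
    · have h' : (Tlist iv φ ψ n (t :: rest)).1 ≠ 0 := by
        intro h0
        apply h
        show (if t = s + 1 then _ else _ : ℂ × List V).1 = 0
        rw [if_pos ht]
        exact h0
      have := tlist_ne_zero_mem iv φ ψ n hφ (t :: rest) (by simp) h'
      exact List.mem_cons_of_mem _ this
    · exfalso; apply h
      show (if t = s + 1 then _ else (φ (ψ s) * _, _) : ℂ × List V).1 = 0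
      rw [if_neg ht]
      simp [hφ]

lemma sort_Icc (N : ℕ) : (Finset.Icc 1 N).sort (· ≤ ·) = List.range' 1 N := by
  have h1 : (List.range' 1 N).toFinset = Finset.Icc 1 N := by
    ext m
    simp only [List.mem_toFinset, List.mem_range'_1, Finset.mem_Icc]
    omega
  rw [← h1]
  exact (List.toFinset_sort _ (List.nodup_range' (s := 1) (n := N))).2 (List.pairwise_le_range' (s := 1) (n := N))

lemma sort_ne_nil {A : Finset ℕ} (hA : A ≠ ∅) : A.sort (· ≤ ·) ≠ [] := by
  intro h
  apply hA
  have := Finset.length_sort (α := ℕ) (· ≤ ·) (s := A)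
  rw [h] at this
  simpa [Finset.card_eq_zero] using this.symm

lemma psi_replicate_zero (φ : V →ₗ[ℂ] ℂ) (τ : V) (hτ : φ τ = 0) (len : ℕ) (j : ℕ) :
    φ (psiOf (List.replicate len τ) j) = 0 := by
  unfold psiOf
  by_cases h : j - 1 < len
  · rw [List.getD_eq_getElem _ _ (by simpa using h)]
    simpa using hτ
  · rw [List.getD_eq_default _ _ (by simpa using h)]
    simp

lemma map_psi_replicate (τ : V) (len : ℕ) :
    (List.range' 1 len).map (psiOf (List.replicate len τ)) = List.replicate len τ := by
  rw [List.eq_replicate_iff]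
  constructor
  · simp
  · intro b hb
    obtain ⟨j, hj, rfl⟩ := List.mem_map.mp hb
    rw [List.mem_range'_1] at hj
    unfold psiOf
    rw [List.getD_eq_getElem _ _ (by simp; omega)]
    simp

lemma Tfun_full (iv : V) (φ : V →ₗ[ℂ] ℂ) (τ : V) (m : ℕ) :
    Tfun iv φ (psiOf (List.replicate m τ)) (m + 1) (Finset.Icc 1 (m + 1))
      = pt iv (List.replicate m τ) := by
  unfold Tfun
  rw [if_neg (by simp), sort_Icc]
  have h := tlist_run iv φ (psiOf (List.replicate m τ)) m 1
  rw [Nat.add_comm 1 m] at h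
  rw [h, map_psi_replicate]
  simp

end PaperCHAAux

open PaperCHA in
/-- **Primitivity (Lemma 4.4, first case):** if `a(ι) = b(ι) = 1` and `τ ∈ V` satisfies
`a(τ) = b(τ) = 0`, then each pure tensor `τ^{⊗(n-1)} ∈ H_n` (`n ≥ 1`) is primitive. -/
theorem power_of_tau_is_primitive
    {V : Type} [AddCommGroup V] [Module ℂ V] (iv : V) (a b : V →ₗ[ℂ] ℂ)
    (ha : a iv = 1) (hb : b iv = 1)
    (Δ : HAlg V iv →ₗ[ℂ] HAlg V iv ⊗[ℂ] HAlg V iv) (hΔ : DeltaSpec iv a b Δ)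
    (τ : V) (hτa : a τ = 0) (hτb : b τ = 0) :
    ∀ n : ℕ, 1 ≤ n →
      Δ (pt iv (List.replicate (n - 1) τ))
        = pt iv (List.replicate (n - 1) τ) ⊗ₜ[ℂ] (1 : HAlg V iv)
          + (1 : HAlg V iv) ⊗ₜ[ℂ] pt iv (List.replicate (n - 1) τ) := by
  intro n hn
  obtain ⟨m, rfl⟩ : ∃ m, n = m + 1 := ⟨n - 1, (Nat.succ_pred_eq_of_pos hn).symm⟩
  simp only [Nat.add_sub_cancel]
  set l := List.replicate m τ with hl
  have hlen : l.length = m := List.length_replicate (n := m) (a := τ)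
  set ψ := psiOf l with hψ
  have hψa : ∀ j, a (ψ j) = 0 := PaperCHAAux.psi_replicate_zero a τ hτa m
  have hψb : ∀ j, b (ψ j) = 0 := PaperCHAAux.psi_replicate_zero b τ hτb m
  rw [hΔ.2 l, hlen]
  set N := m + 1 with hN
  have hIcc : (Finset.Icc 1 N) ≠ ∅ := by simp [hN]
  have hsub : ({∅, Finset.Icc 1 N} : Finset (Finset ℕ)) ⊆ (Finset.Icc 1 N).powerset := by
    intro A hA
    rcases Finset.mem_insert.mp hA with h | h
    · simp [h]
    · simp at h; simp [h]
  have hzero : ∀ A ∈ (Finset.Icc 1 N).powerset,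
      A ∉ ({∅, Finset.Icc 1 N} : Finset (Finset ℕ)) →
      Tfun iv a ψ N A ⊗ₜ[ℂ] Tfun iv b ψ N (Finset.Icc 1 N \ A) = 0 := by
    intro A hA hA'
    simp only [Finset.mem_insert, Finset.mem_singleton, not_or] at hA'
    have hAne : A ≠ ∅ := hA'.1
    have hc : Finset.Icc 1 N \ A ≠ ∅ := by
      intro h
      exact hA'.2 (Finset.Subset.antisymm (Finset.mem_powerset.mp hA)
        (Finset.sdiff_eq_empty_iff_subset.mp h))
    by_cases h1 : (Tlist iv a ψ N (A.sort (· ≤ ·))).1 = 0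
    · unfold Tfun
      rw [if_neg hAne, h1, zero_smul, TensorProduct.zero_tmul]
    · have hnA : N ∈ A := (Finset.mem_sort (· ≤ ·)).mp
        (PaperCHAAux.tlist_ne_zero_mem iv a ψ N hψa _ (PaperCHAAux.sort_ne_nil hAne) h1)
      have h2 : (Tlist iv b ψ N ((Finset.Icc 1 N \ A).sort (· ≤ ·))).1 = 0 := by
        by_contra h2
        have := (Finset.mem_sort (· ≤ ·)).mp
          (PaperCHAAux.tlist_ne_zero_mem iv b ψ N hψb _ (PaperCHAAux.sort_ne_nil hc) h2)
        exact (Finset.mem_sdiff.mp this).2 hnA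
      unfold Tfun
      rw [if_neg hc, h2, zero_smul, TensorProduct.tmul_zero]
  rw [← Finset.sum_subset hsub hzero, Finset.sum_pair (Ne.symm hIcc)]
  have hTe : ∀ φ : V →ₗ[ℂ] ℂ, Tfun iv φ ψ N (∅ : Finset ℕ) = 1 := by
    intro φ; unfold Tfun; rw [if_pos rfl]
  have hTa : Tfun iv a ψ N (Finset.Icc 1 N) = pt iv l := PaperCHAAux.Tfun_full iv a τ m
  have hTb : Tfun iv b ψ N (Finset.Icc 1 N) = pt iv l := PaperCHAAux.Tfun_full iv b τ m
  rw [Finset.sdiff_empty, Finset.sdiff_self, hTe a, hTe b, hTa, hTb]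
  rw [add_comm]
end
end
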